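/- arXiv:2103.03870 — 3 statements merged into one kernel-verified Lean document; each statement's English description precedes it below -/
import Mathlib

section
/- Let g : ℕ → ℂ be a multiplicative function satisfying |g(n)| ≤ min(A·n^θ, B^{Ω(n)}) for all n ≥ 1 (constants A, B > 0, fixed 0 < θ < 1/48). Then there is a constant D > 0 depending only on A, B, θ such that for every z ≥ max(3, 2B²): ∑_{n ≥ 1 with P(n) ≤ z} |g(n)|²/n ≤ D·(log z)^{B²}; in particular ∑_{n ≤ z} |g(n)|²/n ≤ D·(log z)^{B²}. -/
open MeasureTheory ProbabilityTheory Filter Finset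
open scoped BigOperators Classical Real ENNReal

noncomputable section

/-- `g` is multiplicative: `g 1 = 1` and `g (m*n) = g m * g n` for coprime `m, n`. -/
def IsMult (g : ℕ → ℂ) : Prop :=
  g 1 = 1 ∧ ∀ m n : ℕ, Nat.Coprime m n → g (m * n) = g m * g n

/-- The bound `|g n| ≤ min (A n^θ) (B^(Ω n))`, where `Ω n` is the number of prime
factors of `n` counted with multiplicity. -/
def GBound (g : ℕ → ℂ) (A B θ : ℝ) : Prop :=
  ∀ n : ℕ, 1 ≤ n →
    ‖g n‖ ≤ min (A * (n : ℝ) ^ θ) (B ^ n.primeFactorsList.length)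

/-- The finite set of primes `p ≤ x`. -/
def primesUpTo (x : ℝ) : Finset ℕ :=
  (Finset.range (⌊x⌋₊ + 1)).filter fun p => p.Prime ∧ (p : ℝ) ≤ x

/-- `∑_{p ≤ x} |g p|² / p = α log log x + O(1)`. -/
def SelbergCond (g : ℕ → ℂ) (α : ℝ) : Prop :=
  ∃ C > 0, ∀ x : ℝ, 16 ≤ x →
    |(∑ p ∈ primesUpTo x, ‖g p‖ ^ 2 / (p : ℝ)) - α * Real.log (Real.log x)| ≤ C

/-- The partial sum `∑_{n ≤ x} g n · n^(-1/2 - it)`. -/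
def partialSum (g : ℕ → ℂ) (x : ℝ) (t : ℝ) : ℂ :=
  ∑ n ∈ Finset.Icc 1 ⌊x⌋₊, g n * (n : ℂ) ^ (-(1 / 2 : ℂ) - Complex.I * (t : ℂ))

/-- `Ψ` is the `2q`-th pseudomoment `Ψ_{2q,g}(x)`:
`Ψ = lim_{T → ∞} (1/T) ∫_T^{2T} |∑_{n ≤ x} g n n^(-1/2-it)|^{2q} dt`. -/
def IsPseudomoment (g : ℕ → ℂ) (q x Ψ : ℝ) : Prop :=
  Tendsto (fun T : ℝ => (1 / T) * ∫ t in T..(2 * T), ‖partialSum g x t‖ ^ (2 * q))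
    atTop (nhds Ψ)

/-- The uniform probability measure on the unit circle in `ℂ` (a Steinhaus distribution). -/
def circleMeasure : Measure ℂ :=
  Measure.map (fun θ : ℝ => Complex.exp (θ * Complex.I))
    ((ENNReal.ofReal (2 * Real.pi))⁻¹ • volume.restrict (Set.Ioc 0 (2 * Real.pi)))

/-- `X` is a Steinhaus random multiplicative function: a random completely multiplicative
function whose values at the primes are i.i.d. uniform on the unit circle. -/
def IsSteinhaus {Ωs : Type*} [MeasureSpace Ωs] (X : ℕ → Ωs → ℂ) : Prop :=
  (∀ n, Measurable (X n)) ∧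
  (∀ ω, X 1 ω = 1) ∧
  (∀ m n : ℕ, ∀ ω, X (m * n) ω = X m ω * X n ω) ∧
  iIndepFun (fun p : Nat.Primes => X (p : ℕ)) volume ∧
  ∀ p : ℕ, p.Prime → Measure.map (X p) volume = circleMeasure

/-- The local Euler factor `1 + ∑_{j ≥ 1} g(p^j) X(p)^j p^{-js}` at the prime `p`. -/
def eulerFactor {Ωs : Type*} (g : ℕ → ℂ) (X : ℕ → Ωs → ℂ) (p : ℕ) (s : ℂ) (ω : Ωs) : ℂ :=
  1 + ∑' j : ℕ, g (p ^ (j + 1)) * X p ω ^ (j + 1) * (p : ℂ) ^ (-(((j : ℂ) + 1) * s))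

/-- The Euler product `F(s) = ∏_{y ≤ p ≤ z} (1 + g(p)X(p)p^{-s} + g(p²)X(p)²p^{-2s} + ⋯)`. -/
def eulerProd {Ωs : Type*} (g : ℕ → ℂ) (X : ℕ → Ωs → ℂ) (y z : ℝ) (s : ℂ) (ω : Ωs) : ℂ :=
  ∏ p ∈ (primesUpTo z).filter (fun p : ℕ => y ≤ (p : ℝ)), eulerFactor g X p s ω

/-- The truncated Euler product `G_k(s)` over primes `p ≤ x^{e^{-k}}`. -/
def Gk {Ωs : Type*} (g : ℕ → ℂ) (X : ℕ → Ωs → ℂ) (x : ℝ) (k : ℕ) (s : ℂ) (ω : Ωs) : ℂ :=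
  ∏ p ∈ primesUpTo (x ^ Real.exp (-(k : ℝ))), eulerFactor g X p s ω

/-- `H_{k,σ}(t) = G_k(1/2 + σ + it)`. -/
def Hk {Ωs : Type*} (g : ℕ → ℂ) (X : ℕ → Ωs → ℂ) (x : ℝ) (k : ℕ) (σ t : ℝ) (ω : Ωs) : ℂ :=
  Gk g X x k (((1 / 2 + σ : ℝ) : ℂ) + (t : ℂ) * Complex.I) ω



section SmoothHelpers
open scoped Nat


-- factorization of n! at prime p is at least n / p
lemma aux_fact_ge {p n : ℕ} (hp : p.Prime) :
    n / p ≤ (n !).factorization p := by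
  rw [Nat.factorization_def _ hp]
  haveI : Fact p.Prime := ⟨hp⟩
  rcases Nat.lt_or_ge n p with h | h
  · simp [Nat.div_eq_of_lt h]
  · have hlog : 1 ≤ Nat.log p n := Nat.log_pos hp.one_lt h  -- check name/shape
    rw [padicValNat_factorial (b := Nat.log p n + 1) (Nat.lt_succ_self _)]
    have : n / p = n / p ^ 1 := by norm_num
    rw [this]
    exact Finset.single_le_sum (f := fun i => n / p ^ i) (fun i _ => Nat.zero_le _)
      (Finset.mem_Ico.mpr ⟨le_refl 1, by omega⟩)

-- primes below n+1 are prime factors of n!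
lemma aux_subset (n : ℕ) (hn : 1 ≤ n) : (n + 1).primesBelow ⊆ (n !).primeFactors := by
  intro p hp
  have hpp := Nat.prime_of_mem_primesBelow hp
  have hlt := Nat.lt_of_mem_primesBelow hp
  exact Nat.mem_primeFactors.mpr ⟨hpp, Nat.dvd_factorial hpp.pos (by omega), Nat.factorial_ne_zero n⟩

lemma aux_log_factorial (n : ℕ) (hn : n ≠ 0) :
    Real.log (n !) = ∑ p ∈ (n !).primeFactors, ((n !).factorization p : ℝ) * Real.log p := by
  conv_lhs => rw [← Nat.factorization_prod_pow_eq_self (Nat.factorial_ne_zero n)]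
  rw [Finsupp.prod, Nat.support_factorization]
  push_cast
  rw [Real.log_prod]
  · refine Finset.sum_congr rfl fun p hp => ?_
    rw [Real.log_pow]
  · intro p hp
    have h2 := (Nat.prime_of_mem_primeFactors hp).pos
    positivity

lemma mertens1 (m : ℕ) : ∑ p ∈ m.primesBelow, Real.log p / p ≤ Real.log m + 2 := by
  rcases Nat.lt_or_ge m 2 with hm | hm
  · have he : m.primesBelow = ∅ := by
      refine Finset.eq_empty_of_forall_notMem fun p hp => ?_
      have h1 := Nat.prime_of_mem_primesBelow hp
      have h2 := Nat.lt_of_mem_primesBelow hp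
      have := h1.two_le
      omega
    rw [he, Finset.sum_empty]
    interval_cases m <;> simp [Real.log_zero, Real.log_one] <;> norm_num
  · obtain ⟨n, rfl⟩ : ∃ n, m = n + 1 := ⟨m - 1, by omega⟩
    have hn : 1 ≤ n := by omega
    have hn0 : (0:ℝ) < n := by exact_mod_cast hn
    set PB := (n+1).primesBelow with hPB
    have hplog : ∀ p ∈ PB, (0:ℝ) ≤ Real.log p := fun p hp =>
      Real.log_nonneg (by exact_mod_cast (Nat.prime_of_mem_primesBelow hp).one_lt.le)
    -- step 1
    have step1 : ∑ p ∈ PB, ((n / p : ℕ) : ℝ) * Real.log p ≤ Real.log (n !) := by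
      rw [aux_log_factorial n (by omega)]
      calc ∑ p ∈ PB, ((n / p : ℕ) : ℝ) * Real.log p
          ≤ ∑ p ∈ PB, ((n !).factorization p : ℝ) * Real.log p := by
            refine Finset.sum_le_sum fun p hp => ?_
            have := aux_fact_ge (n := n) (Nat.prime_of_mem_primesBelow hp)
            exact mul_le_mul_of_nonneg_right (by exact_mod_cast this) (hplog p hp)
        _ ≤ ∑ p ∈ (n !).primeFactors, ((n !).factorization p : ℝ) * Real.log p := by
            refine Finset.sum_le_sum_of_subset_of_nonneg (aux_subset n hn) fun p hp _ => ?_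
            have hpl : (0:ℝ) ≤ Real.log p :=
              Real.log_nonneg (by exact_mod_cast (Nat.prime_of_mem_primeFactors hp).one_lt.le)
            positivity
    -- step 2
    have step2 : Real.log (n !) ≤ (n:ℝ) * Real.log n := by
      calc Real.log (n !) ≤ Real.log ((n:ℝ) ^ n) := by
            apply Real.log_le_log (by positivity)
            exact_mod_cast Nat.factorial_le_pow n
        _ = (n:ℝ) * Real.log n := by rw [Real.log_pow]
    -- step 3
    have step3 : ∑ p ∈ PB, Real.log p ≤ (n:ℝ) * Real.log 4 := by
      have hprim : ∏ p ∈ PB, (p:ℝ) = (primorial n : ℝ) := by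
        rw [primorial]; push_cast; rfl
      have h4 : Real.log (primorial n) ≤ (n:ℝ) * Real.log 4 := by
        calc Real.log (primorial n) ≤ Real.log ((4:ℝ) ^ n) := by
              apply Real.log_le_log (by exact_mod_cast primorial_pos n)
              exact_mod_cast primorial_le_4_pow n
          _ = (n:ℝ) * Real.log 4 := by rw [Real.log_pow]
      calc ∑ p ∈ PB, Real.log p = Real.log (∏ p ∈ PB, (p:ℝ)) := by
            rw [Real.log_prod]
            intro p hp
            exact_mod_cast (Nat.prime_of_mem_primesBelow hp).pos.ne'
        _ ≤ (n:ℝ) * Real.log 4 := hprim ▸ h4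
    -- step 4: combine
    have key : (n:ℝ) * ∑ p ∈ PB, Real.log p / p ≤ (n:ℝ) * Real.log n + (n:ℝ) * Real.log 4 := by
      rw [Finset.mul_sum]
      calc ∑ p ∈ PB, (n:ℝ) * (Real.log p / p)
          ≤ ∑ p ∈ PB, (((n / p : ℕ) : ℝ) + 1) * Real.log p := by
            refine Finset.sum_le_sum fun p hp => ?_
            have hpp := Nat.prime_of_mem_primesBelow hp
            have hp0 : (0:ℝ) < p := by exact_mod_cast hpp.pos
            have hdiv : (n:ℝ) / p ≤ ((n / p : ℕ) : ℝ) + 1 := by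
              rw [div_le_iff₀ hp0]
              have h1 := Nat.div_add_mod n p
              have h2 := Nat.mod_lt n hpp.pos
              have h3 : n < p * (n / p) + p := by omega
              have h4 : (n:ℝ) < (p:ℝ) * ((n / p : ℕ) : ℝ) + p := by exact_mod_cast h3
              nlinarith
            calc (n:ℝ) * (Real.log p / p) = ((n:ℝ)/p) * Real.log p := by ring
              _ ≤ (((n / p : ℕ) : ℝ) + 1) * Real.log p :=
                  mul_le_mul_of_nonneg_right hdiv (hplog p hp)
        _ = ∑ p ∈ PB, ((n / p : ℕ) : ℝ) * Real.log p + ∑ p ∈ PB, Real.log p := by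
            rw [← Finset.sum_add_distrib]; congr 1; ext p; ring
        _ ≤ (n:ℝ) * Real.log n + (n:ℝ) * Real.log 4 := by
            have := step1.trans step2
            linarith
    have hS : ∑ p ∈ PB, Real.log p / p ≤ Real.log n + Real.log 4 := by
      have h5 : (n:ℝ) * ∑ p ∈ PB, Real.log p / p ≤ (n:ℝ) * (Real.log n + Real.log 4) := by
        linarith [key]
      exact le_of_mul_le_mul_left h5 hn0
    have hlog4 : Real.log 4 ≤ 2 := by
      rw [show (4:ℝ) = 2^2 by norm_num, Real.log_pow]
      have := Real.log_two_lt_d9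
      push_cast
      linarith
    have hmono : Real.log n ≤ Real.log (n+1) := by
      apply Real.log_le_log hn0
      push_cast; linarith
    calc ∑ p ∈ PB, Real.log p / p ≤ Real.log n + Real.log 4 := hS
      _ ≤ Real.log (↑(n+1)) + 2 := by push_cast; push_cast at hmono; linarith

lemma sum_Ico_le_telescope (Φ Ψ : ℕ → ℝ) (a : ℕ) :
    ∀ b, a ≤ b → (∀ i, a ≤ i → i < b → Φ i ≤ Ψ (i+1) - Ψ i) →
    ∑ i ∈ Finset.Ico a b, Φ i ≤ Ψ b - Ψ a := by
  intro b hb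
  induction b, hb using Nat.le_induction with
  | base => intro _; simp
  | succ b hb IH =>
    intro hstep
    rw [Finset.sum_Ico_succ_top hb]
    have h1 := IH (fun i hi hib => hstep i hi (by omega))
    have h2 := hstep b hb (by omega)
    linarith

lemma mertens2 : ∃ C : ℝ, 0 < C ∧ ∀ N : ℕ, 3 ≤ N →
    ∑ p ∈ (N+1).primesBelow, ((p:ℝ))⁻¹ ≤ Real.log (Real.log N) + C := by
  classical
  set f : ℕ → ℝ := fun i => (Real.log i)⁻¹ with hf
  set g : ℕ → ℝ := fun i => if i.Prime then Real.log i / i else 0 with hg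
  set G : ℕ → ℝ := fun m => ∑ i ∈ Finset.range m, g i with hGdef
  have hGnonneg : ∀ m, 0 ≤ G m := by
    intro m
    refine Finset.sum_nonneg fun i _ => ?_
    simp only [hg]
    split_ifs with h
    · have := h.one_lt
      have h1 : (1:ℝ) ≤ i := by exact_mod_cast h.one_lt.le
      have := Real.log_nonneg h1
      positivity
    · exact le_refl 0
  have hlog2 : (0:ℝ) < Real.log 2 := Real.log_pos (by norm_num)
  have hlog2' : (1:ℝ)/2 ≤ Real.log 2 := by have := Real.log_two_gt_d9; linarith
  have hlog2one : Real.log 2 < 1 := by have := Real.log_two_lt_d9; linarith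
  have hlog3 : (0:ℝ) < Real.log 3 := Real.log_pos (by norm_num)
  have hlog3two : Real.log 3 ≤ 2 := by
    calc Real.log 3 ≤ Real.log 4 := Real.log_le_log (by norm_num) (by norm_num)
      _ = 2 * Real.log 2 := by
          rw [show (4:ℝ) = 2^2 by norm_num, Real.log_pow]; push_cast; ring
      _ ≤ 2 := by linarith
  have hGle : ∀ m : ℕ, G m ≤ Real.log m + 2 := by
    intro m
    have : G m = ∑ p ∈ m.primesBelow, Real.log p / p := by
      rw [Nat.primesBelow, Finset.sum_filter]
    rw [this]
    exact mertens1 m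
  -- the constant
  refine ⟨12 + (2/Real.log 3 - Real.log (Real.log 2)), ?_, ?_⟩
  · have : Real.log (Real.log 2) < 0 := Real.log_neg hlog2 hlog2one
    have : 0 < 2/Real.log 3 := by positivity
    linarith
  intro N hN
  have hN0 : (3:ℝ) ≤ (N:ℝ) := by exact_mod_cast hN
  have hlogN : 1 ≤ Real.log N := by
    rw [Real.le_log_iff_exp_le (by linarith)]
    have := Real.exp_one_lt_d9
    linarith
  -- Abel summation
  have habel := Finset.sum_range_by_parts f g (N+1)
  simp only [smul_eq_mul, Nat.add_sub_cancel] at habel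
  have hL : ∑ i ∈ Finset.range (N+1), f i * g i = ∑ p ∈ (N+1).primesBelow, ((p:ℝ))⁻¹ := by
    rw [Nat.primesBelow, Finset.sum_filter]
    refine Finset.sum_congr rfl fun i _ => ?_
    by_cases h : i.Prime
    · simp only [hf, hg, if_pos h]
      have h2 : (0:ℝ) < Real.log i := Real.log_pos (by exact_mod_cast h.one_lt)
      field_simp
    · simp [hf, hg, if_neg h]
  have hneg : ∑ i ∈ Finset.range N, (f (i+1) - f i) * (∑ j ∈ Finset.range (i+1), g j)
      = - ∑ i ∈ Finset.range N, (f i - f (i+1)) * G (i+1) := by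
    rw [← Finset.sum_neg_distrib]
    refine Finset.sum_congr rfl fun i _ => ?_
    show _ = -((f i - f (i+1)) * G (i+1))
    have : G (i+1) = ∑ j ∈ Finset.range (i+1), g j := rfl
    rw [this]; ring
  -- top term bound
  have htop : f N * G (N+1) ≤ 4 := by
    have h1 : G (N+1) ≤ Real.log N + 3 := by
      have h2 := hGle (N+1)
      have h3 : Real.log ((N:ℝ)+1) ≤ Real.log N + Real.log 2 := by
        have h4 : Real.log (2*(N:ℝ)) = Real.log 2 + Real.log N :=
          Real.log_mul (by norm_num) (by linarith)
        have h5 : Real.log ((N:ℝ)+1) ≤ Real.log (2*(N:ℝ)) :=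
          Real.log_le_log (by linarith) (by linarith)
        linarith
      push_cast at h2 ⊢
      linarith
    have hfN : f N = (Real.log N)⁻¹ := rfl
    have hinv : (Real.log N)⁻¹ ≤ 1 := by
      rw [inv_le_one_iff₀]; right; linarith
    have hinv0 : (0:ℝ) ≤ (Real.log N)⁻¹ := by positivity
    calc f N * G (N+1) ≤ (Real.log N)⁻¹ * (Real.log N + 3) := by
          rw [hfN]; exact mul_le_mul_of_nonneg_left h1 hinv0
      _ = 1 + 3 * (Real.log N)⁻¹ := by
          field_simp
      _ ≤ 4 := by linarith
  -- the correction sum T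
  set T := ∑ i ∈ Finset.range N, (f i - f (i+1)) * G (i+1) with hT
  have hsplit : T = (∑ i ∈ Finset.Ico 0 3, (f i - f (i+1)) * G (i+1))
      + ∑ i ∈ Finset.Ico 3 N, (f i - f (i+1)) * G (i+1) := by
    rw [hT, Finset.range_eq_Ico, Finset.sum_Ico_consecutive _ (by omega) (by omega)]
  have hT1 : ∑ i ∈ Finset.Ico 0 3, (f i - f (i+1)) * G (i+1) ≤ 8 := by
    have : Finset.Ico 0 3 = Finset.range 3 := by rw [Finset.range_eq_Ico]
    rw [this, Finset.sum_range_succ, Finset.sum_range_succ, Finset.sum_range_one]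
    have hf0 : f 0 = 0 := by simp [hf]
    have hf1 : f 1 = 0 := by simp [hf]
    have hG2 : G 2 = 0 := by
      rw [hGdef]
      simp [Finset.sum_range_succ, hg, Nat.not_prime_zero, Nat.not_prime_one]
    have hf2 : f 2 ≤ 2 := by
      show (Real.log 2)⁻¹ ≤ 2
      rw [inv_le_comm₀ hlog2 (by norm_num)]
      linarith
    have hf3 : 0 ≤ f 3 := by
      show (0:ℝ) ≤ (Real.log 3)⁻¹
      positivity
    have hG3u : G 3 ≤ Real.log 3 + 2 := hGle 3
    have hG3l : 0 ≤ G 3 := hGnonneg 3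
    have h23 : f 3 ≤ f 2 := by
      show (Real.log 3)⁻¹ ≤ (Real.log 2)⁻¹
      apply inv_anti₀ hlog2
      exact Real.log_le_log (by norm_num) (by norm_num)
    have : (f 2 - f 3) * G 3 ≤ 2 * (Real.log 3 + 2) := by
      apply mul_le_mul (by linarith) hG3u hG3l (by norm_num)
    rw [hf0, hf1, hG2]
    push_cast
    nlinarith
  have hT2 : ∑ i ∈ Finset.Ico 3 N, (f i - f (i+1)) * G (i+1)
      ≤ Real.log (Real.log N) + (2/Real.log 3 - Real.log (Real.log 2)) := by
    set ψ : ℕ → ℝ := fun i => Real.log (Real.log (i-1)) - 2*(Real.log i)⁻¹ with hψ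
    have hstep : ∀ i, 3 ≤ i → i < N → (f i - f (i+1)) * G (i+1) ≤ ψ (i+1) - ψ i := by
      intro i hi _
      have hi3 : (3:ℝ) ≤ (i:ℝ) := by exact_mod_cast hi
      have hcast1 : ((i - 1 : ℕ) : ℝ) = (i:ℝ) - 1 := by
        have : 1 ≤ i := by omega
        push_cast [this]; ring
      have hcast2 : ((i + 1 - 1 : ℕ) : ℝ) = (i:ℝ) := by
        simp
      set a := Real.log ((i:ℝ) - 1) with ha
      set b := Real.log (i:ℝ) with hb
      set c := Real.log ((i:ℝ) + 1) with hc
      have ha0 : 0 < a := Real.log_pos (by linarith)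
      have hb1 : 1 ≤ b := by
        rw [hb, Real.le_log_iff_exp_le (by linarith)]
        have := Real.exp_one_lt_d9
        linarith
      have hb0 : 0 < b := by linarith
      have hab : a ≤ b := Real.log_le_log (by linarith) (by linarith)
      have hbc : b ≤ c := Real.log_le_log (by linarith) (by linarith)
      -- c - b ≤ 1/i
      have hcb : c - b ≤ 1/(i:ℝ) := by
        have h1 : c - b = Real.log (((i:ℝ)+1)/i) := by
          rw [Real.log_div (by linarith) (by linarith)]
        have h2 : Real.log (((i:ℝ)+1)/i) ≤ ((i:ℝ)+1)/i - 1 :=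
          Real.log_le_sub_one_of_pos (by positivity)
        have h3 : ((i:ℝ)+1)/i - 1 = 1/(i:ℝ) := by field_simp; ring
        linarith
      -- 1/i ≤ b - a
      have hba : 1/(i:ℝ) ≤ b - a := by
        have h1 : a - b = Real.log (((i:ℝ)-1)/i) := by
          rw [Real.log_div (by linarith) (by linarith)]
        have h2 : Real.log (((i:ℝ)-1)/i) ≤ ((i:ℝ)-1)/i - 1 :=
          Real.log_le_sub_one_of_pos (div_pos (by linarith) (by linarith))
        have h3 : ((i:ℝ)-1)/i - 1 = -(1/(i:ℝ)) := by field_simp; ring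
        linarith
      -- (b-a)/b ≤ log b - log a
      have hlogba : (b - a)/b ≤ Real.log b - Real.log a := by
        have h1 : Real.log (a/b) ≤ a/b - 1 := Real.log_le_sub_one_of_pos (by positivity)
        have h2 : Real.log (a/b) = Real.log a - Real.log b := Real.log_div (by linarith) (by linarith)
        have h3 : a/b - 1 = -((b-a)/b) := by field_simp; ring
        linarith
      -- G bound
      have hGu : G (i+1) ≤ c + 2 := by
        have h6 := hGle (i+1)
        push_cast at h6
        rw [hc]
        exact h6
      have hGl : 0 ≤ G (i+1) := hGnonneg (i+1)
      have hfd : 0 ≤ f i - f (i+1) := by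
        show (0:ℝ) ≤ (Real.log i)⁻¹ - (Real.log ↑(i+1))⁻¹
        have : Real.log ↑(i+1) = c := by push_cast; rfl
        rw [this]
        have : (Real.log (i:ℝ))⁻¹ = b⁻¹ := rfl
        rw [this]
        have hc0 : 0 < c := by linarith
        have := inv_anti₀ hb0 hbc
        linarith
      have hφ : (f i - f (i+1)) * G (i+1) ≤ (b⁻¹ - c⁻¹) * (c + 2) := by
        have h1 : f i - f (i+1) = b⁻¹ - c⁻¹ := by
          show (Real.log (i:ℝ))⁻¹ - (Real.log ↑(i+1))⁻¹ = b⁻¹ - c⁻¹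
          congr 2
          push_cast; rfl
        rw [← h1]
        exact mul_le_mul_of_nonneg_left hGu hfd
      have hψd : ψ (i+1) - ψ i = (Real.log b - Real.log a) + 2*(b⁻¹ - c⁻¹) := by
        simp only [hψ]
        push_cast
        have e0 : ((i:ℝ) + 1 - 1) = (i:ℝ) := by ring
        rw [e0, hc.symm, hb.symm, ha.symm]
        ring
      -- key algebra
      have hc0 : 0 < c := by linarith
      have e1 : (b⁻¹ - c⁻¹) * c = (c - b)/b := by
        field_simp
      have e2 : (c - b)/b ≤ (b - a)/b := by
        have hineq : c - b ≤ b - a := le_trans hcb hba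
        gcongr
      have e3 : (b⁻¹ - c⁻¹)*(c+2) = (b⁻¹ - c⁻¹)*c + 2*(b⁻¹ - c⁻¹) := by ring
      rw [hψd]
      linarith
    have htel := sum_Ico_le_telescope (fun i => (f i - f (i+1)) * G (i+1)) ψ 3 N (by omega) hstep
    have hψ3 : ψ 3 = Real.log (Real.log 2) - 2*(Real.log 3)⁻¹ := by
      simp only [hψ]
      norm_num
    have hψN : ψ N ≤ Real.log (Real.log N) - 2*(Real.log (N:ℝ))⁻¹ := by
      simp only [hψ]
      have h1 : 0 < Real.log ((N:ℝ) - 1) := Real.log_pos (by linarith)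
      have h2 : Real.log ((N:ℝ) - 1) ≤ Real.log N := Real.log_le_log (by linarith) (by linarith)
      have := Real.log_le_log h1 h2
      linarith
    have hinvN : 0 ≤ (Real.log (N:ℝ))⁻¹ := by positivity
    calc ∑ i ∈ Finset.Ico 3 N, (f i - f (i+1)) * G (i+1) ≤ ψ N - ψ 3 := htel
      _ ≤ Real.log (Real.log N) + (2/Real.log 3 - Real.log (Real.log 2)) := by
          rw [hψ3]
          have : 2*(Real.log 3)⁻¹ = 2/Real.log 3 := by ring
          linarith [hψN]
  -- final assembly
  have hGN1 : (∑ i ∈ Finset.range (N+1), g i) = G (N+1) := rfl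
  calc ∑ p ∈ (N+1).primesBelow, ((p:ℝ))⁻¹
      = f N * G (N+1) + T := by
        rw [← hL, habel, hneg, hGN1]; ring
    _ ≤ 4 + (8 + (Real.log (Real.log N) + (2/Real.log 3 - Real.log (Real.log 2)))) := by
        rw [hsplit] at hT ⊢
        linarith [htop, hT1, hT2]
    _ = Real.log (Real.log N) + (12 + (2/Real.log 3 - Real.log (Real.log 2))) := by ring


lemma sum_inv_sq_le : ∀ N : ℕ, ∑ n ∈ Finset.Ico 2 N, ((n:ℝ)^2)⁻¹ ≤ 1 := by
  have key : ∀ N : ℕ, 2 ≤ N → ∑ n ∈ Finset.Ico 2 N, ((n:ℝ)^2)⁻¹ ≤ 1 - ((N:ℝ) - 1)⁻¹ := by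
    intro N hN
    induction N, hN using Nat.le_induction with
    | base => norm_num
    | succ N hN IH =>
      rw [Finset.sum_Ico_succ_top hN]
      have hN2 : (2:ℝ) ≤ (N:ℝ) := by exact_mod_cast hN
      have h1 : ((N:ℝ)^2)⁻¹ ≤ ((N:ℝ) - 1)⁻¹ - ((N:ℝ))⁻¹ := by
        rw [inv_sub_inv (by linarith) (by linarith),
          show ((N:ℝ) - ((N:ℝ)-1)) = 1 by ring, inv_eq_one_div,
          div_le_div_iff₀ (by positivity) (by nlinarith)]
        nlinarith
      push_cast
      rw [show ((N:ℝ) + 1 - 1) = (N:ℝ) by ring]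
      linarith
  intro N
  rcases Nat.lt_or_ge N 2 with h | h
  · rw [Finset.Ico_eq_empty (by omega), Finset.sum_empty]; norm_num
  · have h2 : (2:ℝ) ≤ (N:ℝ) := by exact_mod_cast h
    have := key N h
    have h3 : (0:ℝ) < ((N:ℝ) - 1)⁻¹ := by
      rw [inv_pos]; linarith
    linarith


end SmoothHelpers

/-- A trivial bound for smooth sums: there is `D > 0` depending
only on `A, B, θ` such that for all `z ≥ max(3, 2B²)`,
`∑_{n ≥ 1, P(n) ≤ z} |g n|²/n ≤ D (log z)^{B²}` and in particular
`∑_{n ≤ z} |g n|²/n ≤ D (log z)^{B²}`. -/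
theorem smooth_sum_trivial_bound
    (g : ℕ → ℂ) (A B θ : ℝ) (hA : 0 < A) (hB : 0 < B) (hθ0 : 0 < θ) (hθ : θ < 1 / 48)
    (hmult : IsMult g) (hbound : GBound g A B θ) :
    ∃ D > (0 : ℝ), ∀ z : ℝ, max 3 (2 * B ^ 2) ≤ z →
      (∑' n : ℕ, if 1 ≤ n ∧ ∀ p ∈ n.primeFactors, (p : ℝ) ≤ z
          then ‖g n‖ ^ 2 / (n : ℝ) else 0)
        ≤ D * (Real.log z) ^ (B ^ 2) ∧
      (∑ n ∈ Finset.Icc 1 ⌊z⌋₊, ‖g n‖ ^ 2 / (n : ℝ)) ≤ D * (Real.log z) ^ (B ^ 2) := by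
  obtain ⟨C, hC0, hC⟩ := mertens2
  set f : ℕ → ℝ := fun n => ‖g n‖ ^ 2 / (n : ℝ) with hfdef
  have hf1 : f 1 = 1 := by simp [hfdef, hmult.1]
  have hfnonneg : ∀ n, 0 ≤ f n := fun n => by
    simp only [hfdef]; positivity
  have hfmul : ∀ {m n : ℕ}, Nat.Coprime m n → f (m * n) = f m * f n := by
    intro m n hmn
    simp only [hfdef]
    rw [hmult.2 m n hmn, norm_mul, mul_pow]
    push_cast
    rw [mul_div_mul_comm]
  have hA1 : (1:ℝ) ≤ A := by
    have h1 := hbound 1 le_rfl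
    rw [hmult.1] at h1
    simp only [norm_one, Nat.cast_one, Real.one_rpow, mul_one] at h1
    exact (le_min_iff.mp h1).1
  -- geometric bound via the A-part
  have hr : ∀ p : ℕ, p.Prime → (0:ℝ) ≤ (p:ℝ) ^ (2*θ-1) ∧ (p:ℝ) ^ (2*θ-1) ≤ 3/4 := by
    intro p hp
    have hp1 : (1:ℝ) < p := by exact_mod_cast hp.one_lt
    constructor
    · exact Real.rpow_nonneg (by linarith) _
    · have h1 : (p:ℝ) ^ (2*θ-1) ≤ (p:ℝ) ^ (-(1/2) : ℝ) :=
        Real.rpow_le_rpow_of_exponent_le hp1.le (by linarith)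
      have h2 : (p:ℝ) ^ (-(1/2) : ℝ) ≤ (2:ℝ) ^ (-(1/2) : ℝ) := by
        rw [Real.rpow_neg (by linarith), Real.rpow_neg (by norm_num)]
        have hp2 : (2:ℝ) ≤ p := by exact_mod_cast hp.two_le
        have h3 : (2:ℝ) ^ ((1:ℝ)/2) ≤ (p:ℝ) ^ ((1:ℝ)/2) :=
          Real.rpow_le_rpow (by norm_num) hp2 (by norm_num)
        have h4 : (0:ℝ) < (2:ℝ) ^ ((1:ℝ)/2) := Real.rpow_pos_of_pos (by norm_num) _
        rw [show (-(1/2) : ℝ) = -(1/2 : ℝ) by norm_num] at *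
        exact inv_anti₀ h4 h3
      have h5 : (2:ℝ) ^ (-(1/2) : ℝ) ≤ 3/4 := by
        rw [Real.rpow_neg (by norm_num)]
        have hs : (2:ℝ) ^ ((1/2) : ℝ) = Real.sqrt 2 := (Real.sqrt_eq_rpow 2).symm
        rw [hs]
        have h6 := Real.sq_sqrt (by norm_num : (0:ℝ) ≤ 2)
        have h7 := Real.sqrt_nonneg 2
        rw [inv_le_comm₀ (by nlinarith) (by norm_num)]
        nlinarith
      linarith
  have hkeyA : ∀ p : ℕ, p.Prime → ∀ j : ℕ, f (p ^ j) ≤ A^2 * ((p:ℝ) ^ (2*θ-1)) ^ j := by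
    intro p hp j
    have hp1 : (1:ℝ) < p := by exact_mod_cast hp.one_lt
    have hp0 : (0:ℝ) < p := by linarith
    have hn1 : 1 ≤ p ^ j := Nat.one_le_pow j p hp.pos
    have hb1 : ‖g (p^j)‖ ≤ A * ((p^j : ℕ):ℝ)^θ := le_trans (hbound _ hn1) (min_le_left _ _)
    have hcast : ((p^j : ℕ):ℝ) = (p:ℝ)^(j:ℕ) := by push_cast; ring
    rw [hcast] at hb1
    have hsq : ‖g (p^j)‖^2 ≤ (A * ((p:ℝ)^(j:ℕ))^θ)^2 := by
      have := Real.rpow_nonneg (le_of_lt (by positivity : (0:ℝ) < (p:ℝ)^(j:ℕ))) θ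
      exact pow_le_pow_left₀ (norm_nonneg _) hb1 2
    have h1 : f (p^j) ≤ (A * ((p:ℝ)^(j:ℕ))^θ)^2 / (p:ℝ)^(j:ℕ) := by
      simp only [hfdef]
      rw [hcast]
      gcongr
    have e1 : ((p:ℝ)^(j:ℕ) : ℝ) = (p:ℝ)^((j:ℕ):ℝ) := (Real.rpow_natCast _ j).symm
    have e2 : (((p:ℝ)^((j:ℝ)))^θ) = (p:ℝ)^((j:ℝ)*θ) := (Real.rpow_mul hp0.le _ _).symm
    have e3 : ((p:ℝ)^((j:ℝ)*θ))^(2:ℕ) = (p:ℝ)^((j:ℝ)*θ*2) := by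
      rw [← Real.rpow_natCast ((p:ℝ)^((j:ℝ)*θ)) 2, ← Real.rpow_mul hp0.le]
      norm_num
    have e4 : (p:ℝ)^((j:ℝ)*θ*2) / (p:ℝ)^((j:ℝ)) = (p:ℝ)^((j:ℝ)*θ*2 - (j:ℝ)) :=
      (Real.rpow_sub hp0 _ _).symm
    have e5 : ((p:ℝ)^(2*θ-1))^(j:ℕ) = (p:ℝ)^((2*θ-1)*(j:ℝ)) := by
      rw [← Real.rpow_natCast ((p:ℝ)^(2*θ-1)) j, ← Real.rpow_mul hp0.le]
    have h2 : (A * ((p:ℝ)^(j:ℕ))^θ)^2 / (p:ℝ)^(j:ℕ) = A^2 * ((p:ℝ) ^ (2*θ-1)) ^ j := by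
      rw [mul_pow, e1, e2, e3, mul_div_assoc, e4, e5,
        show (j:ℝ)*θ*2 - (j:ℝ) = (2*θ-1)*(j:ℝ) by ring]
    rw [← h2]
    exact h1
  -- summability at each prime
  have hsump : ∀ p : ℕ, p.Prime → Summable (fun j : ℕ => f (p ^ j)) := by
    intro p hp
    obtain ⟨hr0, hr34⟩ := hr p hp
    refine Summable.of_nonneg_of_le (fun j => hfnonneg _) (hkeyA p hp) ?_
    exact (summable_geometric_of_lt_one hr0 (by linarith)).mul_left _
  have hFnonneg : ∀ p : ℕ, 0 ≤ (∑' j : ℕ, f (p ^ j)) :=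
    fun p => tsum_nonneg (fun j => hfnonneg _)
  -- F_p ≤ 4A²
  have hFle : ∀ p : ℕ, p.Prime → (∑' j : ℕ, f (p ^ j)) ≤ 4 * A^2 := by
    intro p hp
    obtain ⟨hr0, hr34⟩ := hr p hp
    have h1 : (∑' j : ℕ, f (p ^ j)) ≤ ∑' j : ℕ, A^2 * ((p:ℝ)^(2*θ-1))^j :=
      Summable.tsum_le_tsum (hkeyA p hp) (hsump p hp)
        ((summable_geometric_of_lt_one hr0 (by linarith)).mul_left _)
    rw [tsum_mul_left, tsum_geometric_of_lt_one hr0 (by linarith)] at h1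
    have h2 : (1 - (p:ℝ)^(2*θ-1))⁻¹ ≤ 4 := by
      rw [inv_le_comm₀ (by linarith) (by norm_num)]
      linarith
    have h3 : (0:ℝ) ≤ (1 - (p:ℝ)^(2*θ-1))⁻¹ := by
      rw [inv_nonneg]; linarith
    nlinarith [sq_nonneg A]
  -- large prime bound
  have hFlarge : ∀ p : ℕ, p.Prime → 2*B^2 < (p:ℝ) →
      (∑' j : ℕ, f (p ^ j)) ≤ Real.exp (B^2/(p:ℝ) + 2*(B^2/(p:ℝ))^2) := by
    intro p hp hpB
    set t := B^2/(p:ℝ) with ht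
    have hp0 : (0:ℝ) < p := by exact_mod_cast hp.pos
    have ht0 : 0 ≤ t := by positivity
    have ht2 : t < 1/2 := by rw [ht, div_lt_iff₀ hp0]; nlinarith
    have hfB : ∀ j : ℕ, f (p^j) ≤ t^j := by
      intro j
      have hn1 : 1 ≤ p ^ j := Nat.one_le_pow j p hp.pos
      have hb1 : ‖g (p^j)‖ ≤ B ^ ((p^j).primeFactorsList.length) :=
        le_trans (hbound _ hn1) (min_le_right _ _)
      rw [hp.primeFactorsList_pow, List.length_replicate] at hb1
      have hsq : ‖g (p^j)‖^2 ≤ (B^j)^2 := pow_le_pow_left₀ (norm_nonneg _) hb1 2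
      have hcast : ((p^j : ℕ):ℝ) = (p:ℝ)^(j:ℕ) := by push_cast; ring
      simp only [hfdef]
      rw [hcast]
      calc ‖g (p^j)‖^2 / (p:ℝ)^(j:ℕ) ≤ (B^j)^2 / (p:ℝ)^(j:ℕ) := by gcongr
        _ = t^j := by rw [ht, div_pow]; congr 1; ring
    have hsum_t : Summable (fun j : ℕ => t^j) := summable_geometric_of_lt_one ht0 (by linarith)
    have h1 : (∑' j : ℕ, f (p ^ j)) ≤ (1 - t)⁻¹ := by
      rw [← tsum_geometric_of_lt_one ht0 (by linarith)]
      exact Summable.tsum_le_tsum hfB (hsump p hp) hsum_t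
    have h2 : (1 - t)⁻¹ ≤ Real.exp (t + 2*t^2) := by
      have he := Real.add_one_le_exp (t + 2*t^2)
      have h1t : (0:ℝ) < 1 - t := by linarith
      rw [inv_eq_one_div, div_le_iff₀ h1t]
      nlinarith [he]
    exact h1.trans h2
  -- choose the constant
  refine ⟨(4*A^2)^(⌊2*B^2⌋₊ + 1) * Real.exp (B^2*C + 2*B^4), by positivity, ?_⟩
  intro z hz
  have hz3 : (3:ℝ) ≤ z := le_trans (le_max_left _ _) hz
  have hzB : 2*B^2 ≤ z := le_trans (le_max_right _ _) hz
  set N := ⌊z⌋₊ + 1 with hNdef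
  have hfloor3 : 3 ≤ ⌊z⌋₊ := Nat.le_floor (by exact_mod_cast hz3)
  have hfloorle : (⌊z⌋₊:ℝ) ≤ z := Nat.floor_le (by linarith)
  have hlogz : 0 < Real.log z := Real.log_pos (by linarith)
  have hsumnorm : ∀ {p : ℕ}, p.Prime → Summable (fun j : ℕ => ‖f (p ^ j)‖) := by
    intro p hp
    have h := hsump p hp
    refine h.congr fun j => ?_
    rw [Real.norm_eq_abs, abs_of_nonneg (hfnonneg _)]
  obtain ⟨hsummable, hhassum⟩ :=
    EulerProduct.summable_and_hasSum_smoothNumbers_prod_primesBelow_tsum (f := f) hf1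
      (fun {m n} h => hfmul h) hsumnorm N
  have hset : ∀ n : ℕ, (n ∈ N.smoothNumbers) ↔
      (1 ≤ n ∧ ∀ p ∈ n.primeFactors, (p : ℝ) ≤ z) := by
    intro n
    rw [Nat.mem_smoothNumbers]
    constructor
    · rintro ⟨h0, hall⟩
      refine ⟨Nat.one_le_iff_ne_zero.mpr h0, fun p hp => ?_⟩
      have hp' : p ∈ n.primeFactorsList := by
        rw [Nat.primeFactors] at hp
        exact List.mem_toFinset.mp hp
      have h1 := hall p hp'
      have h2 : p ≤ ⌊z⌋₊ := by omega
      calc (p:ℝ) ≤ (⌊z⌋₊:ℝ) := by exact_mod_cast h2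
        _ ≤ z := hfloorle
    · rintro ⟨h0, hall⟩
      refine ⟨Nat.one_le_iff_ne_zero.mp h0, fun p hp => ?_⟩
      have hp2 : p ∈ n.primeFactors := by
        rw [Nat.primeFactors]; exact List.mem_toFinset.mpr hp
      have h1 := hall p hp2
      have h2 : p ≤ ⌊z⌋₊ := Nat.le_floor h1
      omega
  have hT : (∑' n : ℕ, if 1 ≤ n ∧ ∀ p ∈ n.primeFactors, (p : ℝ) ≤ z then f n else 0)
      = ∑' m : N.smoothNumbers, f m := by
    rw [_root_.tsum_subtype]
    refine tsum_congr fun n => ?_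
    rw [Set.indicator_apply]
    by_cases h : n ∈ (N.smoothNumbers : Set ℕ)
    · rw [if_pos h, if_pos ((hset n).mp h)]
    · rw [if_neg h, if_neg (fun hc => h ((hset n).mpr hc))]
  have hprod := hhassum.tsum_eq
  -- bound the product
  have hsplit := Finset.prod_filter_mul_prod_filter_not N.primesBelow
    (fun p : ℕ => (p:ℝ) ≤ 2*B^2) (fun p => ∑' j : ℕ, f (p ^ j))
  have hsmall : (∏ p ∈ N.primesBelow.filter (fun p : ℕ => (p:ℝ) ≤ 2*B^2), ∑' j : ℕ, f (p ^ j))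
      ≤ (4*A^2)^(⌊2*B^2⌋₊ + 1) := by
    have hsub : N.primesBelow.filter (fun p : ℕ => (p:ℝ) ≤ 2*B^2) ⊆
        Finset.range (⌊2*B^2⌋₊ + 1) := by
      intro p hp
      rw [Finset.mem_filter] at hp
      have h1 : p ≤ ⌊2*B^2⌋₊ := Nat.le_floor hp.2
      rw [Finset.mem_range]; omega
    have hcard : (N.primesBelow.filter (fun p : ℕ => (p:ℝ) ≤ 2*B^2)).card ≤ ⌊2*B^2⌋₊ + 1 := by
      calc _ ≤ (Finset.range (⌊2*B^2⌋₊ + 1)).card := Finset.card_le_card hsub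
        _ = ⌊2*B^2⌋₊ + 1 := Finset.card_range _
    have h4A : (1:ℝ) ≤ 4*A^2 := by nlinarith
    calc (∏ p ∈ N.primesBelow.filter (fun p : ℕ => (p:ℝ) ≤ 2*B^2), ∑' j : ℕ, f (p ^ j))
        ≤ ∏ _p ∈ N.primesBelow.filter (fun p : ℕ => (p:ℝ) ≤ 2*B^2), 4*A^2 :=
          Finset.prod_le_prod (fun p _ => hFnonneg p)
            (fun p hp => hFle p (Nat.prime_of_mem_primesBelow (Finset.mem_filter.mp hp).1))
      _ = (4*A^2)^(N.primesBelow.filter (fun p : ℕ => (p:ℝ) ≤ 2*B^2)).card := Finset.prod_const _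
      _ ≤ (4*A^2)^(⌊2*B^2⌋₊ + 1) := pow_le_pow_right₀ h4A hcard
  have hlarge : (∏ p ∈ N.primesBelow.filter (fun p : ℕ => ¬((p:ℝ) ≤ 2*B^2)), ∑' j : ℕ, f (p ^ j))
      ≤ Real.exp (B^2 * (Real.log (Real.log z) + C) + 2*B^4) := by
    set P2 := N.primesBelow.filter (fun p : ℕ => ¬((p:ℝ) ≤ 2*B^2)) with hP2
    have hstep1 : (∏ p ∈ P2, ∑' j : ℕ, f (p ^ j))
        ≤ ∏ p ∈ P2, Real.exp (B^2/(p:ℝ) + 2*(B^2/(p:ℝ))^2) := by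
      refine Finset.prod_le_prod (fun p _ => hFnonneg p) (fun p hp => ?_)
      rw [hP2, Finset.mem_filter] at hp
      exact hFlarge p (Nat.prime_of_mem_primesBelow hp.1) (lt_of_not_ge hp.2)
    rw [← Real.exp_sum] at hstep1
    refine hstep1.trans (Real.exp_le_exp.mpr ?_)
    have hsum1 : ∑ p ∈ P2, B^2/(p:ℝ) ≤ B^2 * (Real.log (Real.log z) + C) := by
      have h1 : ∑ p ∈ P2, B^2/(p:ℝ) = B^2 * ∑ p ∈ P2, ((p:ℝ))⁻¹ := by
        rw [Finset.mul_sum]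
        exact Finset.sum_congr rfl fun p _ => div_eq_mul_inv _ _
      have h2 : ∑ p ∈ P2, ((p:ℝ))⁻¹ ≤ ∑ p ∈ N.primesBelow, ((p:ℝ))⁻¹ := by
        refine Finset.sum_le_sum_of_subset_of_nonneg (Finset.filter_subset _ _)
          fun p _ _ => by positivity
      have h3 : ∑ p ∈ N.primesBelow, ((p:ℝ))⁻¹ ≤ Real.log (Real.log ⌊z⌋₊) + C :=
        hC ⌊z⌋₊ hfloor3
      have h4 : Real.log (Real.log ⌊z⌋₊) ≤ Real.log (Real.log z) := by
        have h5 : (0:ℝ) < Real.log ⌊z⌋₊ := Real.log_pos (by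
          have : (3:ℝ) ≤ (⌊z⌋₊:ℝ) := by exact_mod_cast hfloor3
          linarith)
        exact Real.log_le_log h5 (Real.log_le_log (by
          have : (3:ℝ) ≤ (⌊z⌋₊:ℝ) := by exact_mod_cast hfloor3
          linarith) hfloorle)
      have hB2 : (0:ℝ) ≤ B^2 := sq_nonneg B
      rw [h1]
      calc B^2 * ∑ p ∈ P2, ((p:ℝ))⁻¹ ≤ B^2 * (Real.log (Real.log ⌊z⌋₊) + C) := by
            apply mul_le_mul_of_nonneg_left (h2.trans h3) hB2
        _ ≤ B^2 * (Real.log (Real.log z) + C) := by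
            apply mul_le_mul_of_nonneg_left (by linarith) hB2
    have hsum2 : ∑ p ∈ P2, 2*(B^2/(p:ℝ))^2 ≤ 2*B^4 := by
      have h1 : ∀ p ∈ P2, 2*(B^2/(p:ℝ))^2 = 2*B^4 * ((p:ℝ)^2)⁻¹ := by
        intro p hp
        have hp0 : (0:ℝ) < p := by
          exact_mod_cast (Nat.prime_of_mem_primesBelow (Finset.mem_filter.mp hp).1).pos
        field_simp
      rw [Finset.sum_congr rfl h1, ← Finset.mul_sum]
      have h2 : ∑ p ∈ P2, ((p:ℝ)^2)⁻¹ ≤ 1 := by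
        have hsub : P2 ⊆ Finset.Ico 2 N := by
          intro p hp
          rw [hP2, Finset.mem_filter] at hp
          have h3 := Nat.prime_of_mem_primesBelow hp.1
          have h4 := Nat.lt_of_mem_primesBelow hp.1
          rw [Finset.mem_Ico]
          exact ⟨h3.two_le, h4⟩
        calc ∑ p ∈ P2, ((p:ℝ)^2)⁻¹ ≤ ∑ n ∈ Finset.Ico 2 N, ((n:ℝ)^2)⁻¹ :=
              Finset.sum_le_sum_of_subset_of_nonneg hsub fun n _ _ => by positivity
          _ ≤ 1 := sum_inv_sq_le N
      have h3 : (0:ℝ) ≤ 2*B^4 := by positivity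
      calc 2*B^4 * ∑ p ∈ P2, ((p:ℝ)^2)⁻¹ ≤ 2*B^4 * 1 := mul_le_mul_of_nonneg_left h2 h3
        _ = 2*B^4 := by ring
    calc ∑ p ∈ P2, (B^2/(p:ℝ) + 2*(B^2/(p:ℝ))^2)
        = ∑ p ∈ P2, B^2/(p:ℝ) + ∑ p ∈ P2, 2*(B^2/(p:ℝ))^2 := Finset.sum_add_distrib
      _ ≤ B^2 * (Real.log (Real.log z) + C) + 2*B^4 := add_le_add hsum1 hsum2
  -- put the product bound together
  have hrpow : Real.exp (B^2 * Real.log (Real.log z)) = (Real.log z) ^ (B^2) := by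
    rw [Real.rpow_def_of_pos hlogz, mul_comm]
  have hmain : (∑' n : ℕ, if 1 ≤ n ∧ ∀ p ∈ n.primeFactors, (p : ℝ) ≤ z then f n else 0)
      ≤ (4*A^2)^(⌊2*B^2⌋₊ + 1) * Real.exp (B^2*C + 2*B^4) * (Real.log z) ^ (B^2) := by
    rw [hT, hprod, ← hsplit]
    have hlargenn : (0:ℝ) ≤ ∏ p ∈ N.primesBelow.filter (fun p : ℕ => ¬((p:ℝ) ≤ 2*B^2)),
        ∑' j : ℕ, f (p ^ j) := Finset.prod_nonneg fun p _ => hFnonneg p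
    have hsmallnn : (0:ℝ) ≤ ∏ p ∈ N.primesBelow.filter (fun p : ℕ => (p:ℝ) ≤ 2*B^2),
        ∑' j : ℕ, f (p ^ j) := Finset.prod_nonneg fun p _ => hFnonneg p
    calc (∏ p ∈ N.primesBelow.filter (fun p : ℕ => (p:ℝ) ≤ 2*B^2), ∑' j : ℕ, f (p ^ j)) *
          ∏ p ∈ N.primesBelow.filter (fun p : ℕ => ¬((p:ℝ) ≤ 2*B^2)), ∑' j : ℕ, f (p ^ j)
        ≤ (4*A^2)^(⌊2*B^2⌋₊ + 1) * Real.exp (B^2 * (Real.log (Real.log z) + C) + 2*B^4) := by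
          apply mul_le_mul hsmall hlarge hlargenn
          positivity
      _ = (4*A^2)^(⌊2*B^2⌋₊ + 1) * Real.exp (B^2*C + 2*B^4) * Real.exp (B^2 * Real.log (Real.log z)) := by
          rw [mul_assoc, ← Real.exp_add]
          congr 2
          ring
      _ = (4*A^2)^(⌊2*B^2⌋₊ + 1) * Real.exp (B^2*C + 2*B^4) * (Real.log z) ^ (B^2) := by
          rw [hrpow]
  refine ⟨hmain, ?_⟩
  -- the finite sum
  have hsum_ite : Summable (fun n : ℕ =>
      if 1 ≤ n ∧ ∀ p ∈ n.primeFactors, (p : ℝ) ≤ z then f n else 0) := by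
    have h1 : Summable (fun m : N.smoothNumbers => f m) := by
      refine hsummable.congr fun m => ?_
      rw [Real.norm_eq_abs, abs_of_nonneg (hfnonneg _)]
    have h2 := (summable_subtype_iff_indicator (s := (N.smoothNumbers : Set ℕ)) (f := f)).mp h1
    refine h2.congr fun n => ?_
    rw [Set.indicator_apply]
    by_cases h : n ∈ (N.smoothNumbers : Set ℕ)
    · rw [if_pos h, if_pos ((hset n).mp h)]
    · rw [if_neg h, if_neg (fun hc => h ((hset n).mpr hc))]
  have heq : ∑ n ∈ Finset.Icc 1 ⌊z⌋₊, f n = ∑ n ∈ Finset.Icc 1 ⌊z⌋₊,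
      (if 1 ≤ n ∧ ∀ p ∈ n.primeFactors, (p : ℝ) ≤ z then f n else 0) := by
    refine Finset.sum_congr rfl fun n hn => ?_
    rw [Finset.mem_Icc] at hn
    rw [if_pos]
    refine ⟨hn.1, fun p hp => ?_⟩
    have hdvd := Nat.dvd_of_mem_primeFactors hp
    have hle : p ≤ n := Nat.le_of_dvd (by omega) hdvd
    have : p ≤ ⌊z⌋₊ := le_trans hle hn.2
    calc (p:ℝ) ≤ (⌊z⌋₊:ℝ) := by exact_mod_cast this
      _ ≤ z := hfloorle
  calc ∑ n ∈ Finset.Icc 1 ⌊z⌋₊, f n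
      = ∑ n ∈ Finset.Icc 1 ⌊z⌋₊,
          (if 1 ≤ n ∧ ∀ p ∈ n.primeFactors, (p : ℝ) ≤ z then f n else 0) := heq
    _ ≤ ∑' n : ℕ, (if 1 ≤ n ∧ ∀ p ∈ n.primeFactors, (p : ℝ) ≤ z then f n else 0) := by
        refine Summable.sum_le_tsum _ (fun n _ => ?_) hsum_ite
        split_ifs with h
        · exact hfnonneg n
        · exact le_refl 0
    _ ≤ _ := hmain
end
end

section
/- Let g : ℕ → ℂ be a multiplicative function satisfying |g(n)| ≤ min(A·n^θ, B^{Ω(n)}) for all n ≥ 1 (constants A, B > 0, fixed 0 < θ < 1/48). Then there is a constant C > 0 depending only on A, B, θ such that for all sufficiently large x and all q with 0 < q ≤ 1/(log log x) one has Ψ_{2q,g}(x) ≤ C. -/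
open MeasureTheory ProbabilityTheory Filter Finset
open scoped BigOperators Classical Real ENNReal

noncomputable section

namespace PMaux


lemma block_card {j : ℕ} (P : Finset ℕ)
    (hP : ∀ p ∈ P, p.Prime ∧ 2^j ≤ p ∧ p < 2^(j+1)) : j * P.card ≤ 2^(j+2) := by
  have h1 : (2^j : ℕ) ^ P.card ≤ ∏ p ∈ P, p :=
    Finset.pow_card_le_prod _ _ _ (fun p hp => (hP p hp).2.1)
  have h2 : ∏ p ∈ P, p ≤ primorial (2^(j+1)) := by
    apply Nat.le_of_dvd
    · apply Finset.prod_pos; intro i hi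
      simp only [primorial, Finset.mem_filter, Finset.mem_range] at hi
      exact hi.2.pos
    · apply Finset.prod_dvd_prod_of_subset
      intro p hp
      obtain ⟨hpp, _, hlt⟩ := hP p hp
      simp only [primorial, Finset.mem_filter, Finset.mem_range]
      exact ⟨by omega, hpp⟩
  have h3 : primorial (2^(j+1)) ≤ 4 ^ (2^(j+1)) := primorial_le_4_pow _
  have h4 : (2:ℕ)^(j * P.card) ≤ 2 ^ (2^(j+2)) := by
    calc (2:ℕ)^(j * P.card) = (2^j)^P.card := by rw [pow_mul]
    _ ≤ primorial (2^(j+1)) := le_trans h1 h2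
    _ ≤ 4 ^ (2^(j+1)) := h3
    _ = 2 ^ (2^(j+2)) := by
        rw [show (4:ℕ) = 2^2 by norm_num, ← pow_mul]
        ring_nf
  exact (Nat.pow_le_pow_iff_right (by norm_num)).mp h4

lemma mertens {N : ℕ} (hN : 2 ≤ N) :
    ∑ p ∈ (N+1).primesBelow, (1/(p:ℝ)) ≤ 4 * Real.log (Real.log N) + 8 := by
  set J := Nat.log 2 N with hJ
  have hJ1 : 1 ≤ J := Nat.log_pos one_lt_two hN  -- 0 < J
  have hmaps : ∀ p ∈ (N+1).primesBelow, Nat.log 2 p ∈ Finset.range (J+1) := by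
    intro p hp
    rw [Nat.mem_primesBelow] at hp
    exact Finset.mem_range.2 (Nat.succ_le_succ (Nat.log_mono_right (by omega)))
  rw [← Finset.sum_fiberwise_of_maps_to hmaps]
  -- blocks
  have hblock : ∀ j, 1 ≤ j →
      ∑ p ∈ (N+1).primesBelow.filter (fun p => Nat.log 2 p = j), (1/(p:ℝ)) ≤ 4 / j := by
    intro j hj
    set P := (N+1).primesBelow.filter (fun p => Nat.log 2 p = j) with hPdef
    have hmem : ∀ p ∈ P, p.Prime ∧ 2^j ≤ p ∧ p < 2^(j+1) := by
      intro p hp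
      rw [hPdef, Finset.mem_filter, Nat.mem_primesBelow] at hp
      obtain ⟨⟨hlt, hpp⟩, hlog⟩ := hp
      refine ⟨hpp, ?_, ?_⟩
      · rw [← hlog]; exact Nat.pow_log_le_self 2 hpp.pos.ne'
      · rw [← hlog]; exact Nat.lt_pow_succ_log_self one_lt_two p
    have hcard : j * P.card ≤ 2^(j+2) := block_card P hmem
    have hsum : ∑ p ∈ P, (1/(p:ℝ)) ≤ P.card * ((2:ℝ)^j)⁻¹ := by
      rw [← nsmul_eq_mul]
      apply Finset.sum_le_card_nsmul
      intro p hp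
      have h2j : (2:ℝ)^j ≤ (p:ℝ) := by
        have := (hmem p hp).2.1
        exact_mod_cast Nat.cast_le.mpr this |>.trans_eq (by push_cast; ring)
      rw [one_div]
      exact inv_anti₀ (by positivity) h2j
    have hjR : (0:ℝ) < j := by exact_mod_cast hj
    have h2jR : (0:ℝ) < 2^j := by positivity
    have hcR : (j:ℝ) * P.card ≤ 4 * 2^j := by
      have := (Nat.cast_le (α := ℝ)).mpr hcard
      push_cast at this
      calc (j:ℝ) * P.card ≤ 2^(j+2) := this
      _ = 4 * 2^j := by ring
    calc ∑ p ∈ P, (1/(p:ℝ)) ≤ P.card * ((2:ℝ)^j)⁻¹ := hsum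
    _ ≤ 4 / j := by
        rw [le_div_iff₀ hjR]
        have hinv : ((2:ℝ)^j)⁻¹ * 2^j = 1 := inv_mul_cancel₀ h2jR.ne'
        nlinarith [mul_nonneg (sub_nonneg.2 hcR) (inv_nonneg.2 h2jR.le)]
  have hblock0 : (N+1).primesBelow.filter (fun p => Nat.log 2 p = 0) = ∅ := by
    ext p
    simp only [Finset.mem_filter, Nat.mem_primesBelow, Finset.notMem_empty, iff_false]
    rintro ⟨⟨_, hpp⟩, hlog⟩
    exact absurd hlog (Nat.log_pos one_lt_two hpp.two_le).ne'
  rw [Finset.sum_range_succ']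
  simp only [hblock0, Finset.sum_empty, add_zero]
  have hstep : ∑ i ∈ Finset.range J,
      (∑ p ∈ (N+1).primesBelow.filter (fun p => Nat.log 2 p = i+1), (1/(p:ℝ)))
      ≤ ∑ i ∈ Finset.range J, 4/((i:ℝ)+1) := by
    apply Finset.sum_le_sum
    intro i _
    have := hblock (i+1) (by omega)
    push_cast at this ⊢
    exact this
  refine hstep.trans ?_
  have hharm : ∑ i ∈ Finset.range J, 4/((i:ℝ)+1) = 4 * (harmonic J : ℝ) := by
    rw [harmonic]
    push_cast
    rw [Finset.mul_sum]
    apply Finset.sum_congr rfl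
    intro i _
    rw [div_eq_mul_inv]
  rw [hharm]
  have h1 : (harmonic J : ℝ) ≤ 1 + Real.log J := harmonic_le_one_add_log J
  -- J ≤ 2 log N
  have hJN : (2:ℝ)^J ≤ N := by exact_mod_cast Nat.pow_log_le_self 2 (by omega : N ≠ 0)
  have hlogN : Real.log 2 ≤ Real.log N := Real.log_le_log (by norm_num) (by exact_mod_cast hN)
  have hlog2 : (0.6931471803 : ℝ) < Real.log 2 := Real.log_two_gt_d9
  have hJle : (J:ℝ) ≤ 2 * Real.log N := by
    have h := Real.log_le_log (by positivity) hJN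
    rw [Real.log_pow] at h
    nlinarith [Real.log_nonneg (by exact_mod_cast Nat.one_le_iff_ne_zero.mpr (by omega) : (1:ℝ) ≤ N)]
  have hJpos : (1:ℝ) ≤ (J:ℝ) := by exact_mod_cast hJ1
  have hlogJ : Real.log J ≤ Real.log 2 + Real.log (Real.log N) := by
    calc Real.log J ≤ Real.log (2 * Real.log N) := Real.log_le_log (by linarith) hJle
    _ = Real.log 2 + Real.log (Real.log N) := by
        rw [Real.log_mul (by norm_num) (by nlinarith)]
  have hlog2lt : Real.log 2 < 1 := by
    nlinarith [Real.log_two_lt_d9]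
  nlinarith [Real.log_nonneg hJpos]


/-- local factor -/
def lf (A' B' θ : ℝ) (p k : ℕ) : ℝ :=
  min (A'^2 * (p:ℝ) ^ ((2*θ) * (k:ℝ))) ((B'^2)^k) * ((p:ℝ)^k)⁻¹

/-- multiplicative majorant -/
def Fm (A' B' θ : ℝ) (n : ℕ) : ℝ :=
  if n = 0 then 0 else n.factorization.prod (lf A' B' θ)

variable {A' B' θ : ℝ}

lemma lf_nonneg (hA' : 0 ≤ A') (hB' : 0 ≤ B') (p k : ℕ) : 0 ≤ lf A' B' θ p k := by
  apply mul_nonneg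
  · exact le_min (by positivity) (by positivity)
  · positivity

lemma lf_zero (hA' : 1 ≤ A') (p : ℕ) : lf A' B' θ p 0 = 1 := by
  simp only [lf, Nat.cast_zero, mul_zero, Real.rpow_zero, pow_zero, mul_one, inv_one]
  rw [min_eq_right (by nlinarith)]

lemma Fm_nonneg (hA' : 0 ≤ A') (hB' : 0 ≤ B') (n : ℕ) : 0 ≤ Fm A' B' θ n := by
  unfold Fm
  split
  · exact le_refl 0
  · rw [Finsupp.prod]
    exact Finset.prod_nonneg fun p _ => lf_nonneg hA' hB' p _

lemma Fm_one : Fm A' B' θ 1 = 1 := by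
  simp [Fm, Nat.factorization_one]

lemma Fm_mult (hmn : Nat.Coprime m n) : Fm A' B' θ (m * n) = Fm A' B' θ m * Fm A' B' θ n := by
  rcases eq_or_ne m 0 with rfl | hm
  · rcases Nat.coprime_zero_left n |>.mp hmn with rfl
    simp [Fm]
  rcases eq_or_ne n 0 with rfl | hn
  · rcases Nat.coprime_zero_right m |>.mp hmn with rfl
    simp [Fm]
  have hmul : m * n ≠ 0 := mul_ne_zero hm hn
  simp only [Fm, if_neg hm, if_neg hn, if_neg hmul]
  rw [Nat.factorization_mul hm hn]
  apply Finsupp.prod_add_index_of_disjoint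
  rw [Nat.support_factorization, Nat.support_factorization]
  exact Nat.Coprime.disjoint_primeFactors hmn

lemma Fm_prime_pow (hA' : 1 ≤ A') {p : ℕ} (hp : p.Prime) (k : ℕ) :
    Fm A' B' θ (p ^ k) = lf A' B' θ p k := by
  have : (p:ℕ)^k ≠ 0 := pow_ne_zero _ hp.pos.ne'
  simp only [Fm, if_neg this, hp.factorization_pow]
  exact Finsupp.prod_single_index (lf_zero hA' p)

lemma lf_le_geom (hA' : 1 ≤ A') (hθ0 : 0 < θ) {p : ℕ} (hp : 2 ≤ p) (k : ℕ) :
    lf A' B' θ p k ≤ A'^2 * ((p:ℝ) ^ (2*θ - 1)) ^ k := by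
  have hp0 : (0:ℝ) < p := by positivity
  have h1 : lf A' B' θ p k ≤ A'^2 * (p:ℝ) ^ ((2*θ) * (k:ℝ)) * ((p:ℝ)^k)⁻¹ :=
    mul_le_mul_of_nonneg_right (min_le_left _ _) (by positivity)
  refine h1.trans_eq ?_
  rw [mul_assoc]
  congr 1
  rw [← Real.rpow_natCast (p:ℝ) k, ← Real.rpow_neg hp0.le,
    ← Real.rpow_add hp0, ← Real.rpow_natCast ((p:ℝ) ^ (2*θ-1)) k,
    ← Real.rpow_mul hp0.le]
  ring_nf

lemma sigma_lt_one (hθ0 : 0 < θ) (hθ : θ ≤ 1/48) {p : ℕ} (hp : 2 ≤ p) :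
    (p:ℝ) ^ (2*θ - 1) ≤ 3/4 ∧ 0 ≤ (p:ℝ) ^ (2*θ-1) := by
  have hp0 : (0:ℝ) < p := by positivity
  have hp1 : (1:ℝ) ≤ p := by exact_mod_cast Nat.one_le_cast.mpr (by omega)
  constructor
  · have h2 : (p:ℝ) ^ (2*θ-1) ≤ (p:ℝ) ^ (-(1/2) : ℝ) :=
      Real.rpow_le_rpow_of_exponent_le (by exact_mod_cast Nat.one_le_cast.mpr (by omega) : (1:ℝ) ≤ p) (by linarith)
    refine h2.trans ?_
    have h3 : (p:ℝ) ^ (-(1/2):ℝ) = ((p:ℝ) ^ ((1/2):ℝ))⁻¹ := Real.rpow_neg hp0.le _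
    have h4 : (2:ℝ) ^ ((1/2):ℝ) ≤ (p:ℝ) ^ ((1/2):ℝ) :=
      Real.rpow_le_rpow (by norm_num) (by exact_mod_cast hp) (by norm_num)
    have h5 : (4/3:ℝ) ≤ (2:ℝ) ^ ((1/2):ℝ) := by
      have hsq : ((2:ℝ) ^ ((1/2):ℝ))^(2:ℕ) = 2 := by
        rw [← Real.rpow_natCast ((2:ℝ) ^ ((1/2):ℝ)) 2, ← Real.rpow_mul (by norm_num)]
        norm_num
      apply le_of_pow_le_pow_left₀ (n := 2) (by norm_num) (by positivity)
      rw [hsq]; norm_num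
    rw [h3]
    have h6 : (4/3:ℝ) ≤ (p:ℝ) ^ ((1/2):ℝ) := h5.trans h4
    have h7 : ((p:ℝ) ^ ((1/2):ℝ))⁻¹ ≤ (4/3:ℝ)⁻¹ := inv_anti₀ (by norm_num) h6
    refine h7.trans (by norm_num)
  · positivity

lemma summable_lf (hA' : 1 ≤ A') (hB' : 0 ≤ B') (hθ0 : 0 < θ) (hθ : θ ≤ 1/48)
    {p : ℕ} (hp : p.Prime) : Summable (fun k => Fm A' B' θ (p^k)) := by
  obtain ⟨hσ, hσ0⟩ := sigma_lt_one hθ0 hθ hp.two_le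
  have hgeom : Summable (fun k : ℕ => A'^2 * ((p:ℝ) ^ (2*θ-1)) ^ k) :=
    (summable_geometric_of_lt_one hσ0 (by linarith)).mul_left _
  refine Summable.of_nonneg_of_le (fun k => Fm_nonneg (by linarith) hB' _) (fun k => ?_) hgeom
  rw [Fm_prime_pow hA' hp]
  exact lf_le_geom hA' hθ0 hp.two_le k

end PMaux

namespace PMaux2
open PMaux
variable {A' B' θ : ℝ}

lemma summable_shift (hA' : 1 ≤ A') (hB' : 0 ≤ B') (hθ0 : 0 < θ) (hθ : θ ≤ 1/48)
    {p : ℕ} (hp : p.Prime) : Summable (fun k => Fm A' B' θ (p^(k+1))) :=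
  (summable_nat_add_iff (f := fun n => Fm A' B' θ (p^n)) 1).mpr (summable_lf hA' hB' hθ0 hθ hp)

lemma tp_nonneg (hA' : 0 ≤ A') (hB' : 0 ≤ B') {p : ℕ} :
    0 ≤ ∑' k, Fm A' B' θ (p^(k+1)) :=
  tsum_nonneg fun k => Fm_nonneg hA' hB' _

lemma tp_global (hA' : 1 ≤ A') (hB' : 0 ≤ B') (hθ0 : 0 < θ) (hθ : θ ≤ 1/48)
    {p : ℕ} (hp : p.Prime) : ∑' k, Fm A' B' θ (p^(k+1)) ≤ 3 * A'^2 := by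
  obtain ⟨hσ, hσ0⟩ := sigma_lt_one hθ0 hθ hp.two_le
  set σ := (p:ℝ) ^ (2*θ-1) with hσdef
  have hgeom : Summable (fun k : ℕ => σ ^ k) := summable_geometric_of_lt_one hσ0 (by linarith)
  have hgeom' : Summable (fun k : ℕ => A'^2 * σ * σ ^ k) := hgeom.mul_left _
  have hle : ∀ k, Fm A' B' θ (p^(k+1)) ≤ A'^2 * σ * σ ^ k := by
    intro k
    rw [Fm_prime_pow hA' hp]
    refine (lf_le_geom hA' hθ0 hp.two_le (k+1)).trans_eq ?_
    rw [pow_succ]; ring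
  have h1 : ∑' k, Fm A' B' θ (p^(k+1)) ≤ ∑' k : ℕ, A'^2 * σ * σ ^ k :=
    Summable.tsum_le_tsum hle (summable_shift hA' hB' hθ0 hθ hp) hgeom'
  refine h1.trans ?_
  rw [tsum_mul_left, tsum_geometric_of_lt_one hσ0 (by linarith)]
  have hinv : (1 - σ)⁻¹ ≤ 4 := by
    have : (4:ℝ)⁻¹ ≤ 1 - σ := by linarith
    calc (1-σ)⁻¹ ≤ ((4:ℝ)⁻¹)⁻¹ := inv_anti₀ (by norm_num) this
    _ = 4 := by norm_num
  have hA2 : (0:ℝ) ≤ A'^2 := by positivity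
  calc A'^2 * σ * (1-σ)⁻¹ ≤ A'^2 * σ * 4 :=
        mul_le_mul_of_nonneg_left hinv (by positivity)
  _ ≤ 3 * A'^2 := by nlinarith

lemma lf_le_rho (hA' : 1 ≤ A') (hB' : 1 ≤ B') (hθ0 : 0 < θ)
    {p : ℕ} (hp : 2 ≤ p) (j : ℕ) :
    lf A' B' θ p j ≤ A' * (B' * (p:ℝ)^(θ-1))^j := by
  have hp0 : (0:ℝ) < p := by positivity
  have hmin : min (A'^2 * (p:ℝ) ^ ((2*θ) * (j:ℝ))) ((B'^2)^j)
      ≤ A' * B'^j * (p:ℝ) ^ (θ * (j:ℝ)) := by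
    set x := A'^2 * (p:ℝ) ^ ((2*θ) * (j:ℝ)) with hx
    set y := ((B'^2)^j : ℝ) with hy
    have hx0 : 0 ≤ x := by positivity
    have hy0 : 0 ≤ y := by positivity
    have hm0 : 0 ≤ min x y := le_min hx0 hy0
    have hsq : (min x y)^2 ≤ x * y := by
      rw [pow_two]
      exact mul_le_mul (min_le_left _ _) (min_le_right _ _) hm0 hx0
    have hxy : x * y = (A' * B'^j * (p:ℝ) ^ (θ * (j:ℝ)))^2 := by
      rw [hx, hy, mul_pow, mul_pow, ← Real.rpow_natCast ((p:ℝ) ^ (θ * (j:ℝ))) 2,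
        ← Real.rpow_mul hp0.le, ← pow_mul]
      ring_nf
    refine le_of_pow_le_pow_left₀ (n := 2) (by norm_num) (by positivity) ?_
    rw [← hxy]; exact hsq
  calc lf A' B' θ p j ≤ (A' * B'^j * (p:ℝ) ^ (θ * (j:ℝ))) * ((p:ℝ)^j)⁻¹ :=
        mul_le_mul_of_nonneg_right hmin (by positivity)
  _ = A' * (B' * (p:ℝ)^(θ-1))^j := by
      rw [mul_pow, ← Real.rpow_natCast (p:ℝ) j, ← Real.rpow_neg hp0.le,
        ← Real.rpow_natCast ((p:ℝ) ^ (θ-1)) j, ← Real.rpow_mul hp0.le]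
      rw [mul_assoc, ← Real.rpow_add hp0]
      ring_nf

lemma tp_large (hA' : 1 ≤ A') (hB' : 1 ≤ B') (hθ0 : 0 < θ) (hθ : θ ≤ 1/48)
    {p : ℕ} (hp : p.Prime) (hbig : 17 * B'^4 ≤ (p:ℝ)) :
    ∑' k, Fm A' B' θ (p^(k+1)) ≤ (B'^2 + 2*A'*B'^2) * (p:ℝ)⁻¹ := by
  have hp0 : (0:ℝ) < p := by exact_mod_cast hp.pos
  have hp1 : (1:ℝ) ≤ p := by exact_mod_cast hp.one_lt.le
  set ρ := B' * (p:ℝ)^(θ-1) with hρdef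
  have hρ0 : 0 ≤ ρ := by positivity
  have hρ14 : ρ ≤ 1/4 := by
    have hhalf : ((4*B'^2 : ℝ)) ≤ (p:ℝ) ^ ((1/2):ℝ) := by
      refine le_of_pow_le_pow_left₀ (n := 2) (by norm_num) (by positivity) ?_
      have : ((p:ℝ) ^ ((1/2):ℝ))^(2:ℕ) = (p:ℝ) := by
        rw [← Real.rpow_natCast ((p:ℝ) ^ ((1/2):ℝ)) 2, ← Real.rpow_mul hp0.le]
        norm_num
      rw [this]
      nlinarith [pow_nonneg (le_trans zero_le_one hB') 4]
    have h1 : (p:ℝ)^(θ-1) ≤ (p:ℝ)^(-(1/2):ℝ) :=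
      Real.rpow_le_rpow_of_exponent_le hp1 (by linarith)
    have h2 : (p:ℝ)^(-(1/2):ℝ) = ((p:ℝ) ^ ((1/2):ℝ))⁻¹ := Real.rpow_neg hp0.le _
    have h3 : ((p:ℝ) ^ ((1/2):ℝ))⁻¹ ≤ (4*B'^2)⁻¹ := inv_anti₀ (by positivity) hhalf
    have h4 : B' * (4*B'^2)⁻¹ ≤ 1/4 := by
      rw [show (4*B'^2 : ℝ) = (4*B')*B' by ring, mul_inv]
      have hB0 : (0:ℝ) < B' := lt_of_lt_of_le one_pos hB'
      rw [show B' * ((4*B')⁻¹ * B'⁻¹) = (B' * B'⁻¹) * (4*B')⁻¹ by ring,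
        mul_inv_cancel₀ hB0.ne', one_mul]
      calc (4*B')⁻¹ ≤ (4:ℝ)⁻¹ := inv_anti₀ (by norm_num) (by linarith)
      _ = 1/4 := by norm_num
    calc ρ = B' * (p:ℝ)^(θ-1) := rfl
    _ ≤ B' * (4*B'^2)⁻¹ :=
        mul_le_mul_of_nonneg_left (h1.trans (h2.le.trans h3)) (by linarith)
    _ ≤ 1/4 := h4
  -- split off the first term
  have hs1 : Summable (fun k => Fm A' B' θ (p^(k+1))) :=
    summable_shift hA' (by linarith) hθ0 hθ hp
  have hsplit : ∑' k, Fm A' B' θ (p^(k+1))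
      = Fm A' B' θ (p^1) + ∑' k, Fm A' B' θ (p^(k+2)) := by
    rw [Summable.tsum_eq_zero_add hs1]
  have hfirst : Fm A' B' θ (p^1) ≤ B'^2 * (p:ℝ)⁻¹ := by
    rw [Fm_prime_pow hA' hp]
    unfold lf
    rw [pow_one, pow_one]
    exact mul_le_mul_of_nonneg_right (min_le_right _ _) (by positivity)
  have hgeom : Summable (fun k : ℕ => ρ ^ k) :=
    summable_geometric_of_lt_one hρ0 (by linarith)
  have hgeom' : Summable (fun k : ℕ => A' * ρ^2 * ρ ^ k) := hgeom.mul_left _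
  have htail : ∑' k, Fm A' B' θ (p^(k+2)) ≤ ∑' k : ℕ, A' * ρ^2 * ρ ^ k := by
    refine Summable.tsum_le_tsum (fun k => ?_) ((summable_nat_add_iff
      (f := fun n => Fm A' B' θ (p^n)) 2).mpr
      (summable_lf hA' (by linarith) hθ0 hθ hp)) hgeom'
    rw [Fm_prime_pow hA' hp]
    refine (lf_le_rho hA' hB' hθ0 hp.two_le (k+2)).trans_eq ?_
    rw [pow_add]; ring
  have htail2 : ∑' k : ℕ, A' * ρ^2 * ρ ^ k ≤ 2 * A' * B'^2 * (p:ℝ)⁻¹ := by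
    rw [tsum_mul_left, tsum_geometric_of_lt_one hρ0 (by linarith)]
    have hinv : (1 - ρ)⁻¹ ≤ 2 := by
      have : (2:ℝ)⁻¹ ≤ 1 - ρ := by linarith
      calc (1-ρ)⁻¹ ≤ ((2:ℝ)⁻¹)⁻¹ := inv_anti₀ (by norm_num) this
      _ = 2 := by norm_num
    have hρsq : ρ^2 ≤ B'^2 * (p:ℝ)⁻¹ := by
      have h5 : ((p:ℝ)^(θ-1))^(2:ℕ) = (p:ℝ)^(2*θ-2) := by
        rw [← Real.rpow_natCast ((p:ℝ) ^ (θ-1)) 2, ← Real.rpow_mul hp0.le]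
        ring_nf
      have h6 : (p:ℝ)^(2*θ-2) ≤ (p:ℝ)^(-(1:ℝ)) :=
        Real.rpow_le_rpow_of_exponent_le hp1 (by linarith)
      have h7 : (p:ℝ)^(-(1:ℝ)) = (p:ℝ)⁻¹ := Real.rpow_neg_one _
      calc ρ^2 = B'^2 * ((p:ℝ)^(θ-1))^(2:ℕ) := by rw [hρdef]; ring
      _ = B'^2 * (p:ℝ)^(2*θ-2) := by rw [h5]
      _ ≤ B'^2 * (p:ℝ)⁻¹ := by
          rw [← h7]
          exact mul_le_mul_of_nonneg_left h6 (by positivity)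
    have h9 : (0:ℝ) ≤ A' := by linarith
    calc A' * ρ^2 * (1-ρ)⁻¹ ≤ A' * ρ^2 * 2 :=
          mul_le_mul_of_nonneg_left hinv (by positivity)
    _ = (2*A') * ρ^2 := by ring
    _ ≤ (2*A') * (B'^2 * (p:ℝ)⁻¹) := mul_le_mul_of_nonneg_left hρsq (by linarith)
    _ = 2 * A' * B'^2 * (p:ℝ)⁻¹ := by ring
  have := add_le_add hfirst (htail.trans htail2)
  rw [hsplit]
  refine this.trans_eq ?_
  ring
end PMaux2

namespace PMaux3
open PMaux PMaux2
variable {A' B' θ : ℝ}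

lemma sum_Fm_le_prod (hA' : 1 ≤ A') (hB' : 1 ≤ B') (hθ0 : 0 < θ) (hθ : θ ≤ 1/48) (N : ℕ) :
    ∑ n ∈ Finset.Icc 1 N, Fm A' B' θ n
      ≤ ∏ p ∈ (N+1).primesBelow, (1 + ∑' k, Fm A' B' θ (p^(k+1))) := by
  have hB0 : (0:ℝ) ≤ B' := by linarith
  have hA0 : (0:ℝ) ≤ A' := by linarith
  have hsum : ∀ {p : ℕ}, p.Prime → Summable (fun n => ‖Fm A' B' θ (p^n)‖) := by
    intro p hp
    exact (summable_lf hA' hB0 hθ0 hθ hp).congr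
      (fun n => (Real.norm_of_nonneg (Fm_nonneg hA0 hB0 _)).symm)
  have key := EulerProduct.summable_and_hasSum_smoothNumbers_prod_primesBelow_tsum
    (f := Fm A' B' θ) Fm_one (fun {m n} h => Fm_mult h) hsum (N+1)
  have hmem : ∀ n ∈ Finset.Icc 1 N, n ∈ (N+1).smoothNumbers := by
    intro n hn
    rw [Finset.mem_Icc] at hn
    rw [Nat.mem_smoothNumbers]
    refine ⟨by omega, fun p hp => ?_⟩
    have hdvd : p ∣ n := Nat.dvd_of_mem_primeFactorsList hp
    have := Nat.le_of_dvd (by omega) hdvd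
    omega
  have hind : Summable (((N+1).smoothNumbers).indicator (Fm A' B' θ)) :=
    summable_subtype_iff_indicator.mp key.2.summable
  calc ∑ n ∈ Finset.Icc 1 N, Fm A' B' θ n
      = ∑ n ∈ Finset.Icc 1 N, ((N+1).smoothNumbers).indicator (Fm A' B' θ) n := by
        refine Finset.sum_congr rfl fun n hn => ?_
        rw [Set.indicator_of_mem (hmem n hn)]
  _ ≤ ∑' n, ((N+1).smoothNumbers).indicator (Fm A' B' θ) n := by
        refine Summable.sum_le_tsum _ (fun i _ => ?_) hind
        exact Set.indicator_nonneg (fun a _ => Fm_nonneg hA0 hB0 a) i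
  _ = ∑' (m : (N+1).smoothNumbers), Fm A' B' θ ↑m := (_root_.tsum_subtype _ _).symm
  _ = ∏ p ∈ (N+1).primesBelow, ∑' k : ℕ, Fm A' B' θ (p^k) := key.2.tsum_eq
  _ = ∏ p ∈ (N+1).primesBelow, (1 + ∑' k, Fm A' B' θ (p^(k+1))) := by
        refine Finset.prod_congr rfl fun p hp => ?_
        have hpp : p.Prime := Nat.prime_of_mem_primesBelow hp
        rw [Summable.tsum_eq_zero_add (summable_lf hA' hB0 hθ0 hθ hpp), pow_zero, Fm_one]

lemma normsq_le_Fm (g : ℕ → ℂ) {A B : ℝ} (hA : 0 < A) (hB : 0 < B) (hθ0 : 0 < θ)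
    (hmult : IsMult g) (hbound : GBound g A B θ)
    (hA' : A' = max A 1) (hB' : B' = max B 1) {n : ℕ} (hn : n ≠ 0) :
    ‖g n‖^2 * (n:ℝ)⁻¹ ≤ Fm A' B' θ n := by
  have hA'1 : 1 ≤ A' := hA' ▸ le_max_right _ _
  have hB'1 : 1 ≤ B' := hB' ▸ le_max_right _ _
  have hAA : A ≤ A' := hA' ▸ le_max_left _ _
  have hBB : B ≤ B' := hB' ▸ le_max_left _ _
  have hfac : ∀ {p k : ℕ}, p.Prime → ‖g (p^k)‖^2 * ((p:ℝ)^k)⁻¹ ≤ lf A' B' θ p k := by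
    intro p k hp
    have hp0 : (0:ℝ) < p := by exact_mod_cast hp.pos
    have hb := hbound (p^k) (Nat.one_le_pow k p hp.pos)
    have hlen : (p^k).primeFactorsList.length = k := by
      rw [hp.primeFactorsList_pow]; exact List.length_replicate
    rw [hlen] at hb
    have hcast : ((p^k : ℕ) : ℝ) = (p:ℝ)^k := by push_cast; ring
    rw [hcast] at hb
    have hmin0 : 0 ≤ min (A * ((p:ℝ)^k) ^ θ) (B ^ k) := le_min (by positivity) (by positivity)
    have hg2 : ‖g (p^k)‖^2 ≤ (min (A * ((p:ℝ)^k) ^ θ) (B ^ k))^2 :=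
      pow_le_pow_left₀ (norm_nonneg _) hb 2
    have hsq1 : (min (A * ((p:ℝ)^k) ^ θ) (B ^ k))^2 ≤ A'^2 * (p:ℝ) ^ ((2*θ) * (k:ℝ)) := by
      have h1 : min (A * ((p:ℝ)^k) ^ θ) (B ^ k) ≤ A' * ((p:ℝ)^k) ^ θ :=
        (min_le_left _ _).trans (mul_le_mul_of_nonneg_right hAA (by positivity))
      have h2 := pow_le_pow_left₀ hmin0 h1 2
      refine h2.trans_eq ?_
      rw [mul_pow, ← Real.rpow_natCast (((p:ℝ)^k) ^ θ) 2, ← Real.rpow_mul (by positivity),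
        ← Real.rpow_natCast (p:ℝ) k, ← Real.rpow_mul hp0.le]
      ring_nf
    have hsq2 : (min (A * ((p:ℝ)^k) ^ θ) (B ^ k))^2 ≤ (B'^2)^k := by
      have h1 : min (A * ((p:ℝ)^k) ^ θ) (B ^ k) ≤ B' ^ k :=
        (min_le_right _ _).trans (pow_le_pow_left₀ hB.le hBB k)
      have h2 := pow_le_pow_left₀ hmin0 h1 2
      refine h2.trans_eq ?_
      rw [← pow_mul, ← pow_mul, Nat.mul_comm]
    have : ‖g (p^k)‖^2 ≤ min (A'^2 * (p:ℝ) ^ ((2*θ) * (k:ℝ))) ((B'^2)^k) :=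
      le_min (hg2.trans hsq1) (hg2.trans hsq2)
    exact mul_le_mul_of_nonneg_right this (by positivity)
  have hgn := Nat.multiplicative_factorization g hmult.2 hmult.1 hn
  have hfm : Fm A' B' θ n
      = ∏ p ∈ n.factorization.support, lf A' B' θ p (n.factorization p) := by
    rw [Fm, if_neg hn, Finsupp.prod]
  have hnorm : ‖g n‖ = ∏ p ∈ n.factorization.support, ‖g (p ^ n.factorization p)‖ := by
    rw [hgn, Finsupp.prod, norm_prod]
  have hcastn : (n:ℝ) = ∏ p ∈ n.factorization.support, ((p:ℝ) ^ n.factorization p) := by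
    conv_lhs => rw [← Nat.factorization_prod_pow_eq_self hn]
    rw [Finsupp.prod, Nat.cast_prod]
    exact Finset.prod_congr rfl fun p _ => by push_cast; ring
  rw [hfm, hnorm, hcastn, ← Finset.prod_pow, ← Finset.prod_inv_distrib,
    ← Finset.prod_mul_distrib]
  refine Finset.prod_le_prod (fun p _ => by positivity) (fun p hp => ?_)
  exact hfac (Nat.prime_of_mem_primeFactors (by rwa [← Nat.support_factorization]))

lemma Mbound (g : ℕ → ℂ) {A B θ : ℝ} (hA : 0 < A) (hB : 0 < B) (hθ0 : 0 < θ)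
    (hθ : θ ≤ 1/48) (hmult : IsMult g) (hbound : GBound g A B θ) {N : ℕ} (hN : 2 ≤ N) :
    ∑ n ∈ Finset.Icc 1 N, ‖g n‖^2 * (n:ℝ)⁻¹
      ≤ Real.exp (3*(max A 1)^2*(17*(max B 1)^4+1)
          + ((max B 1)^2 + 2*(max A 1)*(max B 1)^2) * (4*Real.log (Real.log N) + 8)) := by
  set A' := max A 1 with hA'
  set B' := max B 1 with hB'
  have hA'1 : 1 ≤ A' := le_max_right _ _
  have hB'1 : 1 ≤ B' := le_max_right _ _
  have hA0 : (0:ℝ) ≤ A' := by linarith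
  have hB0 : (0:ℝ) ≤ B' := by linarith
  have step1 : ∑ n ∈ Finset.Icc 1 N, ‖g n‖^2 * (n:ℝ)⁻¹
      ≤ ∑ n ∈ Finset.Icc 1 N, Fm A' B' θ n := by
    refine Finset.sum_le_sum fun n hn => ?_
    rw [Finset.mem_Icc] at hn
    exact normsq_le_Fm g hA hB hθ0 hmult hbound hA' hB' (by omega)
  have step2 := sum_Fm_le_prod (θ := θ) hA'1 hB'1 hθ0 hθ N
  have step3 : ∏ p ∈ (N+1).primesBelow, (1 + ∑' k, Fm A' B' θ (p^(k+1)))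
      ≤ Real.exp (∑ p ∈ (N+1).primesBelow, ∑' k, Fm A' B' θ (p^(k+1))) := by
    rw [Real.exp_sum]
    refine Finset.prod_le_prod (fun p _ => ?_) (fun p _ => ?_)
    · have := tp_nonneg (θ := θ) (p := p) hA0 hB0
      linarith
    · rw [add_comm]
      exact Real.add_one_le_exp _
  have step4 : ∑ p ∈ (N+1).primesBelow, ∑' k, Fm A' B' θ (p^(k+1))
      ≤ ∑ p ∈ (N+1).primesBelow, ((if (p:ℝ) < 17*B'^4 then 3*A'^2 else 0)
          + (B'^2 + 2*A'*B'^2) * (p:ℝ)⁻¹) := by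
    refine Finset.sum_le_sum fun p hp => ?_
    have hpp : p.Prime := Nat.prime_of_mem_primesBelow hp
    by_cases hsmall : (p:ℝ) < 17*B'^4
    · rw [if_pos hsmall]
      have h1 := tp_global (θ := θ) hA'1 hB0 hθ0 hθ hpp
      have h2 : 0 ≤ (B'^2 + 2*A'*B'^2) * (p:ℝ)⁻¹ := by positivity
      linarith
    · rw [if_neg hsmall, zero_add]
      exact tp_large hA'1 hB'1 hθ0 hθ hpp (le_of_not_gt hsmall)
  have step5 : ∑ p ∈ (N+1).primesBelow, (if (p:ℝ) < 17*B'^4 then 3*A'^2 else (0:ℝ))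
      ≤ 3*A'^2 * (17*B'^4+1) := by
    have heq : ∑ p ∈ (N+1).primesBelow, (if (p:ℝ) < 17*B'^4 then 3*A'^2 else (0:ℝ))
        = ∑ p ∈ (N+1).primesBelow.filter (fun p : ℕ => (p:ℝ) < 17*B'^4), (3*A'^2) :=
      (Finset.sum_filter (fun p : ℕ => (p:ℝ) < 17*B'^4) (fun _ => 3*A'^2)).symm
    rw [heq, Finset.sum_const, nsmul_eq_mul]
    have hsub : (N+1).primesBelow.filter (fun p : ℕ => (p:ℝ) < 17*B'^4)
        ⊆ Finset.range ⌈(17*B'^4 : ℝ)⌉₊ := by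
      intro p hp
      rw [Finset.mem_filter] at hp
      exact Finset.mem_range.mpr (Nat.lt_ceil.mpr hp.2)
    have hcard := Finset.card_le_card hsub
    rw [Finset.card_range] at hcard
    have hceil : (⌈(17*B'^4 : ℝ)⌉₊ : ℝ) ≤ 17*B'^4 + 1 := (Nat.ceil_lt_add_one (by positivity)).le
    have hcR : ((((N+1).primesBelow.filter (fun p : ℕ => (p:ℝ) < 17*B'^4)).card : ℝ))
        ≤ 17*B'^4 + 1 := le_trans (by exact_mod_cast hcard) hceil
    have h3 : (0:ℝ) ≤ 3*A'^2 := by positivity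
    calc (((N+1).primesBelow.filter (fun p : ℕ => (p:ℝ) < 17*B'^4)).card : ℝ) * (3*A'^2)
        ≤ (17*B'^4+1) * (3*A'^2) := mul_le_mul_of_nonneg_right hcR h3
    _ = 3*A'^2 * (17*B'^4+1) := by ring
  have step6 : ∑ p ∈ (N+1).primesBelow, (B'^2 + 2*A'*B'^2) * (p:ℝ)⁻¹
      ≤ (B'^2 + 2*A'*B'^2) * (4*Real.log (Real.log N) + 8) := by
    rw [← Finset.mul_sum]
    refine mul_le_mul_of_nonneg_left ?_ (by positivity)
    have := PMaux.mertens hN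
    refine le_trans (le_of_eq ?_) this
    exact Finset.sum_congr rfl fun p _ => (one_div _).symm
  calc ∑ n ∈ Finset.Icc 1 N, ‖g n‖^2 * (n:ℝ)⁻¹
      ≤ Real.exp (∑ p ∈ (N+1).primesBelow, ∑' k, Fm A' B' θ (p^(k+1))) :=
        le_trans step1 (le_trans step2 step3)
  _ ≤ Real.exp (3*A'^2*(17*B'^4+1) + (B'^2 + 2*A'*B'^2) * (4*Real.log (Real.log N) + 8)) := by
      apply Real.exp_le_exp.mpr
      rw [Finset.sum_add_distrib] at step4
      refine le_trans step4 (add_le_add step5 step6)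
end PMaux3

namespace PMana

/-- exponential `e^{irt}` -/
def ee (r t : ℝ) : ℂ := Complex.exp (Complex.I * (r:ℂ) * (t:ℂ))

lemma ee_continuous (r : ℝ) : Continuous (fun t => ee r t) := by
  unfold ee
  exact Complex.continuous_exp.comp (by continuity)

lemma ee_conj (r t : ℝ) : (starRingEnd ℂ) (ee r t) = ee (-r) t := by
  unfold ee
  rw [← Complex.exp_conj]
  congr 1
  simp [Complex.conj_I]
  try ring

lemma ee_mul (r r' t : ℝ) : ee r t * ee r' t = ee (r + r') t := by
  unfold ee
  rw [← Complex.exp_add]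
  congr 1
  push_cast
  ring

lemma ee_zero (t : ℝ) : ee 0 t = 1 := by simp [ee]

lemma ee_norm (r t : ℝ) : ‖ee r t‖ = 1 := by
  unfold ee
  rw [Complex.norm_exp]
  have : (Complex.I * (r:ℂ) * (t:ℂ)).re = 0 := by simp
  rw [this, Real.exp_zero]

lemma ee_intervalIntegrable (r T T' : ℝ) : IntervalIntegrable (fun t => ee r t) volume T T' :=
  (ee_continuous r).intervalIntegrable T T'

lemma ee_integral_norm (r : ℝ) (hr : r ≠ 0) (T : ℝ) :
    ‖∫ t in T..(2*T), ee r t‖ ≤ 2 / |r| := by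
  have hc : Complex.I * (r:ℂ) ≠ 0 := by
    simp [Complex.I_ne_zero, Complex.ofReal_ne_zero, hr]
  have : (∫ t in T..(2*T), ee r t)
      = (Complex.exp (Complex.I * (r:ℂ) * (2*T:ℝ)) - Complex.exp (Complex.I * (r:ℂ) * (T:ℝ)))
        / (Complex.I * (r:ℂ)) := by
    rw [← integral_exp_mul_complex hc]
    rfl
  rw [this, norm_div]
  have h1 : ‖Complex.exp (Complex.I * (r:ℂ) * ((2*T:ℝ):ℂ))‖ = 1 := ee_norm r (2*T)
  have h2 : ‖Complex.exp (Complex.I * (r:ℂ) * ((T:ℝ):ℂ))‖ = 1 := ee_norm r T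
  have h3 : ‖Complex.I * (r:ℂ)‖ = |r| := by
    rw [norm_mul, Complex.norm_I, one_mul, Complex.norm_real]
    rfl
  rw [h3]
  have h4 : ‖Complex.exp (Complex.I * (r:ℂ) * ((2*T:ℝ):ℂ))
      - Complex.exp (Complex.I * (r:ℂ) * ((T:ℝ):ℂ))‖ ≤ 2 := by
    refine (norm_sub_le _ _).trans ?_
    rw [h1, h2]; norm_num
  have h5 : (0:ℝ) < |r| := abs_pos.mpr hr
  gcongr


variable (g : ℕ → ℂ) (x : ℝ)

/-- coefficient -/
def cf (g : ℕ → ℂ) (n : ℕ) : ℂ := g n * (n:ℂ) ^ (-(1/2:ℂ))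

lemma expand_term {n : ℕ} (hn : 1 ≤ n) (t : ℝ) :
    g n * (n:ℂ) ^ (-(1/2:ℂ) - Complex.I*(t:ℂ)) = cf g n * ee (-(Real.log n)) t := by
  have hn0 : (n:ℂ) ≠ 0 := Nat.cast_ne_zero.mpr (by omega)
  rw [cf, ee, mul_assoc]
  congr 1
  rw [sub_eq_add_neg, Complex.cpow_add _ _ hn0]
  congr 1
  rw [Complex.cpow_def_of_ne_zero hn0, ← Complex.natCast_log]
  congr 1
  push_cast
  ring

lemma partialSum_eq (t : ℝ) :
    partialSum g x t = ∑ n ∈ Finset.Icc 1 ⌊x⌋₊, cf g n * ee (-(Real.log n)) t := by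
  unfold partialSum
  refine Finset.sum_congr rfl fun n hn => ?_
  rw [Finset.mem_Icc] at hn
  exact expand_term g hn.1 t

lemma normsq_eq (t : ℝ) :
    ‖partialSum g x t‖^2
      = (∑ m ∈ Finset.Icc 1 ⌊x⌋₊, ∑ n ∈ Finset.Icc 1 ⌊x⌋₊,
          (cf g m * (starRingEnd ℂ) (cf g n)) * ee (Real.log n - Real.log m) t).re := by
  have key : (partialSum g x t) * (starRingEnd ℂ) (partialSum g x t)
      = ∑ m ∈ Finset.Icc 1 ⌊x⌋₊, ∑ n ∈ Finset.Icc 1 ⌊x⌋₊,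
          (cf g m * (starRingEnd ℂ) (cf g n)) * ee (Real.log n - Real.log m) t := by
    rw [partialSum_eq, map_sum, Finset.sum_mul_sum]
    refine Finset.sum_congr rfl fun m _ => Finset.sum_congr rfl fun n _ => ?_
    rw [map_mul, ee_conj]
    calc cf g m * ee (-(Real.log m)) t * ((starRingEnd ℂ) (cf g n) * ee (-(-(Real.log n))) t)
        = (cf g m * (starRingEnd ℂ) (cf g n)) * (ee (-(Real.log m)) t * ee (Real.log n) t) := by
          rw [neg_neg]; ring
    _ = (cf g m * (starRingEnd ℂ) (cf g n)) * ee (Real.log n - Real.log m) t := by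
          rw [ee_mul]; ring_nf
  rw [← key, Complex.mul_conj, Complex.normSq_eq_norm_sq]
  rw [Complex.ofReal_re]

lemma cf_normsq {n : ℕ} (hn : 1 ≤ n) :
    cf g n * (starRingEnd ℂ) (cf g n) = ((‖g n‖^2 * (n:ℝ)⁻¹ : ℝ) : ℂ) := by
  have hnR : (0:ℝ) < n := by exact_mod_cast hn
  rw [Complex.mul_conj, Complex.normSq_eq_norm_sq]
  congr 1
  rw [cf, norm_mul]
  have h1 : ‖(n:ℂ) ^ (-(1/2:ℂ))‖ = (n:ℝ) ^ ((-(1/2:ℂ)).re) := by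
    rw [show ((n:ℕ):ℂ) = (((n:ℝ)):ℂ) by push_cast; rfl]
    exact Complex.norm_cpow_eq_rpow_re_of_pos hnR _
  have h2 : ((-(1/2:ℂ)).re) = (-(1/2) : ℝ) := by simp
  rw [h1, h2, mul_pow]
  congr 1
  rw [← Real.rpow_natCast ((n:ℝ) ^ ((-(1/2)):ℝ)) 2, ← Real.rpow_mul hnR.le]
  norm_num
  exact Real.rpow_neg_one _

lemma meansq_bound :
    ∃ K : ℝ, 0 ≤ K ∧ ∀ T : ℝ,
      ∫ t in T..(2*T), ‖partialSum g x t‖^2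
        ≤ (∑ n ∈ Finset.Icc 1 ⌊x⌋₊, ‖g n‖^2 * (n:ℝ)⁻¹) * T + K := by
  set s := Finset.Icc 1 ⌊x⌋₊ with hs
  set D := ∑ n ∈ s, ‖g n‖^2 * (n:ℝ)⁻¹ with hD
  refine ⟨∑ m ∈ s, ∑ n ∈ s.erase m,
      ‖cf g m‖ * ‖cf g n‖ * (2 / |Real.log n - Real.log m|), ?_, ?_⟩
  · exact Finset.sum_nonneg fun m _ => Finset.sum_nonneg fun n _ => by positivity
  intro T
  set E : ℕ → ℕ → ℂ := fun m n => ∫ t in T..(2*T), ee (Real.log n - Real.log m) t with hE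
  set term : ℕ → ℕ → ℂ :=
    fun m n => (cf g m * (starRingEnd ℂ) (cf g n)) * E m n with hterm
  have hcont : ∀ m n : ℕ, Continuous
      (fun t => (cf g m * (starRingEnd ℂ) (cf g n)) * ee (Real.log n - Real.log m) t) :=
    fun m n => continuous_const.mul (ee_continuous _)
  have hFcont : Continuous (fun t => ∑ m ∈ s, ∑ n ∈ s,
      (cf g m * (starRingEnd ℂ) (cf g n)) * ee (Real.log n - Real.log m) t) :=
    continuous_finset_sum _ (fun m _ => continuous_finset_sum _ (fun n _ => hcont m n))
  have h4 : ∫ t in T..(2*T), ‖partialSum g x t‖^2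
      = (∫ t in T..(2*T), (∑ m ∈ s, ∑ n ∈ s,
          (cf g m * (starRingEnd ℂ) (cf g n)) * ee (Real.log n - Real.log m) t)).re := by
    calc ∫ t in T..(2*T), ‖partialSum g x t‖^2
        = ∫ t in T..(2*T), Complex.reCLM (∑ m ∈ s, ∑ n ∈ s,
            (cf g m * (starRingEnd ℂ) (cf g n)) * ee (Real.log n - Real.log m) t) := by
          refine intervalIntegral.integral_congr fun t _ => ?_
          rw [normsq_eq g x t]
          rfl
    _ = _ := by
          rw [ContinuousLinearMap.intervalIntegral_comp_comm _
            (hFcont.intervalIntegrable _ _)]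
          rfl
  have h5 : (∫ t in T..(2*T), (∑ m ∈ s, ∑ n ∈ s,
        (cf g m * (starRingEnd ℂ) (cf g n)) * ee (Real.log n - Real.log m) t))
      = ∑ m ∈ s, ∑ n ∈ s, term m n := by
    rw [intervalIntegral.integral_finset_sum
      (fun m _ => (continuous_finset_sum _ (fun n _ => hcont m n)).intervalIntegrable _ _)]
    refine Finset.sum_congr rfl fun m _ => ?_
    rw [intervalIntegral.integral_finset_sum
      (fun n _ => (hcont m n).intervalIntegrable _ _)]
    refine Finset.sum_congr rfl fun n _ => ?_
    have := intervalIntegral.integral_smul (μ := volume) (a := T) (b := 2*T)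
      (cf g m * (starRingEnd ℂ) (cf g n)) (fun t => ee (Real.log n - Real.log m) t)
    simpa [smul_eq_mul, hterm, hE] using this
  have hdiag : ∀ m ∈ s, term m m = ((‖g m‖^2 * (m:ℝ)⁻¹ * T : ℝ) : ℂ) := by
    intro m hm
    rw [Finset.mem_Icc] at hm
    have hEmm : E m m = ((T:ℝ):ℂ) := by
      rw [hE]
      simp only [sub_self]
      have : ∀ t : ℝ, ee 0 t = 1 := ee_zero
      rw [intervalIntegral.integral_congr (fun t _ => this t)]
      rw [intervalIntegral.integral_const]
      rw [Complex.real_smul]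
      push_cast
      ring
    simp only [hterm]
    rw [hEmm, cf_normsq g hm.1, ← Complex.ofReal_mul]
  have hsplit : ∑ m ∈ s, ∑ n ∈ s, term m n
      = ((D * T : ℝ):ℂ) + ∑ m ∈ s, ∑ n ∈ s.erase m, term m n := by
    have h1 : ∀ m ∈ s, ∑ n ∈ s, term m n = term m m + ∑ n ∈ s.erase m, term m n :=
      fun m hm => (Finset.add_sum_erase s (term m) hm).symm
    rw [Finset.sum_congr rfl h1, Finset.sum_add_distrib]
    congr 1
    rw [Finset.sum_congr rfl hdiag, hD, ← Complex.ofReal_sum]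
    push_cast
    rw [Finset.sum_mul]
  have hRre : (∑ m ∈ s, ∑ n ∈ s.erase m, term m n).re
      ≤ ∑ m ∈ s, ∑ n ∈ s.erase m, ‖cf g m‖ * ‖cf g n‖ * (2 / |Real.log n - Real.log m|) := by
    refine le_trans (Complex.re_le_norm _) ?_
    refine le_trans (norm_sum_le _ _) ?_
    refine Finset.sum_le_sum fun m hm => ?_
    refine le_trans (norm_sum_le _ _) ?_
    refine Finset.sum_le_sum fun n hn => ?_
    have hm1 : 1 ≤ m := (Finset.mem_Icc.mp hm).1
    have hn1 : 1 ≤ n := (Finset.mem_Icc.mp (Finset.mem_of_mem_erase hn)).1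
    have hne : n ≠ m := Finset.ne_of_mem_erase hn
    have hlog : Real.log n - Real.log m ≠ 0 := by
      intro h
      apply hne
      have hmR : (0:ℝ) < m := by exact_mod_cast hm1
      have hnR : (0:ℝ) < n := by exact_mod_cast hn1
      have : (n:ℝ) = (m:ℝ) := by
        rw [← Real.exp_log hnR, ← Real.exp_log hmR]
        rw [sub_eq_zero] at h
        rw [h]
      exact_mod_cast this
    simp only [hterm]
    rw [norm_mul, norm_mul, RCLike.norm_conj]
    refine mul_le_mul_of_nonneg_left ?_ (by positivity)
    exact ee_integral_norm _ hlog T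
  rw [h4, h5, hsplit, Complex.add_re, Complex.ofReal_re]
  have := hRre
  linarith

end PMana


lemma PM_rpow_point {a M q : ℝ} (ha : 0 ≤ a) (hM : 1 ≤ M) (hq0 : 0 < q) (hq1 : q ≤ 1) :
    a ^ q ≤ M ^ q + a * M ^ (q - 1) := by
  have hM0 : (0:ℝ) < M := by linarith
  rcases le_total a M with h | h
  · have h1 : a ^ q ≤ M ^ q := Real.rpow_le_rpow ha h hq0.le
    have h2 : 0 ≤ a * M ^ (q-1) := by positivity
    linarith
  · have ha0 : (0:ℝ) < a := lt_of_lt_of_le hM0 h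
    have h1 : a ^ q = a * a ^ (q - 1) := by
      have h2 := Real.rpow_add ha0 1 (q-1)
      rw [Real.rpow_one] at h2
      conv_lhs => rw [show q = 1 + (q-1) by ring]
      exact h2
    have h2 : a ^ (q-1) ≤ M ^ (q-1) := by
      have e1 : a ^ (q-1) = (a ^ (1-q))⁻¹ := by
        rw [← Real.rpow_neg ha0.le]; norm_num
      have e2 : M ^ (q-1) = (M ^ (1-q))⁻¹ := by
        rw [← Real.rpow_neg hM0.le]; norm_num
      rw [e1, e2]
      exact inv_anti₀ (Real.rpow_pos_of_pos hM0 _) (Real.rpow_le_rpow hM0.le h (by linarith))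
    have h3 : a * a ^ (q-1) ≤ a * M ^ (q-1) := mul_le_mul_of_nonneg_left h2 ha0.le
    have h4 : 0 ≤ M ^ q := (Real.rpow_pos_of_pos hM0 q).le
    linarith [h1 ▸ h3]

/-- Pseudomoments are bounded for very small `q`: there is `C > 0`
depending only on `A, B, θ` such that for all sufficiently large `x` and all
`0 < q ≤ 1/(log log x)`, `Ψ_{2q,g}(x) ≤ C`. -/
theorem pseudomoment_bounded_for_tiny_q
    (g : ℕ → ℂ) (A B θ : ℝ) (hA : 0 < A) (hB : 0 < B) (hθ0 : 0 < θ) (hθ : θ < 1 / 48)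
    (hmult : IsMult g) (hbound : GBound g A B θ) :
    ∃ C > 0, ∃ x₀ : ℝ, ∀ x : ℝ, x₀ ≤ x →
      ∀ q : ℝ, 0 < q → q ≤ 1 / Real.log (Real.log x) →
      ∀ Ψ : ℝ, IsPseudomoment g q x Ψ → Ψ ≤ C := by
  classical
  set A' := max A 1 with hA'
  set B' := max B 1 with hB'
  set c1 : ℝ := 3*A'^2*(17*B'^4+1) with hc1
  set c2 : ℝ := B'^2 + 2*A'*B'^2 with hc2
  have hA'1 : 1 ≤ A' := le_max_right _ _
  have hB'1 : 1 ≤ B' := le_max_right _ _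
  have hc1p : 0 < c1 := by rw [hc1]; positivity
  have hc2p : 0 < c2 := by rw [hc2]; positivity
  refine ⟨2 * Real.exp (c1 + 12*c2) + 1, by positivity, Real.exp (Real.exp 2) + 16, ?_⟩
  intro x hx q hq0 hq Ψ hΨ
  have hexp0 : (0:ℝ) < Real.exp (Real.exp 2) := Real.exp_pos _
  have hx16 : (16:ℝ) ≤ x := by linarith
  have hx0 : (0:ℝ) < x := by linarith
  set N := ⌊x⌋₊ with hN
  have hN16 : 16 ≤ N := Nat.le_floor (by exact_mod_cast hx16)
  have hNx : (N:ℝ) ≤ x := Nat.floor_le hx0.le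
  have hN0 : (0:ℝ) < N := by
    have : (16:ℝ) ≤ (N:ℝ) := by exact_mod_cast hN16
    linarith
  have hlogx : Real.exp 2 ≤ Real.log x := by
    have := Real.log_le_log hexp0 (by linarith : Real.exp (Real.exp 2) ≤ x)
    rwa [Real.log_exp] at this
  have hloglogx : 2 ≤ Real.log (Real.log x) := by
    have h7 : (2:ℝ) ≤ Real.exp 2 := by
      have := Real.add_one_le_exp (2:ℝ)
      linarith
    have := Real.log_le_log (Real.exp_pos 2) hlogx
    rwa [Real.log_exp] at this
  have hq1 : q ≤ 1/2 := by
    refine hq.trans ?_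
    rw [div_le_div_iff₀ (by linarith) (by norm_num)]
    linarith
  have hqll : q * Real.log (Real.log x) ≤ 1 := by
    have h := mul_le_mul_of_nonneg_right hq (by linarith : (0:ℝ) ≤ Real.log (Real.log x))
    rwa [one_div, inv_mul_cancel₀ (by linarith : Real.log (Real.log x) ≠ 0)] at h
  have hlogN : (0:ℝ) < Real.log N := by
    refine Real.log_pos ?_
    have : (16:ℝ) ≤ (N:ℝ) := by exact_mod_cast hN16
    linarith
  have hllN : Real.log (Real.log N) ≤ Real.log (Real.log x) :=
    Real.log_le_log hlogN (Real.log_le_log hN0 hNx)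
  set M := ∑ n ∈ Finset.Icc 1 N, ‖g n‖^2 * ((n:ℕ):ℝ)⁻¹ with hM
  have hM1 : 1 ≤ M := by
    have hmem : 1 ∈ Finset.Icc 1 N := Finset.mem_Icc.mpr ⟨le_refl 1, by omega⟩
    have := Finset.single_le_sum (f := fun n : ℕ => ‖g n‖^2 * ((n:ℕ):ℝ)⁻¹)
      (fun i _ => by positivity) hmem
    simpa [hmult.1] using this
  have hM0 : (0:ℝ) < M := by linarith
  have hMb : M ≤ Real.exp (c1 + c2 * (4*Real.log (Real.log N) + 8)) :=
    PMaux3.Mbound g hA hB hθ0 hθ.le hmult hbound (by omega)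
  have hMq : M ^ q ≤ Real.exp (c1 + 12*c2) := by
    have h1 : M ^ q ≤ (Real.exp (c1 + c2 * (4*Real.log (Real.log N) + 8))) ^ q :=
      Real.rpow_le_rpow hM0.le hMb hq0.le
    have h2 : (Real.exp (c1 + c2 * (4*Real.log (Real.log N) + 8))) ^ q
        = Real.exp ((c1 + c2 * (4*Real.log (Real.log N) + 8)) * q) :=
      (Real.exp_mul _ q).symm
    refine h1.trans (h2.le.trans (Real.exp_le_exp.mpr ?_))
    have hu : Real.log (Real.log N) * q ≤ 1 := by
      have h8 := mul_le_mul_of_nonneg_right hllN hq0.le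
      have h9 : Real.log (Real.log x) * q = q * Real.log (Real.log x) := mul_comm _ _
      linarith
    have e1 : c1 * q ≤ c1 := mul_le_of_le_one_right hc1p.le (by linarith)
    have e2 : c2 * q ≤ c2 := mul_le_of_le_one_right hc2p.le (by linarith)
    have e3 : c2 * (Real.log (Real.log N) * q) ≤ c2 :=
      le_trans (mul_le_mul_of_nonneg_left hu hc2p.le) (by linarith)
    have expand : (c1 + c2 * (4*Real.log (Real.log N) + 8)) * q
        = c1*q + 4*(c2*(Real.log (Real.log N) * q)) + 8*(c2*q) := by ring
    rw [expand]
    linarith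
  obtain ⟨K, hK0, hKb⟩ := PMana.meansq_bound g x
  have hPc : Continuous (partialSum g x) := by
    have : partialSum g x = fun t => ∑ n ∈ Finset.Icc 1 ⌊x⌋₊,
        PMana.cf g n * PMana.ee (-(Real.log n)) t := funext (PMana.partialSum_eq g x)
    rw [this]
    exact continuous_finset_sum _ (fun n _ => continuous_const.mul (PMana.ee_continuous _))
  have hev : ∀ T : ℝ, max K 1 ≤ T →
      (1 / T) * ∫ t in T..(2*T), ‖partialSum g x t‖ ^ (2*q) ≤ 2 * M ^ q + 1 := by
    intro T hT
    have hT1 : (1:ℝ) ≤ T := le_trans (le_max_right _ _) hT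
    have hTK : K ≤ T := le_trans (le_max_left _ _) hT
    have hT0 : (0:ℝ) < T := by linarith
    have hTle : T ≤ 2*T := by linarith
    have hpt : ∀ t : ℝ, ‖partialSum g x t‖ ^ (2*q)
        ≤ M ^ q + ‖partialSum g x t‖^2 * M ^ (q-1) := by
      intro t
      have h0 : (0:ℝ) ≤ ‖partialSum g x t‖ := norm_nonneg _
      have h1 : ‖partialSum g x t‖ ^ (2*q) = (‖partialSum g x t‖^(2:ℕ)) ^ q := by
        rw [← Real.rpow_natCast (‖partialSum g x t‖) 2, ← Real.rpow_mul h0]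
        norm_num
      rw [h1]
      exact PM_rpow_point (by positivity) hM1 hq0 (by linarith)
    have hi1 : IntervalIntegrable (fun t => ‖partialSum g x t‖ ^ (2*q)) volume T (2*T) := by
      apply Continuous.intervalIntegrable
      exact (hPc.norm).rpow_const (fun t => Or.inr (by positivity))
    have hcont2 : Continuous (fun t => ‖partialSum g x t‖^2 * M ^ (q-1)) :=
      ((hPc.norm.pow 2).mul continuous_const)
    have hi2 : IntervalIntegrable (fun t => M ^ q + ‖partialSum g x t‖^2 * M ^ (q-1))
        volume T (2*T) :=
      (continuous_const.add hcont2).intervalIntegrable _ _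
    have hmono := intervalIntegral.integral_mono_on hTle hi1 hi2 (fun t _ => hpt t)
    have hrhs : (∫ t in T..(2*T), (M ^ q + ‖partialSum g x t‖^2 * M ^ (q-1)))
        = M ^ q * T + (∫ t in T..(2*T), ‖partialSum g x t‖^2) * M ^ (q-1) := by
      rw [intervalIntegral.integral_add intervalIntegrable_const
        (hcont2.intervalIntegrable _ _),
        intervalIntegral.integral_const, intervalIntegral.integral_mul_const, smul_eq_mul]
      ring
    have hP2 := hKb T
    have hMq1 : M ^ (q-1) ≤ 1 := Real.rpow_le_one_of_one_le_of_nonpos hM1 (by linarith)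
    have hMq0 : 0 ≤ M ^ (q-1) := (Real.rpow_pos_of_pos hM0 _).le
    have hMqq : M ^ (q-1) * M = M ^ q := by
      have h3 := Real.rpow_add hM0 (q-1) 1
      rw [Real.rpow_one] at h3
      rw [← h3]
      norm_num
    have hint2 : (∫ t in T..(2*T), ‖partialSum g x t‖^2) * M ^ (q-1)
        ≤ (M*T + K) * M ^ (q-1) := mul_le_mul_of_nonneg_right hP2 hMq0
    have hchain : (∫ t in T..(2*T), ‖partialSum g x t‖ ^ (2*q))
        ≤ M^q*T + (M*T+K) * M^(q-1) := by
      rw [hrhs] at hmono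
      linarith
    rw [one_div, inv_mul_le_iff₀ hT0]
    have h5 : K*M^(q-1) ≤ K := by
      have := mul_le_mul_of_nonneg_left hMq1 hK0
      linarith
    have h6 : M^(q-1)*M*T = M^q*T := by rw [hMqq]
    calc (∫ t in T..(2*T), ‖partialSum g x t‖ ^ (2*q))
        ≤ M^q*T + (M*T+K)*M^(q-1) := hchain
    _ = M^q*T + M^(q-1)*M*T + K*M^(q-1) := by ring
    _ = M^q*T + M^q*T + K*M^(q-1) := by rw [h6]
    _ ≤ M^q*T + M^q*T + T := by linarith
    _ = T * (2*M^q + 1) := by ring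
  have hΨle : Ψ ≤ 2 * M ^ q + 1 :=
    le_of_tendsto hΨ (Filter.eventually_atTop.mpr ⟨max K 1, hev⟩)
  linarith
end
end

section
/- Let g : ℕ → ℂ be a multiplicative function satisfying |g(n)| ≤ min(A·n^θ, B^{Ω(n)}) for all n ≥ 1 (constants A, B > 0, fixed 0 < θ < 1/48), and suppose ∑_{p ≤ x, p prime} |g(p)|²/p = α·log log x + O(1) for a fixed constant α > 0. Let X be a Steinhaus random multiplicative function. There is a constant C > 0 such that for all sufficiently large x, with K = ⌊log log log x⌋, uniformly over integers 0 ≤ k ≤ K+1, reals T ≥ e^k/log x, and reals σ ≥ −2(k+1)/log x: ∫_T^{2T} E[|H_{k,σ}(t)|²] dt ≤ C·T·(e^{−k}·log x)^{α}. -/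
open MeasureTheory ProbabilityTheory Filter Finset
open scoped BigOperators Classical Real ENNReal

noncomputable section

lemma circle_ae_norm_one : ∀ᵐ z ∂circleMeasure, ‖z‖ = 1 := by
  rw [circleMeasure, ae_map_iff (by fun_prop)
    ((isClosed_eq continuous_norm continuous_const).measurableSet)]
  filter_upwards with θ
  simp [Complex.norm_exp]

lemma circle_is_prob : IsProbabilityMeasure circleMeasure := by
  constructor
  rw [circleMeasure, Measure.map_apply (by fun_prop) MeasurableSet.univ]
  simp [Real.volume_Ioc, ENNReal.inv_mul_cancel, ENNReal.ofReal_ne_top,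
    (by positivity : (0:ℝ) < 2 * Real.pi)]
  exact ENNReal.inv_mul_cancel (by simp [Real.pi_pos]) (ENNReal.mul_ne_top (by simp) ENNReal.ofReal_ne_top)

lemma circle_moment (m : ℕ) (hm : 1 ≤ m) : ∫ z, z ^ m ∂circleMeasure = 0 := by
  rw [circleMeasure, integral_map (by fun_prop) (by fun_prop), integral_smul_measure]
  have h1 : ∀ θ : ℝ, Complex.exp (θ * Complex.I) ^ m
      = Complex.exp ((m * Complex.I) * θ) := by
    intro θ
    rw [← Complex.exp_nat_mul]; ring_nf
  simp_rw [h1]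
  rw [← intervalIntegral.integral_of_le (by positivity),
    integral_exp_mul_complex (by simp [Complex.ext_iff]; intro h; omega)]
  have h2 : (m : ℂ) * Complex.I * (2 * Real.pi) = (m : ℤ) * (2 * Real.pi * Complex.I) := by
    push_cast; ring
  simp [h2, Complex.exp_int_mul_two_pi_mul_I]
section Bpiece
variable {Ωs : Type*} [MeasureSpace Ωs]

lemma steinhaus_norm_one {X : ℕ → Ωs → ℂ} (hX : IsSteinhaus X) {p : ℕ} (hp : p.Prime) :
    ∀ᵐ ω, ‖X p ω‖ = 1 := by
  have h := circle_ae_norm_one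
  rw [← hX.2.2.2.2 p hp] at h
  exact (ae_map_iff (hX.1 p).aemeasurable
    ((isClosed_eq continuous_norm continuous_const).measurableSet)).mp h

lemma steinhaus_moment {X : ℕ → Ωs → ℂ} (hX : IsSteinhaus X) {p : ℕ} (hp : p.Prime)
    {m : ℕ} (hm : 1 ≤ m) : ∫ ω, (X p ω) ^ m = 0 := by
  rw [← circle_moment m hm, ← hX.2.2.2.2 p hp,
    integral_map (hX.1 p).aemeasurable (by fun_prop)]

end Bpiece

/-- Replace `z` by `1` unless it has norm one. -/
def unitize (z : ℂ) : ℂ := if ‖z‖ = 1 then z else 1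

lemma unitize_norm (z : ℂ) : ‖unitize z‖ = 1 := by
  unfold unitize; split <;> simp_all

lemma measurable_unitize : Measurable unitize :=
  Measurable.ite ((isClosed_eq continuous_norm continuous_const).measurableSet)
    measurable_id measurable_const

lemma unitize_eq {z : ℂ} (h : ‖z‖ = 1) : unitize z = z := if_pos h

/-- The tail of the modified local factor. -/
def phiTail (c : ℕ → ℂ) (z : ℂ) : ℂ := ∑' j : ℕ, c j * (unitize z) ^ (j + 1)

/-- The modified local factor as a function on `ℂ`. -/
def phiFun (c : ℕ → ℂ) (z : ℂ) : ℂ := 1 + phiTail c z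

lemma norm_term_eq (c : ℕ → ℂ) (z : ℂ) (j : ℕ) :
    ‖c j * (unitize z) ^ (j + 1)‖ = ‖c j‖ := by
  rw [norm_mul, norm_pow, unitize_norm, one_pow, mul_one]

lemma summable_phi (c : ℕ → ℂ) (hc : Summable fun j => ‖c j‖) (z : ℂ) :
    Summable fun j : ℕ => c j * (unitize z) ^ (j + 1) := by
  apply Summable.of_norm
  simp only [norm_term_eq]; exact hc

lemma measurable_phiTail (c : ℕ → ℂ) (hc : Summable fun j => ‖c j‖) :
    Measurable (phiTail c) := by
  have h : ∀ z, Filter.Tendsto (fun N => ∑ j ∈ Finset.range N, c j * (unitize z) ^ (j + 1))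
      Filter.atTop (nhds (phiTail c z)) := by
    intro z
    exact (summable_phi c hc z).hasSum.tendsto_sum_nat
  refine measurable_of_tendsto_metrizable (fun N => ?_) (tendsto_pi_nhds.2 h)
  exact Finset.measurable_sum _ fun j _ => ((measurable_unitize.pow_const _).const_mul _)

lemma measurable_phiFun (c : ℕ → ℂ) (hc : Summable fun j => ‖c j‖) :
    Measurable (phiFun c) :=
  (measurable_phiTail c hc).const_add 1

lemma norm_phiTail_le (c : ℕ → ℂ) (hc : Summable fun j => ‖c j‖) (z : ℂ) :
    ‖phiTail c z‖ ≤ ∑' j, ‖c j‖ := by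
  refine (norm_tsum_le_tsum_norm ?_).trans_eq ?_
  · simp only [norm_term_eq]; exact hc
  · simp only [norm_term_eq]

lemma norm_phiFun_le (c : ℕ → ℂ) (hc : Summable fun j => ‖c j‖) (z : ℂ) :
    ‖phiFun c z‖ ≤ 1 + ∑' j, ‖c j‖ := by
  refine (norm_add_le _ _).trans ?_
  simp only [norm_one]
  gcongr
  exact norm_phiTail_le c hc z
section Cpiece
variable {Ωs : Type*} [MeasureSpace Ωs] [IsProbabilityMeasure (volume : Measure Ωs)]

lemma factor_moment {X : ℕ → Ωs → ℂ} (hX : IsSteinhaus X) {p : ℕ} (hp : p.Prime)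
    (c : ℕ → ℂ) (hc : Summable fun j => ‖c j‖) :
    ∫ ω, ‖phiFun c (X p ω)‖ ^ 2 ≤ 1 + (∑' j, ‖c j‖) ^ 2 := by
  set S := ∑' j, ‖c j‖ with hS
  set t : Ωs → ℂ := fun ω => phiTail c (X p ω) with ht
  have hSnn : 0 ≤ S := tsum_nonneg fun j => norm_nonneg _
  have hmt : Measurable t := (measurable_phiTail c hc).comp (hX.1 p)
  have hbt : ∀ ω, ‖t ω‖ ≤ S := fun ω => norm_phiTail_le c hc _
  have hIt : Integrable t := by
    refine Integrable.mono' (integrable_const S) hmt.aestronglyMeasurable ?_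
    filter_upwards with ω using hbt ω
  -- the expectation of the tail vanishes
  have hu : ∀ᵐ ω : Ωs, unitize (X p ω) = X p ω := by
    filter_upwards [steinhaus_norm_one hX hp] with ω h using unitize_eq h
  have hEt : ∫ ω, t ω = 0 := by
    have h1 : ∫ ω, t ω = ∑' j : ℕ, ∫ ω, c j * (unitize (X p ω)) ^ (j + 1) := by
      rw [ht]
      simp only [phiTail]
      refine integral_tsum (fun j => ?_) ?_
      · exact (((measurable_unitize.comp (hX.1 p)).pow_const _).const_mul _).aestronglyMeasurable
      · have hj : ∀ j : ℕ, ∫⁻ ω, ‖c j * (unitize (X p ω)) ^ (j + 1)‖ₑ = (‖c j‖₊ : ℝ≥0∞) := by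
          intro j
          have : ∀ ω : Ωs, (‖c j * (unitize (X p ω)) ^ (j + 1)‖ₑ : ℝ≥0∞) = (‖c j‖₊ : ℝ≥0∞) := by
            intro ω
            rw [enorm_eq_nnnorm]
            congr 1
            ext
            exact norm_term_eq c (X p ω) j
          simp_rw [this]
          simp
        simp_rw [hj]
        rw [ENNReal.tsum_coe_ne_top_iff_summable]
        exact NNReal.summable_coe.mp (by simpa [coe_nnnorm] using hc)
    rw [h1]
    have h2 : ∀ j : ℕ, ∫ ω, c j * (unitize (X p ω)) ^ (j + 1) = 0 := by
      intro j
      have : ∫ ω, c j * (unitize (X p ω)) ^ (j + 1) = c j * ∫ ω, (unitize (X p ω)) ^ (j + 1) :=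
        integral_const_mul _ _
      rw [this]
      have h3 : ∫ ω, (unitize (X p ω)) ^ (j + 1) = ∫ ω, (X p ω) ^ (j + 1) := by
        refine integral_congr_ae ?_
        filter_upwards [hu] with ω h using by rw [h]
      rw [h3, steinhaus_moment hX hp (Nat.le_add_left 1 j), mul_zero]
    simp_rw [h2]
    exact tsum_zero
  -- expand the square
  have expand : ∀ ω, ‖phiFun c (X p ω)‖ ^ 2 = 1 + 2 * (t ω).re + Complex.normSq (t ω) := by
    intro ω
    have h1 : ‖phiFun c (X p ω)‖ ^ 2 = Complex.normSq (1 + t ω) := by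
      rw [Complex.normSq_eq_norm_sq]
      rfl
    rw [h1, Complex.normSq_add]
    simp [Complex.normSq_one, Complex.conj_re]
    ring
  have hmre : Measurable fun ω => (t ω).re := Complex.measurable_re.comp hmt
  have hIre : Integrable fun ω => 2 * (t ω).re := by
    refine Integrable.const_mul ?_ 2
    refine Integrable.mono' (integrable_const S) hmre.aestronglyMeasurable ?_
    filter_upwards with ω
    exact (Complex.abs_re_le_norm (t ω)).trans (hbt ω)
  have hInsq : Integrable fun ω => Complex.normSq (t ω) := by
    refine Integrable.mono' (integrable_const (S ^ 2))
      (Complex.continuous_normSq.measurable.comp hmt).aestronglyMeasurable ?_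
    filter_upwards with ω
    rw [Real.norm_eq_abs, abs_of_nonneg (Complex.normSq_nonneg _), Complex.normSq_eq_norm_sq]
    exact pow_le_pow_left₀ (norm_nonneg _) (hbt ω) 2
  have hbnsq : ∀ ω, Complex.normSq (t ω) ≤ S ^ 2 := by
    intro ω
    rw [Complex.normSq_eq_norm_sq]
    exact pow_le_pow_left₀ (norm_nonneg _) (hbt ω) 2
  calc ∫ ω, ‖phiFun c (X p ω)‖ ^ 2
      = ∫ ω, (1 + 2 * (t ω).re + Complex.normSq (t ω)) :=
        integral_congr_ae (Filter.Eventually.of_forall expand)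
    _ = (∫ ω, (1 + 2 * (t ω).re)) + ∫ ω, Complex.normSq (t ω) :=
        integral_add ((integrable_const 1).add hIre) hInsq
    _ = (1 + 2 * (∫ ω, (t ω).re)) + ∫ ω, Complex.normSq (t ω) := by
        rw [integral_add (integrable_const 1) hIre, integral_const_mul]
        simp
    _ ≤ (1 + 2 * (∫ ω, (t ω).re)) + S ^ 2 := by
        gcongr
        exact (integral_mono hInsq (integrable_const _) hbnsq).trans (by simp)
    _ = 1 + S ^ 2 := by
        have h4 : ∫ ω, (t ω).re = 0 := by
          have h5 := ContinuousLinearMap.integral_comp_comm Complex.reCLM hIt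
          simpa [hEt, Complex.reCLM_apply] using h5
        rw [h4]
        ring

end Cpiece
lemma integral_finset_prod_of_indep {ι : Type*} {Ωs : Type*} [MeasureSpace Ωs]
    [IsProbabilityMeasure (volume : Measure Ωs)] {f : ι → Ωs → ℝ}
    (hind : iIndepFun f volume)
    (hmeas : ∀ i, Measurable (f i)) (hint : ∀ i, Integrable (f i)) (Q : Finset ι) :
    Integrable (fun ω => ∏ q ∈ Q, f q ω) ∧
      (∫ ω, ∏ q ∈ Q, f q ω) = ∏ q ∈ Q, ∫ ω, f q ω := by
  classical
  induction Q using Finset.induction with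
  | empty => simp
  | @insert a s ha ih =>
    obtain ⟨ihInt, ihEq⟩ := ih
    have hindep : IndepFun (∏ j ∈ s, f j) (f a) volume :=
      hind.indepFun_finset_prod_of_notMem hmeas ha
    have hprodeq : (fun ω => ∏ j ∈ s, f j ω) = ∏ j ∈ s, f j := by
      funext ω; simp [Finset.prod_apply]
    have hindep' : IndepFun (f a) (fun ω => ∏ j ∈ s, f j ω) volume := by
      rw [hprodeq]; exact hindep.symm
    have hInt2 : Integrable (f a * fun ω => ∏ j ∈ s, f j ω) :=
      hindep'.integrable_mul (hint a) ihInt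
    constructor
    · refine hInt2.congr (Filter.Eventually.of_forall fun ω => ?_)
      simp [Finset.prod_insert ha]
    · have h1 : (fun ω => ∏ q ∈ insert a s, f q ω)
          = f a * fun ω => ∏ j ∈ s, f j ω := by
        funext ω; simp [Finset.prod_insert ha]
      rw [h1, Finset.prod_insert ha, ← ihEq]
      exact hindep'.integral_mul_eq_mul_integral (hint a).aestronglyMeasurable ihInt.aestronglyMeasurable
lemma exp_sub_one_le' (u : ℝ) : Real.exp u - 1 ≤ u * Real.exp u := by
  have h1 : Real.exp (-u) * Real.exp u = 1 := by rw [← Real.exp_add]; simp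
  have h2 : (1 - u) ≤ Real.exp (-u) := by linarith [Real.add_one_le_exp (-u)]
  have h3 : (1 - u) * Real.exp u ≤ Real.exp (-u) * Real.exp u :=
    mul_le_mul_of_nonneg_right h2 (Real.exp_pos u).le
  nlinarith [h3, h1]

lemma sum_log_sub_le : ∀ J : ℕ, ∑ i ∈ Finset.Icc 1 J, (Real.log J - Real.log i) ≤ J := by
  intro J
  induction J with
  | zero => simp
  | succ J ih =>
    rcases Nat.eq_zero_or_pos J with h0 | hJpos
    · subst h0; norm_num
    have hJ1 : (1 : ℝ) ≤ J := by exact_mod_cast hJpos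
    have hd : Real.log (J + 1 : ℕ) - Real.log J ≤ 1 / J := by
      push_cast
      rw [← Real.log_div (by positivity) (by positivity)]
      calc Real.log ((J + 1) / J) ≤ (J + 1) / (J : ℝ) - 1 :=
            Real.log_le_sub_one_of_pos (by positivity)
        _ = 1 / J := by field_simp; ring
    rw [Finset.sum_Icc_succ_top (by omega : 1 ≤ J + 1)]
    simp only [sub_self, add_zero]
    calc ∑ i ∈ Finset.Icc 1 J, (Real.log (J + 1 : ℕ) - Real.log i)
        = ∑ i ∈ Finset.Icc 1 J, ((Real.log J - Real.log i)
            + (Real.log (J + 1 : ℕ) - Real.log J)) :=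
          Finset.sum_congr rfl (fun i _ => by ring)
      _ = (∑ i ∈ Finset.Icc 1 J, (Real.log J - Real.log i))
          + (Finset.Icc 1 J).card • (Real.log (J + 1 : ℕ) - Real.log J) := by
          rw [Finset.sum_add_distrib, Finset.sum_const]
      _ ≤ J + J * (1 / J) := by
          have hcard : (Finset.Icc 1 J).card = J := by
            rw [Nat.card_Icc]; omega
          rw [hcard, nsmul_eq_mul]
          have hmul := mul_le_mul_of_nonneg_left hd (by positivity : (0:ℝ) ≤ (J:ℝ))
          linarith
      _ ≤ (J + 1 : ℕ) := by
          rw [mul_one_div, div_self (by positivity)]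
          push_cast; linarith
lemma exp_three_gt_sixteen : (16:ℝ) < Real.exp 3 := by
  have h1 : Real.exp 3 = (Real.exp 1) ^ (3:ℕ) := by
    rw [← Real.exp_nat_mul]; norm_num
  have h2 : (2.7:ℝ) ≤ Real.exp 1 := by linarith [Real.exp_one_gt_d9]
  rw [h1]
  calc (16:ℝ) < 2.7 ^ (3:ℕ) := by norm_num
    _ ≤ Real.exp 1 ^ (3:ℕ) := pow_le_pow_left₀ (by norm_num) h2 3

set_option maxHeartbeats 1000000 in
lemma partial_summation (g : ℕ → ℂ) (α Csel : ℝ) (hα : 0 < α) (hCsel : 0 < Csel)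
    (hs : ∀ u : ℝ, 16 ≤ u →
      |(∑ p ∈ primesUpTo u, ‖g p‖ ^ 2 / (p : ℝ)) - α * Real.log (Real.log u)| ≤ Csel) :
    ∀ y : ℝ, Real.exp 16 ≤ y →
      ∑ p ∈ primesUpTo y, (‖g p‖ ^ 2 / (p : ℝ)) * Real.log p
        ≤ (10 * (α + Csel + 1)) * Real.log y := by
  intro y hy
  have hy1 : (17:ℝ) ≤ y :=
    le_trans (show (17:ℝ) ≤ Real.exp 16 by linarith [Real.add_one_le_exp (16:ℝ)]) hy
  have hy0 : (0:ℝ) < y := by linarith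
  have hLy : (16:ℝ) ≤ Real.log y := by
    rw [← Real.log_exp 16]
    exact Real.log_le_log (Real.exp_pos _) hy
  set L := Real.log y with hL
  set J := ⌊L⌋₊ with hJdef
  have hJ16 : 16 ≤ J := Nat.le_floor (by exact_mod_cast hLy)
  have hJL : (J:ℝ) ≤ L := Nat.floor_le (by linarith)
  have hLJ1 : L < J + 1 := Nat.lt_floor_add_one L
  have hJ1 : (1:ℝ) ≤ (J:ℝ) := by
    have : (16:ℝ) ≤ (J:ℝ) := by exact_mod_cast hJ16
    linarith
  set W : ℕ → ℝ := fun p => ‖g p‖ ^ 2 / (p:ℝ) with hWdef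
  have hW : ∀ p, 0 ≤ W p := fun p => by positivity
  set P := primesUpTo y with hPdef
  have hmemP : ∀ p ∈ P, p.Prime ∧ (p:ℝ) ≤ y := by
    intro p hp
    simp only [hPdef, primesUpTo, Finset.mem_filter] at hp
    exact hp.2
  -- step 1 : log p ≤ 1 + ∑_j 1_{e^j ≤ p}
  have hlogp : ∀ p ∈ P, Real.log p
      ≤ 1 + ∑ j ∈ Finset.Icc 1 J, (if Real.exp j ≤ (p:ℝ) then (1:ℝ) else 0) := by
    intro p hp
    obtain ⟨hpp, hpy⟩ := hmemP p hp
    have hppos : (0:ℝ) < p := by exact_mod_cast hpp.pos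
    have hp0 : (0:ℝ) ≤ Real.log p := Real.log_nonneg (by exact_mod_cast hpp.one_lt.le)
    set m := ⌊Real.log p⌋₊ with hm
    have hmJ : m ≤ J := Nat.floor_mono (Real.log_le_log hppos hpy)
    have hfilter : (Finset.Icc 1 J).filter (fun j : ℕ => Real.exp j ≤ (p:ℝ)) = Finset.Icc 1 m := by
      ext j
      simp only [Finset.mem_filter, Finset.mem_Icc]
      constructor
      · rintro ⟨⟨h1, _⟩, h3⟩
        refine ⟨h1, Nat.le_floor ?_⟩
        calc (j:ℝ) = Real.log (Real.exp j) := (Real.log_exp _).symm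
          _ ≤ Real.log p := Real.log_le_log (Real.exp_pos _) h3
      · rintro ⟨h1, h2⟩
        refine ⟨⟨h1, le_trans h2 hmJ⟩, ?_⟩
        have hjm : (j:ℝ) ≤ Real.log p :=
          le_trans (by exact_mod_cast h2) (Nat.floor_le hp0)
        calc Real.exp (j:ℝ) ≤ Real.exp (Real.log p) := Real.exp_le_exp.mpr hjm
          _ = p := Real.exp_log hppos
    have hsum : ∑ j ∈ Finset.Icc 1 J, (if Real.exp j ≤ (p:ℝ) then (1:ℝ) else 0) = m := by
      rw [Finset.sum_boole, hfilter, Nat.card_Icc]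
      simp
    have hm1 : Real.log p < m + 1 := Nat.lt_floor_add_one _
    rw [hsum]; linarith
  -- step 2/3 : swap sums
  have hswap : ∑ p ∈ P, W p * Real.log p
      ≤ (∑ p ∈ P, W p)
        + ∑ j ∈ Finset.Icc 1 J, ∑ p ∈ P.filter (fun p : ℕ => Real.exp j ≤ (p:ℝ)), W p := by
    calc ∑ p ∈ P, W p * Real.log p
        ≤ ∑ p ∈ P, (W p + ∑ j ∈ Finset.Icc 1 J, (if Real.exp j ≤ (p:ℝ) then W p else 0)) := by
          refine Finset.sum_le_sum fun p hp => ?_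
          have h2 : W p * Real.log p
              ≤ W p * (1 + ∑ j ∈ Finset.Icc 1 J, (if Real.exp j ≤ (p:ℝ) then (1:ℝ) else 0)) :=
            mul_le_mul_of_nonneg_left (hlogp p hp) (hW p)
          refine h2.trans_eq ?_
          rw [mul_add, mul_one, Finset.mul_sum]
          congr 1
          exact Finset.sum_congr rfl fun j _ => by split <;> simp
      _ = (∑ p ∈ P, W p)
          + ∑ p ∈ P, ∑ j ∈ Finset.Icc 1 J, (if Real.exp j ≤ (p:ℝ) then W p else 0) :=
          Finset.sum_add_distrib
      _ = (∑ p ∈ P, W p)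
          + ∑ j ∈ Finset.Icc 1 J, ∑ p ∈ P, (if Real.exp j ≤ (p:ℝ) then W p else 0) := by
          rw [Finset.sum_comm]
      _ = _ := by
          congr 1
          exact Finset.sum_congr rfl fun j _ => (Finset.sum_filter _ _).symm
  -- Selberg bounds
  have hy16 : (16:ℝ) ≤ y := by linarith
  have hSy : ∑ p ∈ P, W p ≤ α * Real.log L + Csel := by
    have h := (abs_le.mp (hs y hy16)).2
    linarith
  have hSynn : 0 ≤ ∑ p ∈ P, W p := Finset.sum_nonneg fun p _ => hW p
  -- step 4 : inner bound for j ≥ 4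
  have hinner : ∀ j : ℕ, 4 ≤ j → j ≤ J →
      ∑ p ∈ P.filter (fun p : ℕ => Real.exp j ≤ (p:ℝ)), W p
        ≤ α * (Real.log ((J:ℝ) + 1) - Real.log (j:ℝ) + 1) + 2 * Csel := by
    intro j hj4 hjJ
    have hj4R : (4:ℝ) ≤ (j:ℝ) := by exact_mod_cast hj4
    have hjJR : (j:ℝ) ≤ (J:ℝ) := by exact_mod_cast hjJ
    set u := Real.exp ((j:ℝ) - 1) with hu
    have hu16 : (16:ℝ) ≤ u := by
      rw [hu]
      calc (16:ℝ) ≤ Real.exp 3 := exp_three_gt_sixteen.le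
        _ ≤ Real.exp ((j:ℝ) - 1) := Real.exp_le_exp.mpr (by linarith)
    have hsub : primesUpTo u ⊆ P.filter (fun p : ℕ => ¬ Real.exp j ≤ (p:ℝ)) := by
      intro p hp
      simp only [primesUpTo, Finset.mem_filter, Finset.mem_range] at hp
      obtain ⟨_, hpp, hpu⟩ := hp
      have hpy : (p:ℝ) ≤ y := by
        calc (p:ℝ) ≤ u := hpu
          _ ≤ Real.exp L := Real.exp_le_exp.mpr (by linarith)
          _ = y := Real.exp_log hy0
      have hplt : (p:ℝ) < Real.exp j := by
        have : u < Real.exp j := Real.exp_lt_exp.mpr (by linarith)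
        linarith
      simp only [hPdef, primesUpTo, Finset.mem_filter, Finset.mem_range]
      exact ⟨⟨Nat.lt_succ_of_le (Nat.le_floor hpy), hpp, hpy⟩, by linarith⟩
    have hmono : ∑ p ∈ primesUpTo u, W p
        ≤ ∑ p ∈ P.filter (fun p : ℕ => ¬ Real.exp j ≤ (p:ℝ)), W p :=
      Finset.sum_le_sum_of_subset_of_nonneg hsub fun p _ _ => hW p
    have hsplitP := Finset.sum_filter_add_sum_filter_not P (fun p : ℕ => Real.exp j ≤ (p:ℝ)) W
    have hSu : α * Real.log (Real.log u) - Csel ≤ ∑ p ∈ primesUpTo u, W p := by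
      have h := (abs_le.mp (hs u hu16)).1
      linarith
    have hloglogu : Real.log (Real.log u) = Real.log ((j:ℝ) - 1) := by
      rw [hu, Real.log_exp]
    -- log j ≤ log (j-1) + 1
    have hlogj : Real.log (j:ℝ) ≤ Real.log ((j:ℝ) - 1) + 1 := by
      have h1 : (j:ℝ) ≤ Real.exp 1 * ((j:ℝ) - 1) := by
        have h2 : (2:ℝ) ≤ Real.exp 1 := by
          have := Real.exp_one_gt_d9; linarith
        nlinarith
      calc Real.log (j:ℝ) ≤ Real.log (Real.exp 1 * ((j:ℝ) - 1)) :=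
            Real.log_le_log (by linarith) h1
        _ = 1 + Real.log ((j:ℝ) - 1) := by
            rw [Real.log_mul (Real.exp_ne_zero 1) (by linarith), Real.log_exp]
        _ = Real.log ((j:ℝ) - 1) + 1 := by ring
    have hlogL : Real.log L ≤ Real.log ((J:ℝ) + 1) :=
      Real.log_le_log (by linarith) (by linarith)
    rw [hloglogu] at hSu
    have e1 : α * Real.log L ≤ α * Real.log ((J:ℝ) + 1) :=
      mul_le_mul_of_nonneg_left hlogL hα.le
    have e2 : α * Real.log (j:ℝ) ≤ α * Real.log ((j:ℝ) - 1) + α := by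
      calc α * Real.log (j:ℝ) ≤ α * (Real.log ((j:ℝ) - 1) + 1) :=
            mul_le_mul_of_nonneg_left hlogj hα.le
        _ = α * Real.log ((j:ℝ) - 1) + α := by ring
    have key : α * (Real.log ((J:ℝ) + 1) - Real.log (j:ℝ) + 1)
        = α * Real.log ((J:ℝ) + 1) - α * Real.log (j:ℝ) + α := by ring
    rw [key]
    linarith [hSy, hSu, hmono, hsplitP, e1, e2]
  -- step 5 : combine
  have hIoc : Finset.Icc 1 J = Finset.Ioc 0 J := by
    rw [← Finset.Icc_add_one_left_eq_Ioc, zero_add]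
  set F : ℕ → ℝ := fun j => ∑ p ∈ P.filter (fun p : ℕ => Real.exp j ≤ (p:ℝ)), W p with hF
  have hFnn : ∀ j, 0 ≤ F j := fun j => Finset.sum_nonneg fun p _ => hW p
  have hFle : ∀ j, F j ≤ ∑ p ∈ P, W p := fun j =>
    Finset.sum_le_sum_of_subset_of_nonneg (Finset.filter_subset _ _) fun p _ _ => hW p
  have hsplitJ : ∑ j ∈ Finset.Ioc 0 J, F j
      = ∑ j ∈ Finset.Ioc 0 3, F j + ∑ j ∈ Finset.Ioc 3 J, F j :=
    (Finset.sum_Ioc_consecutive _ (by omega) (by omega)).symm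
  have hsmall : ∑ j ∈ Finset.Ioc 0 3, F j ≤ 3 * (∑ p ∈ P, W p) := by
    calc ∑ j ∈ Finset.Ioc 0 3, F j ≤ ∑ j ∈ Finset.Ioc 0 3, (∑ p ∈ P, W p) :=
          Finset.sum_le_sum fun j _ => hFle j
      _ = 3 * (∑ p ∈ P, W p) := by simp [mul_comm]
  have hbig : ∑ j ∈ Finset.Ioc 3 J, F j
      ≤ α * (∑ j ∈ Finset.Ioc 3 J, (Real.log ((J:ℝ) + 1) - Real.log (j:ℝ) + 1))
        + 2 * Csel * J := by
    calc ∑ j ∈ Finset.Ioc 3 J, F j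
        ≤ ∑ j ∈ Finset.Ioc 3 J, (α * (Real.log ((J:ℝ) + 1) - Real.log (j:ℝ) + 1) + 2 * Csel) := by
          refine Finset.sum_le_sum fun j hj => ?_
          rw [Finset.mem_Ioc] at hj
          exact hinner j (by omega) hj.2
      _ = α * (∑ j ∈ Finset.Ioc 3 J, (Real.log ((J:ℝ) + 1) - Real.log (j:ℝ) + 1))
          + (Finset.Ioc 3 J).card * (2 * Csel) := by
          rw [Finset.sum_add_distrib, Finset.mul_sum, Finset.sum_const, nsmul_eq_mul]
      _ ≤ _ := by
          have hcard : ((Finset.Ioc 3 J).card : ℝ) ≤ (J:ℝ) := by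
            rw [Nat.card_Ioc]; exact_mod_cast Nat.sub_le J 3
          have h2 : (0:ℝ) ≤ 2 * Csel := by linarith
          nlinarith [hcard, h2]
  -- the log-sum bound
  have hlogsum : ∑ j ∈ Finset.Ioc 3 J, (Real.log ((J:ℝ) + 1) - Real.log (j:ℝ) + 1) ≤ 3 * J := by
    have hlogJ1 : Real.log ((J:ℝ) + 1) ≤ Real.log (J:ℝ) + 1 := by
      have h1 : (J:ℝ) + 1 ≤ Real.exp 1 * (J:ℝ) := by
        have h2 : (2:ℝ) ≤ Real.exp 1 := by have := Real.exp_one_gt_d9; linarith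
        nlinarith
      calc Real.log ((J:ℝ) + 1) ≤ Real.log (Real.exp 1 * (J:ℝ)) :=
            Real.log_le_log (by linarith) h1
        _ = Real.log (J:ℝ) + 1 := by
            rw [Real.log_mul (Real.exp_ne_zero 1) (by linarith), Real.log_exp]; ring
    have hsubIcc : Finset.Ioc 3 J ⊆ Finset.Icc 1 J := by
      intro j hj; rw [Finset.mem_Ioc] at hj; rw [Finset.mem_Icc]; omega
    have hterm : ∀ j ∈ Finset.Icc 1 J, (0:ℝ) ≤ Real.log (J:ℝ) - Real.log (j:ℝ) := by
      intro j hj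
      rw [Finset.mem_Icc] at hj
      have : (j:ℝ) ≤ (J:ℝ) := by exact_mod_cast hj.2
      have hj0 : (0:ℝ) < (j:ℝ) := by exact_mod_cast hj.1
      have := Real.log_le_log hj0 this
      linarith
    calc ∑ j ∈ Finset.Ioc 3 J, (Real.log ((J:ℝ) + 1) - Real.log (j:ℝ) + 1)
        ≤ ∑ j ∈ Finset.Ioc 3 J, ((Real.log (J:ℝ) - Real.log (j:ℝ)) + 2) := by
          refine Finset.sum_le_sum fun j _ => ?_
          linarith [hlogJ1]
      _ = (∑ j ∈ Finset.Ioc 3 J, (Real.log (J:ℝ) - Real.log (j:ℝ)))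
          + (Finset.Ioc 3 J).card * 2 := by
          rw [Finset.sum_add_distrib, Finset.sum_const, nsmul_eq_mul]
      _ ≤ (∑ j ∈ Finset.Icc 1 J, (Real.log (J:ℝ) - Real.log (j:ℝ))) + (J:ℝ) * 2 := by
          have h1 : ((Finset.Ioc 3 J).card : ℝ) ≤ (J:ℝ) := by
            rw [Nat.card_Ioc]; exact_mod_cast Nat.sub_le J 3
          have h2 := Finset.sum_le_sum_of_subset_of_nonneg hsubIcc fun j hj _ => hterm j hj
          linarith
      _ ≤ (J:ℝ) + (J:ℝ) * 2 := by linarith [sum_log_sub_le J]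
      _ = 3 * J := by ring
  -- final numeric combination
  have hlogL2 : Real.log L ≤ (J:ℝ) := by
    calc Real.log L ≤ L - 1 := Real.log_le_sub_one_of_pos (by linarith)
      _ ≤ (J:ℝ) := by linarith
  have htot : ∑ p ∈ P, W p * Real.log p
      ≤ 4 * (α * (J:ℝ) + Csel) + 3 * α * (J:ℝ) + 2 * Csel * (J:ℝ) := by
    have hSy2 : ∑ p ∈ P, W p ≤ α * (J:ℝ) + Csel := by
      have := mul_le_mul_of_nonneg_left hlogL2 hα.le
      linarith [hSy]
    have h1 : ∑ j ∈ Finset.Icc 1 J, F j ≤ 3 * (∑ p ∈ P, W p) + (3 * α * (J:ℝ) + 2 * Csel * (J:ℝ)) := by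
      rw [hIoc, hsplitJ]
      have := mul_le_mul_of_nonneg_left hlogsum hα.le
      linarith [hsmall, hbig]
    have := hswap
    rw [hF] at h1
    nlinarith [hSy2, h1, this]
  refine htot.trans ?_
  have hJL' : (J:ℝ) ≤ L := hJL
  have h16L : (16:ℝ) ≤ L := hLy
  nlinarith [hα.le, hCsel.le, hJL', h16L]
lemma two_rpow_bound : (2:ℝ) ^ (-(11/24:ℝ)) ≤ 7/8 := by
  have h1 : (8/7:ℝ) ≤ 2 ^ ((11/24:ℝ)) := by
    have h24 : ((8/7:ℝ)) ^ (24:ℕ) ≤ ((2:ℝ) ^ ((11/24:ℝ))) ^ (24:ℕ) := by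
      have : ((2:ℝ) ^ ((11/24:ℝ))) ^ (24:ℕ) = (2:ℝ) ^ (11:ℕ) := by
        rw [← Real.rpow_natCast ((2:ℝ) ^ ((11/24:ℝ))) 24, ← Real.rpow_mul (by norm_num)]
        norm_num
      rw [this]
      norm_num
    exact le_of_pow_le_pow_left₀ (by norm_num) (Real.rpow_nonneg (by norm_num) _) h24
  rw [Real.rpow_neg (by norm_num)]
  calc ((2:ℝ) ^ ((11/24:ℝ)))⁻¹ ≤ ((8:ℝ)/7)⁻¹ := by
        apply inv_anti₀ (by norm_num) h1
    _ ≤ 7/8 := by norm_num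

section Fpiece
variable {Ωs : Type*} [MeasureSpace Ωs] [IsProbabilityMeasure (volume : Measure Ωs)]

lemma local_factor_bound (g : ℕ → ℂ) (A B θ : ℝ) (hA : 0 < A) (hθ0 : 0 < θ)
    (hbound : GBound g A B θ) {X : ℕ → Ωs → ℂ} (hX : IsSteinhaus X)
    (p : ℕ) (hp : p.Prime) (σ' t : ℝ) (hσ'1 : θ - σ' ≤ -(11/24)) (hσ'2 : 0 < σ') :
    (∫ ω, ‖eulerFactor g X p (((σ' : ℝ) : ℂ) + (t : ℂ) * Complex.I) ω‖ ^ 2)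
      ≤ 1 + (‖g p‖ * (p:ℝ) ^ (-σ') + 8 * A * (p:ℝ) ^ (-(11/12 : ℝ))) ^ 2 := by
  have hp2 : (2:ℝ) ≤ (p:ℝ) := by exact_mod_cast hp.two_le
  have hp0 : (0:ℝ) < (p:ℝ) := by linarith
  have hp1 : (1:ℝ) ≤ (p:ℝ) := by linarith
  set s : ℂ := (((σ' : ℝ) : ℂ) + (t : ℂ) * Complex.I) with hs
  set c : ℕ → ℂ := fun j => g (p ^ (j+1)) * (p:ℂ) ^ (-(((j:ℂ) + 1) * s)) with hc
  -- norm of coefficients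
  have hre : ∀ j : ℕ, (-(((j:ℂ) + 1) * s)).re = -(((j:ℝ) + 1) * σ') := by
    intro j
    simp [hs, Complex.mul_re, Complex.add_re, Complex.add_im, Complex.mul_im]
  have hnorm : ∀ j : ℕ, ‖c j‖ = ‖g (p ^ (j+1))‖ * (p:ℝ) ^ (-(((j:ℝ) + 1) * σ')) := by
    intro j
    rw [hc]
    simp only [norm_mul]
    congr 1
    have hcast : ((p:ℕ):ℂ) = (((p:ℝ)):ℂ) := by push_cast; ring
    rw [hcast, Complex.norm_cpow_eq_rpow_re_of_pos hp0, hre]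
  -- bound on g (p^(j+1))
  have hgb : ∀ j : ℕ, ‖g (p ^ (j+1))‖ ≤ A * (p:ℝ) ^ (((j:ℝ) + 1) * θ) := by
    intro j
    have hn1 : 1 ≤ p ^ (j+1) := Nat.one_le_pow _ _ hp.pos
    have h := (hbound (p ^ (j+1)) hn1).trans (min_le_left _ _)
    have hcast : ((p ^ (j+1) : ℕ) : ℝ) ^ θ = (p:ℝ) ^ (((j:ℝ) + 1) * θ) := by
      push_cast
      rw [← Real.rpow_natCast (p:ℝ) (j+1), ← Real.rpow_mul hp0.le]
      push_cast; ring_nf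
    rw [hcast] at h
    exact h
  set r : ℝ := (p:ℝ) ^ (-(11/24:ℝ)) with hr
  have hr0 : 0 ≤ r := Real.rpow_nonneg hp0.le _
  have hr78 : r ≤ 7/8 := by
    rw [hr]
    calc (p:ℝ) ^ (-(11/24:ℝ)) ≤ (2:ℝ) ^ (-(11/24:ℝ)) := by
          rw [Real.rpow_neg hp0.le, Real.rpow_neg (by norm_num)]
          exact inv_anti₀ (Real.rpow_pos_of_pos (by norm_num) _)
            (Real.rpow_le_rpow (by norm_num) hp2 (by norm_num))
      _ ≤ 7/8 := two_rpow_bound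
  have hr1 : r < 1 := lt_of_le_of_lt hr78 (by norm_num)
  -- the key term bound
  have hterm : ∀ j : ℕ, ‖c j‖ ≤ A * r ^ (j+1) := by
    intro j
    rw [hnorm j]
    have h1 : ‖g (p ^ (j+1))‖ * (p:ℝ) ^ (-(((j:ℝ) + 1) * σ'))
        ≤ (A * (p:ℝ) ^ (((j:ℝ) + 1) * θ)) * (p:ℝ) ^ (-(((j:ℝ) + 1) * σ')) :=
      mul_le_mul_of_nonneg_right (hgb j) (Real.rpow_nonneg hp0.le _)
    refine h1.trans ?_
    rw [mul_assoc, ← Real.rpow_add hp0]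
    have h2 : ((j:ℝ) + 1) * θ + -(((j:ℝ) + 1) * σ') = ((j:ℝ) + 1) * (θ - σ') := by ring
    rw [h2]
    have h3 : (p:ℝ) ^ (((j:ℝ) + 1) * (θ - σ')) ≤ (p:ℝ) ^ (((j:ℝ) + 1) * (-(11/24:ℝ))) := by
      apply Real.rpow_le_rpow_of_exponent_le hp1
      have hj1 : (0:ℝ) ≤ (j:ℝ) + 1 := by positivity
      exact mul_le_mul_of_nonneg_left hσ'1 hj1
    have h4 : (p:ℝ) ^ (((j:ℝ) + 1) * (-(11/24:ℝ))) = r ^ (j+1) := by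
      rw [hr, ← Real.rpow_natCast ((p:ℝ) ^ (-(11/24:ℝ))) (j+1), ← Real.rpow_mul hp0.le]
      push_cast; ring_nf
    rw [← h4]
    exact mul_le_mul_of_nonneg_left h3 hA.le
  -- summability
  have hgeo : Summable fun j : ℕ => A * r ^ (j+1) := by
    apply Summable.mul_left
    exact (summable_geometric_of_lt_one hr0 hr1).comp_injective (add_left_injective 1)
  have hcs : Summable fun j => ‖c j‖ :=
    Summable.of_nonneg_of_le (fun j => norm_nonneg _) hterm hgeo
  -- identify eulerFactor with phiFun a.e.
  have hae : ∀ᵐ ω : Ωs, ‖eulerFactor g X p s ω‖ ^ 2 = ‖phiFun c (X p ω)‖ ^ 2 := by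
    filter_upwards [steinhaus_norm_one hX hp] with ω hω
    have : eulerFactor g X p s ω = phiFun c (X p ω) := by
      rw [eulerFactor, phiFun, phiTail, unitize_eq hω]
      congr 1
      refine tsum_congr fun j => ?_
      rw [hc]; ring
    rw [this]
  have hint : ∫ ω, ‖eulerFactor g X p s ω‖ ^ 2 = ∫ ω, ‖phiFun c (X p ω)‖ ^ 2 :=
    integral_congr_ae hae
  rw [hint]
  refine (factor_moment hX hp c hcs).trans ?_
  -- bound the tsum
  have hS : (∑' j, ‖c j‖) ≤ ‖g p‖ * (p:ℝ) ^ (-σ') + 8 * A * (p:ℝ) ^ (-(11/12 : ℝ)) := by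
    rw [hcs.tsum_eq_zero_add]
    have h0 : ‖c 0‖ = ‖g p‖ * (p:ℝ) ^ (-σ') := by
      rw [hnorm 0]
      norm_num
    have htail : (∑' j : ℕ, ‖c (j+1)‖) ≤ 8 * A * (p:ℝ) ^ (-(11/12 : ℝ)) := by
      have h1 : (∑' j : ℕ, ‖c (j+1)‖) ≤ ∑' j : ℕ, (A * r ^ 2) * r ^ j := by
        refine Summable.tsum_le_tsum (fun j => ?_) (hcs.comp_injective (add_left_injective 1))
          ((summable_geometric_of_lt_one hr0 hr1).mul_left _)
        refine (hterm (j+1)).trans_eq ?_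
        ring
      refine h1.trans ?_
      rw [tsum_mul_left, tsum_geometric_of_lt_one hr0 hr1]
      have h2 : (1 - r)⁻¹ ≤ 8 := by
        rw [inv_le_comm₀ (by linarith) (by norm_num)]
        linarith
      have h3 : r ^ 2 = (p:ℝ) ^ (-(11/12 : ℝ)) := by
        rw [hr, ← Real.rpow_natCast ((p:ℝ) ^ (-(11/24:ℝ))) 2, ← Real.rpow_mul hp0.le]
        norm_num
      calc A * r ^ 2 * (1 - r)⁻¹ ≤ A * r ^ 2 * 8 := by
            refine mul_le_mul_of_nonneg_left h2 (by positivity)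
        _ = 8 * A * (p:ℝ) ^ (-(11/12 : ℝ)) := by rw [h3]; ring
    rw [h0]
    linarith
  gcongr 1 + ?_
  have hSnn : 0 ≤ ∑' j, ‖c j‖ := tsum_nonneg fun j => norm_nonneg _
  exact pow_le_pow_left₀ hSnn hS 2

end Fpiece
lemma euler_eq_phi (g : ℕ → ℂ) {Ωs : Type*} (X : ℕ → Ωs → ℂ) (p : ℕ) (s : ℂ) (ω : Ωs)
    (h : ‖X p ω‖ = 1) :
    eulerFactor g X p s ω
      = phiFun (fun j => g (p ^ (j+1)) * (p:ℂ) ^ (-(((j:ℂ) + 1) * s))) (X p ω) := by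
  rw [eulerFactor, phiFun, phiTail, unitize_eq h]
  congr 1
  exact tsum_congr fun j => by ring

lemma coeff_le_geom (g : ℕ → ℂ) (A B θ : ℝ) (hA : 0 < A) (hbound : GBound g A B θ)
    (p : ℕ) (hp : p.Prime) (σ' t : ℝ) (hσ'1 : θ - σ' ≤ -(11/24)) (j : ℕ) :
    ‖g (p ^ (j+1)) * (p:ℂ) ^ (-(((j:ℂ) + 1) * (((σ' : ℝ) : ℂ) + (t : ℂ) * Complex.I)))‖
      ≤ A * ((p:ℝ) ^ (-(11/24:ℝ))) ^ (j+1) := by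
  have hp2 : (2:ℝ) ≤ (p:ℝ) := by exact_mod_cast hp.two_le
  have hp0 : (0:ℝ) < (p:ℝ) := by linarith
  have hp1 : (1:ℝ) ≤ (p:ℝ) := by linarith
  set s : ℂ := (((σ' : ℝ) : ℂ) + (t : ℂ) * Complex.I) with hs
  have hre : (-(((j:ℂ) + 1) * s)).re = -(((j:ℝ) + 1) * σ') := by
    simp [hs, Complex.mul_re, Complex.add_re, Complex.add_im, Complex.mul_im]
  have hnorm : ‖g (p ^ (j+1)) * (p:ℂ) ^ (-(((j:ℂ) + 1) * s))‖
      = ‖g (p ^ (j+1))‖ * (p:ℝ) ^ (-(((j:ℝ) + 1) * σ')) := by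
    simp only [norm_mul]
    congr 1
    have hcast : ((p:ℕ):ℂ) = (((p:ℝ)):ℂ) := by push_cast; ring
    rw [hcast, Complex.norm_cpow_eq_rpow_re_of_pos hp0, hre]
  have hgb : ‖g (p ^ (j+1))‖ ≤ A * (p:ℝ) ^ (((j:ℝ) + 1) * θ) := by
    have hn1 : 1 ≤ p ^ (j+1) := Nat.one_le_pow _ _ hp.pos
    have h := (hbound (p ^ (j+1)) hn1).trans (min_le_left _ _)
    have hcast : ((p ^ (j+1) : ℕ) : ℝ) ^ θ = (p:ℝ) ^ (((j:ℝ) + 1) * θ) := by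
      push_cast
      rw [← Real.rpow_natCast (p:ℝ) (j+1), ← Real.rpow_mul hp0.le]
      push_cast; ring_nf
    rw [hcast] at h
    exact h
  rw [hnorm]
  have h1 : ‖g (p ^ (j+1))‖ * (p:ℝ) ^ (-(((j:ℝ) + 1) * σ'))
      ≤ (A * (p:ℝ) ^ (((j:ℝ) + 1) * θ)) * (p:ℝ) ^ (-(((j:ℝ) + 1) * σ')) :=
    mul_le_mul_of_nonneg_right hgb (Real.rpow_nonneg hp0.le _)
  refine h1.trans ?_
  rw [mul_assoc, ← Real.rpow_add hp0]
  have h2 : ((j:ℝ) + 1) * θ + -(((j:ℝ) + 1) * σ') = ((j:ℝ) + 1) * (θ - σ') := by ring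
  rw [h2]
  have h3 : (p:ℝ) ^ (((j:ℝ) + 1) * (θ - σ')) ≤ (p:ℝ) ^ (((j:ℝ) + 1) * (-(11/24:ℝ))) := by
    apply Real.rpow_le_rpow_of_exponent_le hp1
    exact mul_le_mul_of_nonneg_left hσ'1 (by positivity)
  have h4 : (p:ℝ) ^ (((j:ℝ) + 1) * (-(11/24:ℝ))) = ((p:ℝ) ^ (-(11/24:ℝ))) ^ (j+1) := by
    rw [← Real.rpow_natCast ((p:ℝ) ^ (-(11/24:ℝ))) (j+1), ← Real.rpow_mul hp0.le]
    push_cast; ring_nf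
  rw [← h4]
  exact mul_le_mul_of_nonneg_left h3 hA.le

lemma coeff_summable (g : ℕ → ℂ) (A B θ : ℝ) (hA : 0 < A) (hbound : GBound g A B θ)
    (p : ℕ) (hp : p.Prime) (σ' t : ℝ) (hσ'1 : θ - σ' ≤ -(11/24)) :
    Summable fun j : ℕ =>
      ‖g (p ^ (j+1)) * (p:ℂ) ^ (-(((j:ℂ) + 1) * (((σ' : ℝ) : ℂ) + (t : ℂ) * Complex.I)))‖ := by
  have hp2 : (2:ℝ) ≤ (p:ℝ) := by exact_mod_cast hp.two_le
  have hp0 : (0:ℝ) < (p:ℝ) := by linarith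
  have hr0 : 0 ≤ (p:ℝ) ^ (-(11/24:ℝ)) := Real.rpow_nonneg hp0.le _
  have hr1 : (p:ℝ) ^ (-(11/24:ℝ)) < 1 := by
    refine lt_of_le_of_lt ?_ (show (7/8:ℝ) < 1 by norm_num)
    calc (p:ℝ) ^ (-(11/24:ℝ)) ≤ (2:ℝ) ^ (-(11/24:ℝ)) := by
          rw [Real.rpow_neg hp0.le, Real.rpow_neg (by norm_num)]
          exact inv_anti₀ (Real.rpow_pos_of_pos (by norm_num) _)
            (Real.rpow_le_rpow (by norm_num) hp2 (by norm_num))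
      _ ≤ 7/8 := two_rpow_bound
  refine Summable.of_nonneg_of_le (fun j => norm_nonneg _)
    (coeff_le_geom g A B θ hA hbound p hp σ' t hσ'1) ?_
  apply Summable.mul_left
  exact (summable_geometric_of_lt_one hr0 hr1).comp_injective (add_left_injective 1)

lemma log_le_two_sqrt {u : ℝ} (hu : 1 ≤ u) : Real.log u ≤ 2 * Real.sqrt u := by
  have hs0 : 0 < Real.sqrt u := Real.sqrt_pos.mpr (by linarith)
  have h1 : Real.log u = 2 * Real.log (Real.sqrt u) := by
    have h := Real.log_pow (n := 2) (x := Real.sqrt u)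
    rw [pow_two, Real.mul_self_sqrt (by linarith)] at h
    rw [h]; norm_num
  rw [h1]
  have h2 : Real.log (Real.sqrt u) ≤ Real.sqrt u - 1 := Real.log_le_sub_one_of_pos hs0
  nlinarith [Real.sqrt_nonneg u]
lemma per_prime_numeric (g : ℕ → ℂ) (A B θ : ℝ) (hA : 0 < A) (hbound : GBound g A B θ)
    (p : ℕ) (hp : p.Prime) (σ σ' : ℝ) (hσ'def : σ' = 1/2 + σ) (hσ'1 : θ - σ' ≤ -(11/24)) :
    1 + (‖g p‖ * (p:ℝ) ^ (-σ') + 8 * A * (p:ℝ) ^ (-(11/12 : ℝ))) ^ 2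
      ≤ Real.exp (‖g p‖ ^ 2 / (p:ℝ) * (p:ℝ) ^ (-(2*σ))
          + 80 * A ^ 2 * (p:ℝ) ^ (-(11/8 : ℝ))) := by
  have hp2 : (2:ℝ) ≤ (p:ℝ) := by exact_mod_cast hp.two_le
  have hp0 : (0:ℝ) < (p:ℝ) := by linarith
  have hp1 : (1:ℝ) ≤ (p:ℝ) := by linarith
  set a : ℝ := ‖g p‖ * (p:ℝ) ^ (-σ') with hadef
  set b : ℝ := 8 * A * (p:ℝ) ^ (-(11/12 : ℝ)) with hbdef
  have ha0 : 0 ≤ a := by positivity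
  have hb0 : 0 ≤ b := by positivity
  -- a² = W p · p^{-2σ}
  have hasq : a ^ 2 = ‖g p‖ ^ 2 / (p:ℝ) * (p:ℝ) ^ (-(2*σ)) := by
    rw [hadef, mul_pow]
    have h1 : ((p:ℝ) ^ (-σ')) ^ 2 = (p:ℝ) ^ (-(2*σ')) := by
      rw [← Real.rpow_natCast ((p:ℝ) ^ (-σ')) 2, ← Real.rpow_mul hp0.le]
      norm_num; ring_nf
    have h2 : (p:ℝ) ^ (-(2*σ')) = (p:ℝ)⁻¹ * (p:ℝ) ^ (-(2*σ)) := by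
      rw [hσ'def]
      rw [show -(2*(1/2+σ)) = (-1) + (-(2*σ)) by ring, Real.rpow_add hp0, Real.rpow_neg_one]
    rw [h1, h2]
    ring
  -- a ≤ A p^{-11/24}
  have hgp : ‖g p‖ ≤ A * (p:ℝ) ^ θ := by
    exact (hbound p hp.one_lt.le).trans (min_le_left _ _)
  have haA : a ≤ A * (p:ℝ) ^ (-(11/24:ℝ)) := by
    rw [hadef]
    calc ‖g p‖ * (p:ℝ) ^ (-σ') ≤ (A * (p:ℝ) ^ θ) * (p:ℝ) ^ (-σ') :=
          mul_le_mul_of_nonneg_right hgp (Real.rpow_nonneg hp0.le _)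
      _ = A * (p:ℝ) ^ (θ - σ') := by
          rw [mul_assoc, ← Real.rpow_add hp0]; ring_nf
      _ ≤ A * (p:ℝ) ^ (-(11/24:ℝ)) :=
          mul_le_mul_of_nonneg_left (Real.rpow_le_rpow_of_exponent_le hp1 hσ'1) hA.le
  -- cross terms
  have hab : a * b ≤ 8 * A ^ 2 * (p:ℝ) ^ (-(11/8:ℝ)) := by
    calc a * b ≤ (A * (p:ℝ) ^ (-(11/24:ℝ))) * b := mul_le_mul_of_nonneg_right haA hb0
      _ = 8 * A ^ 2 * ((p:ℝ) ^ (-(11/24:ℝ)) * (p:ℝ) ^ (-(11/12:ℝ))) := by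
          rw [hbdef]; ring
      _ = 8 * A ^ 2 * (p:ℝ) ^ (-(11/8:ℝ)) := by
          rw [← Real.rpow_add hp0]; norm_num
  have hbsq : b ^ 2 ≤ 64 * A ^ 2 * (p:ℝ) ^ (-(11/8:ℝ)) := by
    have h1 : ((p:ℝ) ^ (-(11/12:ℝ))) ^ 2 = (p:ℝ) ^ (-(11/6:ℝ)) := by
      rw [← Real.rpow_natCast ((p:ℝ) ^ (-(11/12:ℝ))) 2, ← Real.rpow_mul hp0.le]
      norm_num
    have h2 : (p:ℝ) ^ (-(11/6:ℝ)) ≤ (p:ℝ) ^ (-(11/8:ℝ)) :=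
      Real.rpow_le_rpow_of_exponent_le hp1 (by norm_num)
    calc b ^ 2 = 64 * A ^ 2 * ((p:ℝ) ^ (-(11/12:ℝ))) ^ 2 := by rw [hbdef]; ring
      _ = 64 * A ^ 2 * (p:ℝ) ^ (-(11/6:ℝ)) := by rw [h1]
      _ ≤ 64 * A ^ 2 * (p:ℝ) ^ (-(11/8:ℝ)) := by
          exact mul_le_mul_of_nonneg_left h2 (by positivity)
  have hkey : (a + b) ^ 2 ≤ ‖g p‖ ^ 2 / (p:ℝ) * (p:ℝ) ^ (-(2*σ))
      + 80 * A ^ 2 * (p:ℝ) ^ (-(11/8:ℝ)) := by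
    have hexpand : (a + b) ^ 2 = a ^ 2 + 2 * (a * b) + b ^ 2 := by ring
    rw [hexpand, hasq]
    linarith [hab, hbsq]
  calc 1 + (a + b) ^ 2
      ≤ 1 + (‖g p‖ ^ 2 / (p:ℝ) * (p:ℝ) ^ (-(2*σ)) + 80 * A ^ 2 * (p:ℝ) ^ (-(11/8:ℝ))) := by
        linarith
    _ ≤ Real.exp (‖g p‖ ^ 2 / (p:ℝ) * (p:ℝ) ^ (-(2*σ)) + 80 * A ^ 2 * (p:ℝ) ^ (-(11/8:ℝ))) := by
        linarith [Real.add_one_le_exp (‖g p‖ ^ 2 / (p:ℝ) * (p:ℝ) ^ (-(2*σ))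
          + 80 * A ^ 2 * (p:ℝ) ^ (-(11/8:ℝ)))]
set_option maxHeartbeats 2000000 in
/-- Second moment of `H_{k,σ}` on short intervals: uniformly over
`0 ≤ k ≤ K+1` (`K = ⌊log log log x⌋`), `T ≥ e^k/log x` and `σ ≥ -2(k+1)/log x`,
`∫_T^{2T} E[|H_{k,σ}(t)|²] dt ≪ T (e^{-k} log x)^α`. -/
theorem second_moment_short_interval
    (g : ℕ → ℂ) (A B θ α : ℝ) (hA : 0 < A) (hB : 0 < B) (hθ0 : 0 < θ) (hθ : θ < 1 / 48)
    (hα : 0 < α) (hmult : IsMult g) (hbound : GBound g A B θ) (hsel : SelbergCond g α)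
    (Ωs : Type) [MeasureSpace Ωs] [IsProbabilityMeasure (volume : Measure Ωs)]
    (X : ℕ → Ωs → ℂ) (hX : IsSteinhaus X) :
    ∃ C > 0, ∃ x₀ : ℝ, ∀ x : ℝ, x₀ ≤ x →
      ∀ k : ℕ, k ≤ ⌊Real.log (Real.log (Real.log x))⌋₊ + 1 →
      ∀ T : ℝ, Real.exp (k : ℝ) / Real.log x ≤ T →
      ∀ σ : ℝ, -(2 * ((k : ℝ) + 1)) / Real.log x ≤ σ →
        (∫ t in T..(2 * T), ∫ ω, ‖Hk g X x k σ t ω‖ ^ 2)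
          ≤ C * T * (Real.exp (-(k : ℝ)) * Real.log x) ^ α := by
  classical
  obtain ⟨Csel, hCselpos, hselC⟩ := hsel
  set C' : ℝ := 10 * (α + Csel + 1) with hC'def
  have hC'pos : 0 < C' := by positivity
  set Z : ℝ := ∑' n : ℕ, (n:ℝ) ^ (-(11/8 : ℝ)) with hZdef
  have hZsum : Summable (fun n : ℕ => (n:ℝ) ^ (-(11/8 : ℝ))) :=
    Real.summable_nat_rpow.mpr (by norm_num)
  have hZnn : 0 ≤ Z := tsum_nonneg fun n => Real.rpow_nonneg (Nat.cast_nonneg n) _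
  set Ctot : ℝ := Csel + 4 * Real.exp 4 * C' + 80 * A ^ 2 * Z with hCtotdef
  refine ⟨Real.exp Ctot, Real.exp_pos _, Real.exp 230400, fun x hx k hk T hT σ hσ => ?_⟩
  -- basic bounds on log x
  have hlx : (230400:ℝ) ≤ Real.log x := by
    rw [← Real.log_exp 230400]
    exact Real.log_le_log (Real.exp_pos _) hx
  have hlx0 : (0:ℝ) < Real.log x := by linarith
  have hx0 : (0:ℝ) < x := lt_of_lt_of_le (Real.exp_pos _) hx
  have hsq480 : (480:ℝ) ≤ Real.sqrt (Real.log x) := by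
    have h1 : (480:ℝ) = Real.sqrt 230400 := by
      rw [show (230400:ℝ) = 480 ^ 2 by norm_num, Real.sqrt_sq (by norm_num)]
    rw [h1]
    exact Real.sqrt_le_sqrt hlx
  have hsqpos : (0:ℝ) < Real.sqrt (Real.log x) := by linarith
  have hsqsq : Real.sqrt (Real.log x) * Real.sqrt (Real.log x) = Real.log x :=
    Real.mul_self_sqrt hlx0.le
  have hllx1 : (1:ℝ) ≤ Real.log (Real.log x) := by
    have h1 : Real.exp 1 ≤ Real.log x := by
      have := Real.exp_one_lt_d9
      linarith
    rw [← Real.log_exp 1]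
    exact Real.log_le_log (Real.exp_pos _) h1
  have hllx0 : (0:ℝ) < Real.log (Real.log x) := by linarith
  have hllx : Real.log (Real.log x) ≤ 2 * Real.sqrt (Real.log x) :=
    log_le_two_sqrt (by linarith)
  have hlllx : Real.log (Real.log (Real.log x)) ≤ Real.log (Real.log x) :=
    (Real.log_le_sub_one_of_pos hllx0).trans (by linarith)
  have hlllx0 : (0:ℝ) ≤ Real.log (Real.log (Real.log x)) := Real.log_nonneg hllx1
  have hkR : (k:ℝ) ≤ Real.log (Real.log (Real.log x)) + 2 := by
    have h1 : (k:ℝ) ≤ (⌊Real.log (Real.log (Real.log x))⌋₊ : ℝ) + 1 := by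
      exact_mod_cast hk
    linarith [Nat.floor_le hlllx0]
  -- L and y
  set L : ℝ := Real.exp (-(k:ℝ)) * Real.log x with hLdef
  set y : ℝ := x ^ Real.exp (-(k:ℝ)) with hydef
  have hy0 : 0 < y := Real.rpow_pos_of_pos hx0 _
  have hyL : Real.log y = L := by rw [hydef, Real.log_rpow hx0]
  have hyexp : y = Real.exp L := by rw [← hyL, Real.exp_log hy0]
  have hekl : Real.exp (-(Real.log (Real.log (Real.log x)) + 2)) ≤ Real.exp (-(k:ℝ)) :=
    Real.exp_le_exp.mpr (by linarith)
  have hLlb : Real.sqrt (Real.log x) / (2 * Real.exp 2) ≤ L := by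
    have h1 : Real.exp (-(Real.log (Real.log (Real.log x)) + 2))
        = (Real.log (Real.log x) * Real.exp 2)⁻¹ := by
      rw [Real.exp_neg, Real.exp_add, Real.exp_log hllx0]
    have h2 : (Real.log (Real.log x) * Real.exp 2)⁻¹ * Real.log x ≤ L := by
      rw [hLdef]
      exact mul_le_mul_of_nonneg_right (h1 ▸ hekl) hlx0.le
    refine le_trans ?_ h2
    have h3 : Real.log (Real.log x) * Real.exp 2 ≤ 2 * Real.sqrt (Real.log x) * Real.exp 2 :=
      mul_le_mul_of_nonneg_right hllx (Real.exp_pos 2).le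
    have h4 : (2 * Real.sqrt (Real.log x) * Real.exp 2)⁻¹
        ≤ (Real.log (Real.log x) * Real.exp 2)⁻¹ :=
      inv_anti₀ (by positivity) h3
    have h5 : Real.sqrt (Real.log x) / (2 * Real.exp 2)
        = (2 * Real.sqrt (Real.log x) * Real.exp 2)⁻¹ * Real.log x := by
      field_simp
      linear_combination hsqsq
    rw [h5]
    exact mul_le_mul_of_nonneg_right h4 hlx0.le
  have hexp2le : Real.exp 2 ≤ 8 := by
    have h1 : Real.exp 1 ≤ 2.72 := by linarith [Real.exp_one_lt_d9]
    have h2 : Real.exp 2 = Real.exp 1 * Real.exp 1 := by rw [← Real.exp_add]; norm_num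
    rw [h2]
    calc Real.exp 1 * Real.exp 1 ≤ 2.72 * 2.72 :=
          mul_le_mul h1 h1 (Real.exp_pos 1).le (by norm_num)
      _ ≤ 8 := by norm_num
  have hL16 : (16:ℝ) ≤ L := by
    have h1 : (480:ℝ) / 16 ≤ Real.sqrt (Real.log x) / (2 * Real.exp 2) :=
      div_le_div₀ (Real.sqrt_nonneg _) hsq480 (by positivity) (by linarith)
    have h2 : (16:ℝ) ≤ 480 / 16 := by norm_num
    linarith
  have hL0 : (0:ℝ) < L := by linarith
  -- δ and σ'
  set δ : ℝ := 2 * ((k:ℝ) + 1) / Real.log x with hδdef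
  have hδ0 : (0:ℝ) ≤ δ := by positivity
  have hσδ : -δ ≤ σ := by
    refine le_trans (le_of_eq ?_) hσ
    rw [hδdef]; ring
  have hδL : δ * L ≤ 2 := by
    have h1 : δ * L = 2 * (((k:ℝ) + 1) * Real.exp (-(k:ℝ))) := by
      rw [hδdef, hLdef]
      field_simp
    rw [h1]
    have h3 : (k:ℝ) + 1 ≤ Real.exp (k:ℝ) := Real.add_one_le_exp _
    have h2 : ((k:ℝ) + 1) * Real.exp (-(k:ℝ)) ≤ 1 := by
      rw [Real.exp_neg, mul_inv_le_iff₀ (Real.exp_pos _)]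
      linarith
    linarith
  have hδ48 : δ ≤ 1/48 := by
    have h1 : 2 * ((k:ℝ) + 1) ≤ 10 * Real.sqrt (Real.log x) := by
      linarith [hkR, hlllx, hllx, hsq480]
    have h2 : δ ≤ 10 * Real.sqrt (Real.log x) / Real.log x := by
      rw [hδdef]
      exact (div_le_div_iff_of_pos_right hlx0).mpr h1
    have h4 : 10 * Real.sqrt (Real.log x) / Real.log x = 10 / Real.sqrt (Real.log x) := by
      field_simp
      linear_combination hsqsq
    have h5 : (10:ℝ) / Real.sqrt (Real.log x) ≤ 10 / 480 :=
      div_le_div_of_nonneg_left (by norm_num) (by norm_num) hsq480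
    rw [h4] at h2
    calc δ ≤ 10 / Real.sqrt (Real.log x) := h2
      _ ≤ 10 / 480 := h5
      _ ≤ 1/48 := by norm_num
  set σ' : ℝ := 1/2 + σ with hσ'def
  have hσ'pos : 0 < σ' := by
    rw [hσ'def]
    linarith [hσδ, hδ48]
  have hσ'1 : θ - σ' ≤ -(11/24 : ℝ) := by
    rw [hσ'def]
    linarith [hθ, hδ48, hσδ]
  -- Selberg-type inputs at y
  have hy16 : (16:ℝ) ≤ y := by
    rw [hyexp]
    calc (16:ℝ) ≤ 16 + 1 := by norm_num
      _ ≤ Real.exp 16 := by linarith [Real.add_one_le_exp (16:ℝ)]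
      _ ≤ Real.exp L := Real.exp_le_exp.mpr hL16
  have hyPS : Real.exp 16 ≤ y := by
    rw [hyexp]; exact Real.exp_le_exp.mpr hL16
  have hSy : ∑ p ∈ primesUpTo y, ‖g p‖ ^ 2 / (p:ℝ) ≤ α * Real.log L + Csel := by
    have h := (abs_le.mp (hselC y hy16)).2
    rw [hyL] at h
    linarith
  have hPS : ∑ p ∈ primesUpTo y, (‖g p‖ ^ 2 / (p : ℝ)) * Real.log p ≤ C' * L := by
    have h := partial_summation g α Csel hα hCselpos hselC y hyPS
    rw [hyL] at h
    exact h
  have hprime : ∀ p ∈ primesUpTo y, p.Prime := fun p hp => by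
    simp only [primesUpTo, Finset.mem_filter] at hp; exact hp.2.1
  have hple : ∀ p ∈ primesUpTo y, (p:ℝ) ≤ y := fun p hp => by
    simp only [primesUpTo, Finset.mem_filter] at hp; exact hp.2.2
  -- the per-t bound
  have hmaint : ∀ t : ℝ, (∫ ω, ‖Hk g X x k σ t ω‖ ^ 2) ≤ Real.exp Ctot * L ^ α := by
    intro t
    set s : ℂ := (((1/2 + σ : ℝ) : ℂ) + (t:ℂ) * Complex.I) with hsdef
    have hseq : s = (((σ' : ℝ) : ℂ) + (t:ℂ) * Complex.I) := by rw [hσ'def]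
    set c : ℕ → ℕ → ℂ := fun p j => g (p ^ (j+1)) * (p:ℂ) ^ (-(((j:ℂ) + 1) * s)) with hcdef
    have hcsum : ∀ q : Nat.Primes, Summable fun j => ‖c (q:ℕ) j‖ := fun q => by
      have h := coeff_summable g A B θ hA hbound (q:ℕ) q.2 σ' t hσ'1
      rw [hcdef]
      simpa [← hseq] using h
    set f : Nat.Primes → Ωs → ℝ := fun q ω => ‖phiFun (c (q:ℕ)) (X (q:ℕ) ω)‖ ^ 2 with hfdef
    have hfmeas : ∀ q : Nat.Primes, Measurable (f q) := fun q =>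
      ((measurable_phiFun _ (hcsum q)).comp (hX.1 (q:ℕ))).norm.pow_const 2
    have hfint : ∀ q : Nat.Primes, Integrable (f q) := fun q => by
      refine Integrable.mono' (integrable_const ((1 + ∑' j, ‖c (q:ℕ) j‖) ^ 2))
        (hfmeas q).aestronglyMeasurable ?_
      filter_upwards with ω
      rw [hfdef, Real.norm_eq_abs, abs_of_nonneg (by positivity)]
      exact pow_le_pow_left₀ (norm_nonneg _) (norm_phiFun_le (c (q:ℕ)) (hcsum q) (X (q:ℕ) ω)) 2
    have hindf : iIndepFun f volume :=
      hX.2.2.2.1.comp (fun q : Nat.Primes => fun z : ℂ => ‖phiFun (c (q:ℕ)) z‖ ^ 2)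
        (fun q => (measurable_phiFun _ (hcsum q)).norm.pow_const 2)
    set Q : Finset Nat.Primes := (primesUpTo y).subtype Nat.Prime with hQdef
    obtain ⟨hprodint, hprodeq⟩ := integral_finset_prod_of_indep hindf hfmeas hfint Q
    have hQprod : ∀ h : ℕ → ℝ, ∏ q ∈ Q, h (q:ℕ) = ∏ p ∈ primesUpTo y, h p := by
      intro h
      rw [hQdef]
      exact Finset.prod_subtype_of_mem _ hprime
    have haeP : ∀ᵐ ω : Ωs, ∀ p : ℕ, p ∈ primesUpTo y → ‖X p ω‖ = 1 := by
      rw [ae_all_iff]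
      intro p
      by_cases hp : p ∈ primesUpTo y
      · filter_upwards [steinhaus_norm_one hX (hprime p hp)] with ω h _ using h
      · filter_upwards with ω h using absurd h hp
    have hcong : (∫ ω, ‖Hk g X x k σ t ω‖ ^ 2) = ∫ ω, ∏ q ∈ Q, f q ω := by
      refine integral_congr_ae ?_
      filter_upwards [haeP] with ω hω
      have h1 : Hk g X x k σ t ω = ∏ p ∈ primesUpTo y, eulerFactor g X p s ω := rfl
      rw [h1]
      calc ‖∏ p ∈ primesUpTo y, eulerFactor g X p s ω‖ ^ 2
          = ∏ p ∈ primesUpTo y, ‖eulerFactor g X p s ω‖ ^ 2 := by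
            rw [norm_prod, ← Finset.prod_pow]
        _ = ∏ p ∈ primesUpTo y, ‖phiFun (c p) (X p ω)‖ ^ 2 := by
            refine Finset.prod_congr rfl fun p hp => ?_
            rw [euler_eq_phi g X p s ω (hω p hp)]
        _ = ∏ q ∈ Q, f q ω := (hQprod fun p => ‖phiFun (c p) (X p ω)‖ ^ 2).symm
    rw [hcong, hprodeq]
    -- bound each factor
    have hfactor : ∀ q ∈ Q, (∫ ω, f q ω)
        ≤ Real.exp (‖g (q:ℕ)‖ ^ 2 / ((q:ℕ):ℝ) * ((q:ℕ):ℝ) ^ (-(2*σ))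
            + 80 * A ^ 2 * ((q:ℕ):ℝ) ^ (-(11/8 : ℝ))) := by
      intro q hq
      have h1 : (∫ ω, f q ω) = ∫ ω, ‖eulerFactor g X (q:ℕ) s ω‖ ^ 2 := by
        refine integral_congr_ae ?_
        filter_upwards [steinhaus_norm_one hX q.2] with ω hω
        rw [hfdef, euler_eq_phi g X (q:ℕ) s ω hω]
      rw [h1, hseq]
      refine (local_factor_bound g A B θ hA hθ0 hbound hX (q:ℕ) q.2 σ' t hσ'1 hσ'pos).trans ?_
      exact per_prime_numeric g A B θ hA hbound (q:ℕ) q.2 σ σ' hσ'def hσ'1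
    have hprodle : ∏ q ∈ Q, (∫ ω, f q ω)
        ≤ ∏ q ∈ Q, Real.exp (‖g (q:ℕ)‖ ^ 2 / ((q:ℕ):ℝ) * ((q:ℕ):ℝ) ^ (-(2*σ))
            + 80 * A ^ 2 * ((q:ℕ):ℝ) ^ (-(11/8 : ℝ))) :=
      Finset.prod_le_prod (fun q _ => integral_nonneg fun ω => by positivity) hfactor
    refine hprodle.trans ?_
    have hexpprod : ∏ q ∈ Q, Real.exp (‖g (q:ℕ)‖ ^ 2 / ((q:ℕ):ℝ) * ((q:ℕ):ℝ) ^ (-(2*σ))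
            + 80 * A ^ 2 * ((q:ℕ):ℝ) ^ (-(11/8 : ℝ)))
        = Real.exp (∑ p ∈ primesUpTo y, (‖g p‖ ^ 2 / (p:ℝ) * (p:ℝ) ^ (-(2*σ))
            + 80 * A ^ 2 * (p:ℝ) ^ (-(11/8 : ℝ)))) := by
      rw [Real.exp_sum]
      exact hQprod fun p => Real.exp (‖g p‖ ^ 2 / (p:ℝ) * (p:ℝ) ^ (-(2*σ))
        + 80 * A ^ 2 * (p:ℝ) ^ (-(11/8 : ℝ)))
    rw [hexpprod]
    -- bound the exponent sum
    have hsum2 : ∑ p ∈ primesUpTo y, 80 * A ^ 2 * (p:ℝ) ^ (-(11/8 : ℝ)) ≤ 80 * A ^ 2 * Z := by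
      rw [← Finset.mul_sum]
      refine mul_le_mul_of_nonneg_left ?_ (by positivity)
      rw [hZdef]
      exact Summable.sum_le_tsum _ (fun n _ => Real.rpow_nonneg (Nat.cast_nonneg n) _) hZsum
    have hsum1 : ∑ p ∈ primesUpTo y, ‖g p‖ ^ 2 / (p:ℝ) * (p:ℝ) ^ (-(2*σ))
        ≤ (α * Real.log L + Csel) + 4 * Real.exp 4 * C' := by
      have hpt : ∀ p ∈ primesUpTo y, ‖g p‖ ^ 2 / (p:ℝ) * (p:ℝ) ^ (-(2*σ))
          ≤ ‖g p‖ ^ 2 / (p:ℝ) + (2 * δ * Real.exp 4) * ((‖g p‖ ^ 2 / (p:ℝ)) * Real.log p) := by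
        intro p hp
        have hpp := hprime p hp
        have hp2 : (2:ℝ) ≤ (p:ℝ) := by exact_mod_cast hpp.two_le
        have hp0 : (0:ℝ) < (p:ℝ) := by linarith
        have hlogp0 : (0:ℝ) ≤ Real.log p := Real.log_nonneg (by linarith)
        have hlogpL : Real.log p ≤ L := by
          rw [← hyL]
          exact Real.log_le_log hp0 (hple p hp)
        have hu4 : 2 * δ * Real.log p ≤ 4 := by
          have := mul_le_mul_of_nonneg_left hlogpL hδ0
          linarith [hδL]
        have h1 : (p:ℝ) ^ (-(2*σ)) ≤ (p:ℝ) ^ (2*δ) :=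
          Real.rpow_le_rpow_of_exponent_le (by linarith) (by linarith [hσδ])
        have h2 : (p:ℝ) ^ (2*δ) = Real.exp (2 * δ * Real.log p) := by
          rw [Real.rpow_def_of_pos hp0]
          ring_nf
        have h3 : Real.exp (2 * δ * Real.log p) ≤ 1 + (2 * δ * Real.log p) * Real.exp 4 := by
          have h4 := exp_sub_one_le' (2 * δ * Real.log p)
          have h5 : Real.exp (2 * δ * Real.log p) ≤ Real.exp 4 := Real.exp_le_exp.mpr hu4
          have h6 : (0:ℝ) ≤ 2 * δ * Real.log p := by positivity
          have h7 := mul_le_mul_of_nonneg_left h5 h6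
          linarith
        have hW0 : (0:ℝ) ≤ ‖g p‖ ^ 2 / (p:ℝ) := by positivity
        calc ‖g p‖ ^ 2 / (p:ℝ) * (p:ℝ) ^ (-(2*σ))
            ≤ ‖g p‖ ^ 2 / (p:ℝ) * (1 + (2 * δ * Real.log p) * Real.exp 4) := by
              refine mul_le_mul_of_nonneg_left ?_ hW0
              calc (p:ℝ) ^ (-(2*σ)) ≤ (p:ℝ) ^ (2*δ) := h1
                _ = Real.exp (2 * δ * Real.log p) := h2
                _ ≤ 1 + (2 * δ * Real.log p) * Real.exp 4 := h3
          _ = ‖g p‖ ^ 2 / (p:ℝ) + (2 * δ * Real.exp 4) * ((‖g p‖ ^ 2 / (p:ℝ)) * Real.log p) := by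
              ring
      calc ∑ p ∈ primesUpTo y, ‖g p‖ ^ 2 / (p:ℝ) * (p:ℝ) ^ (-(2*σ))
          ≤ ∑ p ∈ primesUpTo y, (‖g p‖ ^ 2 / (p:ℝ)
              + (2 * δ * Real.exp 4) * ((‖g p‖ ^ 2 / (p:ℝ)) * Real.log p)) :=
            Finset.sum_le_sum hpt
        _ = (∑ p ∈ primesUpTo y, ‖g p‖ ^ 2 / (p:ℝ))
            + (2 * δ * Real.exp 4) * ∑ p ∈ primesUpTo y, (‖g p‖ ^ 2 / (p:ℝ)) * Real.log p := by
            rw [Finset.sum_add_distrib, Finset.mul_sum]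
        _ ≤ (α * Real.log L + Csel) + 4 * Real.exp 4 * C' := by
            have h7 : (2 * δ * Real.exp 4) * ∑ p ∈ primesUpTo y, (‖g p‖ ^ 2 / (p:ℝ)) * Real.log p
                ≤ (2 * δ * Real.exp 4) * (C' * L) := by
              refine mul_le_mul_of_nonneg_left hPS (by positivity)
            have h8 : (2 * δ * Real.exp 4) * (C' * L) ≤ 4 * Real.exp 4 * C' := by
              have h9 : δ * L * (Real.exp 4 * C') ≤ 2 * (Real.exp 4 * C') :=
                mul_le_mul_of_nonneg_right hδL (by positivity)
              calc (2 * δ * Real.exp 4) * (C' * L) = 2 * (δ * L * (Real.exp 4 * C')) := by ring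
                _ ≤ 2 * (2 * (Real.exp 4 * C')) := by linarith
                _ = 4 * Real.exp 4 * C' := by ring
            linarith [hSy]
    have hfinal : ∑ p ∈ primesUpTo y, (‖g p‖ ^ 2 / (p:ℝ) * (p:ℝ) ^ (-(2*σ))
        + 80 * A ^ 2 * (p:ℝ) ^ (-(11/8 : ℝ))) ≤ α * Real.log L + Ctot := by
      rw [Finset.sum_add_distrib, hCtotdef]
      linarith [hsum1, hsum2]
    calc Real.exp (∑ p ∈ primesUpTo y, (‖g p‖ ^ 2 / (p:ℝ) * (p:ℝ) ^ (-(2*σ))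
            + 80 * A ^ 2 * (p:ℝ) ^ (-(11/8 : ℝ))))
        ≤ Real.exp (α * Real.log L + Ctot) := Real.exp_le_exp.mpr hfinal
      _ = Real.exp Ctot * L ^ α := by
          rw [Real.exp_add, Real.rpow_def_of_pos hL0]
          ring_nf
  -- conclude with the interval integral
  have hEnn : ∀ t : ℝ, 0 ≤ ∫ ω, ‖Hk g X x k σ t ω‖ ^ 2 := fun t =>
    integral_nonneg fun ω => by positivity
  have hT0 : 0 < T := lt_of_lt_of_le (by positivity) hT
  have hb := intervalIntegral.norm_integral_le_of_norm_le_const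
    (C := Real.exp Ctot * L ^ α) (f := fun t => ∫ ω, ‖Hk g X x k σ t ω‖ ^ 2)
    (a := T) (b := 2*T) (fun u _ => by
      rw [Real.norm_eq_abs, abs_of_nonneg (hEnn u)]
      exact hmaint u)
  calc (∫ t in T..(2 * T), ∫ ω, ‖Hk g X x k σ t ω‖ ^ 2)
      ≤ ‖∫ t in T..(2 * T), ∫ ω, ‖Hk g X x k σ t ω‖ ^ 2‖ := le_abs_self _
    _ ≤ (Real.exp Ctot * L ^ α) * |2*T - T| := hb
    _ = Real.exp Ctot * T * L ^ α := by
        rw [show (2*T - T) = T by ring, abs_of_pos hT0]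
        ring
end
end
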